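/- arXiv:2009.14429 — 4 statements merged into one kernel-verified Lean document; each statement's English description precedes it below -/
import Mathlib

section
/- Let u_0 ∈ L²(Ω) and fix n and T > 0. There exists a unique u ∈ L²([0,T] × Ω) satisfying the integral formulation of the Neumann evolution problem: u(t,x) = u_0(x) + ∫_0^t L_n u(s,·)(x) ds for a.e. (t,x) ∈ [0,T] × Ω. -/
open MeasureTheory Set Filter Topology Bornology
set_option linter.unusedSectionVars false
set_option maxHeartbeats 1000000

/-- Characteristic function of a set, real-valued. -/
noncomputable def chi {α : Type*} (A : Set α) (x : α) : ℝ :=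
  @ite _ (x ∈ A) (Classical.propDecidable _) 1 0

/-- The nonlocal operator `L_n` associated with the partition `(A, B)` of `Ω̄`
and the kernels `J, G, R`. -/
noncomputable def Lop {N : ℕ} (Ω A B : Set (Fin N → ℝ))
    (J G R : (Fin N → ℝ) → (Fin N → ℝ) → ℝ) (f : (Fin N → ℝ) → ℝ) (x : Fin N → ℝ) : ℝ :=
  chi A x * (∫ y in Ω, chi A y * J x y * (f y - f x))
    + chi B x * (∫ y in Ω, chi B y * G x y * (f y - f x))
    + chi A x * (∫ y in Ω, chi B y * R x y * (f y - f x))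
    + chi B x * (∫ y in Ω, chi A y * R x y * (f y - f x))

/-- Hypothesis (H) on a kernel: continuity, nonnegativity, positivity on the diagonal,
symmetry, and unit total mass. -/
def KernelH {N : ℕ} (V : (Fin N → ℝ) → (Fin N → ℝ) → ℝ) : Prop :=
  Continuous (fun p : (Fin N → ℝ) × (Fin N → ℝ) => V p.1 p.2) ∧
    (∀ x y, 0 ≤ V x y) ∧ (∀ x, 0 < V x x) ∧ (∀ x y, V x y = V y x) ∧
    (∀ x, (∫ y, V x y) = 1)


section Abstract

variable {X : Type*} [MeasurableSpace X]

/-- abstract integral operator -/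
noncomputable def Kop (μ : Measure X) (W : X → X → ℝ) (f : X → ℝ) (x : X) : ℝ :=
  (∫ y, W x y * f y ∂μ) - (∫ y, W x y ∂μ) * f x

variable {μ : Measure X} [IsFiniteMeasure μ] {W : X → X → ℝ} {S : ℝ}
variable (hWm : StronglyMeasurable (Function.uncurry W)) (hWb : ∀ x y, |W x y| ≤ S)

section Basic
include hWm

lemma W_sm (x : X) : StronglyMeasurable (fun y => W x y) :=
  hWm.comp_measurable (measurable_prodMk_left)

include hWb

lemma W_int (x : X) : Integrable (fun y => W x y) μ :=
  (integrable_const S).mono' (W_sm hWm x).aestronglyMeasurable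
    (ae_of_all _ fun y => by simpa [Real.norm_eq_abs] using hWb x y)

lemma W_mul_int {f : X → ℝ} (hf : Integrable f μ) (x : X) :
    Integrable (fun y => W x y * f y) μ := by
  refine (hf.norm.const_mul S).mono'
    ((W_sm hWm x).aestronglyMeasurable.mul hf.1) (ae_of_all _ fun y => ?_)
  rw [Real.norm_eq_abs, abs_mul]
  have h1 := hWb x y
  have h2 : (0:ℝ) ≤ |f y| := abs_nonneg _
  have h3 : (0:ℝ) ≤ |W x y| := abs_nonneg _
  calc |W x y| * |f y| ≤ S * |f y| := by nlinarith
  _ = S * ‖f y‖ := by rw [Real.norm_eq_abs]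

lemma W_mul_norm_le {f : X → ℝ} (hf : Integrable f μ) (x : X) :
    ∫ y, ‖W x y * f y‖ ∂μ ≤ S * ∫ y, ‖f y‖ ∂μ := by
  calc ∫ y, ‖W x y * f y‖ ∂μ ≤ ∫ y, S * ‖f y‖ ∂μ := by
        refine integral_mono (W_mul_int hWm hWb hf x).norm (hf.norm.const_mul S) fun y => ?_
        rw [Real.norm_eq_abs, abs_mul]
        have h1 := hWb x y
        have h2 : (0:ℝ) ≤ |f y| := abs_nonneg _
        have h3 : (0:ℝ) ≤ |W x y| := abs_nonneg _
        rw [Real.norm_eq_abs]; nlinarith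
  _ = S * ∫ y, ‖f y‖ ∂μ := integral_const_mul _ _

lemma Top_sub {f g : X → ℝ} (hf : Integrable f μ) (hg : Integrable g μ) (x : X) :
    Kop μ W f x - Kop μ W g x = Kop μ W (fun y => f y - g y) x := by
  unfold Kop
  have h1 : (∫ y, W x y * (f y - g y) ∂μ)
      = (∫ y, W x y * f y ∂μ) - (∫ y, W x y * g y ∂μ) := by
    rw [← integral_sub (W_mul_int hWm hWb hf x) (W_mul_int hWm hWb hg x)]
    congr 1; funext y; ring
  rw [h1]; ring

lemma Top_bound {f : X → ℝ} (hf : Integrable f μ) (x : X) :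
    ‖Kop μ W f x‖ ≤ S * (∫ y, ‖f y‖ ∂μ) + S * (μ Set.univ).toReal * ‖f x‖ := by
  have hS : 0 ≤ S := le_trans (abs_nonneg _) (hWb x x)
  have h1 : ‖∫ y, W x y * f y ∂μ‖ ≤ S * (∫ y, ‖f y‖ ∂μ) := by
    calc ‖∫ y, W x y * f y ∂μ‖ ≤ ∫ y, ‖W x y * f y‖ ∂μ := norm_integral_le_integral_norm _
    _ ≤ ∫ y, S * ‖f y‖ ∂μ := by
        refine integral_mono (W_mul_int hWm hWb hf x).norm (hf.norm.const_mul S) fun y => ?_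
        rw [Real.norm_eq_abs, abs_mul]
        have h1 := hWb x y
        have h2 : (0:ℝ) ≤ |f y| := abs_nonneg _
        have h3 : (0:ℝ) ≤ |W x y| := abs_nonneg _
        rw [Real.norm_eq_abs]; nlinarith
    _ = S * ∫ y, ‖f y‖ ∂μ := integral_const_mul _ _
  have h2 : ‖∫ y, W x y ∂μ‖ ≤ S * (μ Set.univ).toReal := by
    calc ‖∫ y, W x y ∂μ‖ ≤ ∫ y, ‖W x y‖ ∂μ := norm_integral_le_integral_norm _
    _ ≤ ∫ _y, S ∂μ := by
        refine integral_mono (W_int hWm hWb x).norm (integrable_const S) fun y => ?_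
        simpa [Real.norm_eq_abs] using hWb x y
    _ = S * (μ Set.univ).toReal := by rw [integral_const, smul_eq_mul, measureReal_def]; ring
  calc ‖Kop μ W f x‖ ≤ ‖∫ y, W x y * f y ∂μ‖ + ‖(∫ y, W x y ∂μ) * f x‖ := norm_sub_le _ _
  _ ≤ S * (∫ y, ‖f y‖ ∂μ) + S * (μ Set.univ).toReal * ‖f x‖ := by
      rw [norm_mul]
      have := mul_le_mul_of_nonneg_right h2 (norm_nonneg (f x))
      linarith

lemma Top_sm [SFinite μ] {f : X → ℝ} (hfm : StronglyMeasurable f) :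
    StronglyMeasurable (Kop μ W f) := by
  have h1 : StronglyMeasurable (fun x => ∫ y, W x y * f y ∂μ) := by
    exact (hWm.mul (hfm.comp_measurable measurable_snd)).integral_prod_right'
  have h2 : StronglyMeasurable (fun x => ∫ y, W x y ∂μ) :=
    hWm.integral_prod_right'
  exact h1.sub (h2.mul hfm)

lemma Top_int {f : X → ℝ} (hfm : StronglyMeasurable f) (hf : Integrable f μ) :
    Integrable (Kop μ W f) μ := by
  refine ((integrable_const (S * (∫ y, ‖f y‖ ∂μ))).add
    ((hf.norm.const_mul (S * (μ Set.univ).toReal)))).mono'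
    (Top_sm hWm hWb hfm).aestronglyMeasurable (ae_of_all _ fun x => ?_)
  have := Top_bound hWm hWb hf x
  calc ‖Kop μ W f x‖ ≤ S * (∫ y, ‖f y‖ ∂μ) + S * (μ Set.univ).toReal * ‖f x‖ := this
  _ ≤ S * (∫ y, ‖f y‖ ∂μ) + S * (μ Set.univ).toReal * ‖f x‖ := le_refl _

end Basic

lemma ae_prod_snd' {α β : Type*} [MeasurableSpace α] [MeasurableSpace β]
    (ρ : Measure α) (ν : Measure β) [SFinite ρ] [SFinite ν]
    {Q : β → Prop} (hQ : ∀ᵐ y ∂ν, Q y) : ∀ᵐ p ∂(ρ.prod ν), Q p.2 := by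
  rw [ae_iff] at hQ ⊢
  obtain ⟨t, hsub, htm, ht0⟩ := exists_measurable_superset_of_null hQ
  refine measure_mono_null (fun p hp => show p ∈ (univ ×ˢ t) from ⟨trivial, hsub hp⟩) ?_
  rw [Measure.prod_prod, ht0, mul_zero]

lemma ae_prod_fst' {α β : Type*} [MeasurableSpace α] [MeasurableSpace β]
    (ρ : Measure α) (ν : Measure β) [SFinite ρ] [SFinite ν]
    {Q : α → Prop} (hQ : ∀ᵐ x ∂ρ, Q x) : ∀ᵐ p ∂(ρ.prod ν), Q p.1 := by
  rw [ae_iff] at hQ ⊢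
  obtain ⟨t, hsub, htm, ht0⟩ := exists_measurable_superset_of_null hQ
  refine measure_mono_null (fun p hp => show p ∈ (t ×ˢ univ) from ⟨hsub hp, trivial⟩) ?_
  rw [Measure.prod_prod, ht0, zero_mul]


section Exist

variable {X : Type*} [MeasurableSpace X]
variable {μ : Measure X} [IsFiniteMeasure μ] {W : X → X → ℝ} {S : ℝ}

theorem exists_sol (hWm : StronglyMeasurable (Function.uncurry W))
    (hWb : ∀ x y, |W x y| ≤ S) (hS : 0 ≤ S)
    (g : X → ℝ) (hgm : StronglyMeasurable g) (hgL2 : MemLp g 2 μ)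
    (T : ℝ) (hT : 0 < T) :
    ∃ u : ℝ → X → ℝ,
      (∀ s, Integrable (u s) μ) ∧
      StronglyMeasurable (fun p : ℝ × X => u p.1 p.2) ∧
      MemLp (fun p : ℝ × X => u p.1 p.2) 2
        (((volume : Measure ℝ).restrict (Icc 0 T)).prod μ) ∧
      (∀ t ∈ Icc 0 T, ∀ x, u t x = g x + ∫ s in Ioc 0 t, Kop μ W (u s) x) := by
  classical
  have hgi : Integrable g μ := hgL2.integrable one_le_two
  set m := (μ Set.univ).toReal with hm
  have hm0 : 0 ≤ m := ENNReal.toReal_nonneg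
  set B0 := ∫ y, ‖g y‖ ∂μ with hB0
  have hB00 : 0 ≤ B0 := integral_nonneg fun y => norm_nonneg _
  set M := B0 + 1 with hM
  set D := S * (1 + 2 * m) + 1 with hD
  have hD1 : (1:ℝ) ≤ D := by nlinarith
  have hD0 : (0:ℝ) ≤ D := by linarith
  set h : X → ℝ := fun x => ‖g x‖ + M with hh
  have hhx : ∀ x, 0 ≤ h x := fun x => by
    have := norm_nonneg (g x); simp only [hh]; nlinarith
  have hhxM : ∀ x, M ≤ h x := fun x => by
    have := norm_nonneg (g x); simp only [hh]; linarith
  have hhi : Integrable h μ := hgi.norm.add (integrable_const M)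
  have hhint : ∫ y, h y ∂μ = B0 + M * m := by
    simp only [hh]
    rw [integral_add hgi.norm (integrable_const M), integral_const, smul_eq_mul, measureReal_def, ← hB0]
    ring
  set it : ℕ → X → ℝ := fun k => (Kop μ W)^[k] g with hit
  have hit0 : it 0 = g := rfl
  have hit_succ : ∀ k, it (k+1) = Kop μ W (it k) := fun k =>
    Function.iterate_succ_apply' _ _ _
  -- main induction
  have key : ∀ k, StronglyMeasurable (it k) ∧ Integrable (it k) μ ∧
      ∀ x, ‖it k x‖ ≤ D^k * h x := by
    intro k; induction k with
    | zero =>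
      refine ⟨hgm, hgi, fun x => ?_⟩
      have h1 := hhxM x
      have h2 : ‖it 0 x‖ = ‖g x‖ := by rw [hit0]
      have h3 : h x = ‖g x‖ + M := rfl
      rw [h2, pow_zero, one_mul, h3]; nlinarith
    | succ k ih =>
      obtain ⟨sm', int', bd'⟩ := ih
      have hBk : ∫ y, ‖it k y‖ ∂μ ≤ D^k * (B0 + M * m) := by
        calc ∫ y, ‖it k y‖ ∂μ ≤ ∫ y, D^k * h y ∂μ :=
              integral_mono int'.norm (hhi.const_mul _) bd'
        _ = D^k * (B0 + M * m) := by rw [integral_const_mul, hhint]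
      refine ⟨by rw [hit_succ]; exact Top_sm hWm hWb sm',
              by rw [hit_succ]; exact Top_int hWm hWb sm' int', fun x => ?_⟩
      rw [hit_succ]
      have h1 := Top_bound hWm hWb int' x
      have h2 := bd' x
      have hDk : (0:ℝ) ≤ D^k := pow_nonneg hD0 k
      have h4 : M ≤ h x := hhxM x
      have h5 : 0 ≤ h x := hhx x
      have h6 : B0 ≤ M := by rw [hM]; linarith
      have h7 : ‖it k x‖ ≥ 0 := norm_nonneg _
      calc ‖Kop μ W (it k) x‖
          ≤ S * (∫ y, ‖it k y‖ ∂μ) + S * m * ‖it k x‖ := h1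
      _ ≤ S * (D^k * (B0 + M * m)) + S * m * (D^k * h x) := by
          have e1 := mul_le_mul_of_nonneg_left hBk hS
          have e2 := mul_le_mul_of_nonneg_left h2 (mul_nonneg hS hm0)
          linarith
      _ ≤ D^(k+1) * h x := by
          rw [pow_succ, hD]
          have e3 : B0 + M * m ≤ h x * (1 + m) := by nlinarith
          nlinarith [mul_le_mul_of_nonneg_left e3 (mul_nonneg hDk hS)]
  -- summability bounds
  have hterm : ∀ (t : ℝ) x k, ‖t^k / (k.factorial : ℝ) * it k x‖
      ≤ (|t| * D)^k / (k.factorial : ℝ) * h x := by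
    intro t x k
    have e1 : ‖t^k / (k.factorial:ℝ)‖ = |t|^k / (k.factorial:ℝ) := by
      rw [norm_div, norm_pow, Real.norm_eq_abs, Real.norm_natCast]
    rw [norm_mul, e1]
    have e2 : (0:ℝ) ≤ |t|^k / (k.factorial:ℝ) :=
      div_nonneg (pow_nonneg (abs_nonneg _) _) (Nat.cast_nonneg _)
    calc |t|^k / (k.factorial:ℝ) * ‖it k x‖
        ≤ |t|^k / (k.factorial:ℝ) * (D^k * h x) :=
          mul_le_mul_of_nonneg_left ((key k).2.2 x) e2
    _ = (|t| * D)^k / (k.factorial:ℝ) * h x := by rw [mul_pow]; ring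
  have hmaj : ∀ (t : ℝ) x, Summable (fun k => (|t| * D)^k / (k.factorial : ℝ) * h x) :=
    fun t x => (Real.summable_pow_div_factorial (|t| * D)).mul_right _
  have hsumnorm : ∀ (t : ℝ) x, Summable (fun k => ‖t^k / (k.factorial : ℝ) * it k x‖) :=
    fun t x => Summable.of_nonneg_of_le (fun k => norm_nonneg _) (hterm t x) (hmaj t x)
  have hsum : ∀ (t : ℝ) x, Summable (fun k => t^k / (k.factorial : ℝ) * it k x) :=
    fun t x => (hsumnorm t x).of_norm
  set u : ℝ → X → ℝ := fun t x => ∑' k, t^k / (k.factorial : ℝ) * it k x with hu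
  have hu_bd : ∀ (t : ℝ) x, ‖u t x‖ ≤ (∑' k, (|t| * D)^k / (k.factorial : ℝ)) * h x := by
    intro t x
    have s1 : ‖u t x‖ ≤ ∑' k, ‖t^k / (k.factorial : ℝ) * it k x‖ :=
      norm_tsum_le_tsum_norm (hsumnorm t x)
    have s2 : (∑' k, ‖t^k / (k.factorial : ℝ) * it k x‖)
        ≤ ∑' k, (|t| * D)^k / (k.factorial : ℝ) * h x :=
      Summable.tsum_le_tsum (hterm t x) (hsumnorm t x) (hmaj t x)
    have s3 : (∑' k, (|t| * D)^k / (k.factorial : ℝ) * h x)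
        = (∑' k, (|t| * D)^k / (k.factorial : ℝ)) * h x := tsum_mul_right
    linarith
  -- joint strong measurability
  have husm : StronglyMeasurable (fun p : ℝ × X => u p.1 p.2) := by
    refine stronglyMeasurable_of_tendsto atTop
      (f := fun n (p : ℝ × X) => ∑ k ∈ Finset.range n, p.1^k / (k.factorial : ℝ) * it k p.2)
      (fun n => ?_) ?_
    · apply Finset.stronglyMeasurable_fun_sum
      intro k _
      exact (((measurable_fst.pow_const k).div_const _).stronglyMeasurable).mul
        ((key k).1.comp_measurable measurable_snd)
    · rw [tendsto_pi_nhds]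
      intro p
      exact (hsum p.1 p.2).hasSum.tendsto_sum_nat
  have hu_sm : ∀ t, StronglyMeasurable (u t) :=
    fun t => husm.comp_measurable (measurable_prodMk_left)
  have hu_int : ∀ t, Integrable (u t) μ := by
    intro t
    refine (hhi.const_mul (∑' k, (|t| * D)^k / (k.factorial : ℝ))).mono'
      (hu_sm t).aestronglyMeasurable (ae_of_all _ fun x => ?_)
    calc ‖u t x‖ ≤ (∑' k, (|t| * D)^k / (k.factorial : ℝ)) * h x := hu_bd t x
    _ ≤ ‖(∑' k, (|t| * D)^k / (k.factorial : ℝ)) * h x‖ := le_abs_self _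
    _ = _ := by
        rw [Real.norm_eq_abs, abs_mul, abs_of_nonneg (hhx x), abs_of_nonneg
          (tsum_nonneg fun k => div_nonneg (pow_nonneg (mul_nonneg (abs_nonneg t) hD0) k)
            (Nat.cast_nonneg _))]
  -- Kop applied to u
  have hKop_u : ∀ (t : ℝ) x, Kop μ W (u t) x = ∑' k, t^k / (k.factorial : ℝ) * it (k+1) x := by
    intro t x
    have hintk : ∀ k : ℕ, Integrable (fun y => t^k / (k.factorial:ℝ) * (W x y * it k y)) μ :=
      fun k => (W_mul_int hWm hWb (key k).2.1 x).const_mul _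
    have hnormk : ∀ k : ℕ, ∫ y, ‖t^k / (k.factorial:ℝ) * (W x y * it k y)‖ ∂μ
        ≤ (|t| * D)^k / (k.factorial:ℝ) * (S * (B0 + M * m)) := by
      intro k
      have e0 : ∀ y, ‖t^k / (k.factorial:ℝ) * (W x y * it k y)‖
          = |t|^k / (k.factorial:ℝ) * ‖W x y * it k y‖ := by
        intro y
        rw [norm_mul, norm_div, norm_pow, Real.norm_eq_abs, Real.norm_natCast]
      have hBk : ∫ y, ‖it k y‖ ∂μ ≤ D^k * (B0 + M * m) := by
        calc ∫ y, ‖it k y‖ ∂μ ≤ ∫ y, D^k * h y ∂μ :=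
              integral_mono (key k).2.1.norm (hhi.const_mul _) ((key k).2.2)
        _ = D^k * (B0 + M * m) := by rw [integral_const_mul, hhint]
      have e2 : (0:ℝ) ≤ |t|^k / (k.factorial:ℝ) :=
        div_nonneg (pow_nonneg (abs_nonneg _) _) (Nat.cast_nonneg _)
      calc ∫ y, ‖t^k / (k.factorial:ℝ) * (W x y * it k y)‖ ∂μ
          = |t|^k / (k.factorial:ℝ) * ∫ y, ‖W x y * it k y‖ ∂μ := by
            simp_rw [e0]; rw [integral_const_mul]
      _ ≤ |t|^k / (k.factorial:ℝ) * (S * (D^k * (B0 + M * m))) := by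
            refine mul_le_mul_of_nonneg_left ?_ e2
            calc ∫ y, ‖W x y * it k y‖ ∂μ ≤ S * ∫ y, ‖it k y‖ ∂μ :=
                  W_mul_norm_le hWm hWb (key k).2.1 x
            _ ≤ S * (D^k * (B0 + M * m)) := mul_le_mul_of_nonneg_left hBk hS
      _ = (|t| * D)^k / (k.factorial:ℝ) * (S * (B0 + M * m)) := by rw [mul_pow]; ring
    have hsumint : Summable (fun k : ℕ => ∫ y, ‖t^k / (k.factorial:ℝ) * (W x y * it k y)‖ ∂μ) :=
      Summable.of_nonneg_of_le (fun k => integral_nonneg (fun y => norm_nonneg _)) hnormk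
        ((Real.summable_pow_div_factorial (|t| * D)).mul_right _)
    have h1 : (∫ y, W x y * u t y ∂μ)
        = ∑' k, t^k / (k.factorial:ℝ) * ∫ y, W x y * it k y ∂μ := by
      have e : ∀ y, W x y * u t y = ∑' k, t^k / (k.factorial:ℝ) * (W x y * it k y) := by
        intro y
        rw [hu, ← tsum_mul_left]
        exact tsum_congr fun k => by ring
      rw [integral_congr_ae (ae_of_all _ e),
        ← integral_tsum_of_summable_integral_norm hintk hsumint]
      exact tsum_congr fun k => integral_const_mul _ _
    have h2 : (∫ y, W x y ∂μ) * u t x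
        = ∑' k, t^k / (k.factorial:ℝ) * ((∫ y, W x y ∂μ) * it k x) := by
      rw [hu, ← tsum_mul_left]
      exact tsum_congr fun k => by ring
    have hsA : Summable (fun k : ℕ => t^k / (k.factorial:ℝ) * ∫ y, W x y * it k y ∂μ) := by
      refine Summable.of_norm (Summable.of_nonneg_of_le (fun k => norm_nonneg _)
        (fun k => ?_) hsumint)
      rw [norm_mul]
      calc ‖t^k / (k.factorial:ℝ)‖ * ‖∫ y, W x y * it k y ∂μ‖
          ≤ ‖t^k / (k.factorial:ℝ)‖ * ∫ y, ‖W x y * it k y‖ ∂μ :=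
            mul_le_mul_of_nonneg_left (norm_integral_le_integral_norm _) (norm_nonneg _)
      _ = ∫ y, ‖t^k / (k.factorial:ℝ) * (W x y * it k y)‖ ∂μ := by
          rw [← integral_const_mul]
          exact (integral_congr_ae (ae_of_all _ fun y => by rw [norm_mul])).symm
    have hsB : Summable (fun k : ℕ => t^k / (k.factorial:ℝ) * ((∫ y, W x y ∂μ) * it k x)) := by
      have := (hsum t x).mul_left (∫ y, W x y ∂μ)
      refine this.congr fun k => by ring
    have : Kop μ W (u t) x
        = (∑' k, t^k / (k.factorial:ℝ) * ∫ y, W x y * it k y ∂μ)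
          - ∑' k, t^k / (k.factorial:ℝ) * ((∫ y, W x y ∂μ) * it k x) := by
      rw [Kop, h1, h2]
    rw [this, ← Summable.tsum_sub hsA hsB]
    refine tsum_congr fun k => ?_
    rw [hit_succ k, Kop]
    ring
  -- time integral of the series
  have htime : ∀ t : ℝ, 0 ≤ t → t ≤ T → ∀ x,
      (∫ s in Ioc (0:ℝ) t, Kop μ W (u s) x)
        = ∑' k, t^(k+1) / ((k+1).factorial : ℝ) * it (k+1) x := by
    intro t ht0 htT x
    have hcong : (∫ s in Ioc (0:ℝ) t, Kop μ W (u s) x)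
        = ∫ s in Ioc (0:ℝ) t, ∑' k, s^k / (k.factorial : ℝ) * it (k+1) x := by
      exact integral_congr_ae (ae_of_all _ fun s => hKop_u s x)
    have hintk : ∀ k : ℕ, Integrable (fun s => s^k / (k.factorial:ℝ) * it (k+1) x)
        ((volume : Measure ℝ).restrict (Ioc 0 t)) := by
      intro k
      exact ((((continuous_pow k).div_const _).mul continuous_const)).integrableOn_Ioc
    have hTnn : 0 ≤ T := le_of_lt hT
    have hb : ∀ k : ℕ, ∀ s ∈ Ioc (0:ℝ) t, ‖s^k / (k.factorial:ℝ) * it (k+1) x‖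
        ≤ T^k / (k.factorial:ℝ) * (D^(k+1) * h x) := by
      intro k s hs
      rw [norm_mul, norm_div, norm_pow, Real.norm_eq_abs, Real.norm_natCast]
      have h1 : |s| ≤ T := by
        rw [abs_of_pos hs.1]; exact le_trans hs.2 htT
      have h2 : |s|^k ≤ T^k := pow_le_pow_left₀ (abs_nonneg _) h1 k
      have h3 := (key (k+1)).2.2 x
      have h4 : (0:ℝ) < (k.factorial:ℝ) := by exact_mod_cast k.factorial_pos
      have h5 : (0:ℝ) ≤ D^(k+1) * h x := mul_nonneg (pow_nonneg hD0 _) (hhx x)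
      have h6 : (0:ℝ) ≤ ‖it (k+1) x‖ := norm_nonneg _
      have h7 : |s|^k / (k.factorial:ℝ) ≤ T^k / (k.factorial:ℝ) := by gcongr
      have h8 : (0:ℝ) ≤ |s|^k / (k.factorial:ℝ) :=
        div_nonneg (pow_nonneg (abs_nonneg _) _) (le_of_lt h4)
      calc |s|^k / (k.factorial:ℝ) * ‖it (k+1) x‖
          ≤ |s|^k / (k.factorial:ℝ) * (D^(k+1) * h x) := mul_le_mul_of_nonneg_left h3 h8
      _ ≤ T^k / (k.factorial:ℝ) * (D^(k+1) * h x) := mul_le_mul_of_nonneg_right h7 h5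
    have hnormk : ∀ k : ℕ, (∫ s in Ioc (0:ℝ) t, ‖s^k / (k.factorial:ℝ) * it (k+1) x‖)
        ≤ (T * D)^k / (k.factorial:ℝ) * ((T * D) * h x) := by
      intro k
      have e1 : (∫ s in Ioc (0:ℝ) t, ‖s^k / (k.factorial:ℝ) * it (k+1) x‖)
          ≤ ∫ _s in Ioc (0:ℝ) t, T^k / (k.factorial:ℝ) * (D^(k+1) * h x) := by
        refine setIntegral_mono_on (hintk k).norm (integrableOn_const ?_)
          measurableSet_Ioc (hb k)
        rw [Real.volume_Ioc]; exact ENNReal.ofReal_ne_top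
      have e2 : (∫ _s in Ioc (0:ℝ) t, T^k / (k.factorial:ℝ) * (D^(k+1) * h x))
          = ((volume (Ioc (0:ℝ) t)).toReal) * (T^k / (k.factorial:ℝ) * (D^(k+1) * h x)) := by
        rw [setIntegral_const, smul_eq_mul, measureReal_def]
      have e3 : ((volume (Ioc (0:ℝ) t)).toReal) ≤ T := by
        rw [Real.volume_Ioc, ENNReal.toReal_ofReal (by linarith : (0:ℝ) ≤ t - 0)]
        linarith
      have e4 : (0:ℝ) ≤ T^k / (k.factorial:ℝ) * (D^(k+1) * h x) :=
        mul_nonneg (div_nonneg (pow_nonneg hTnn _) (Nat.cast_nonneg _))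
          (mul_nonneg (pow_nonneg hD0 _) (hhx x))
      calc (∫ s in Ioc (0:ℝ) t, ‖s^k / (k.factorial:ℝ) * it (k+1) x‖)
          ≤ ∫ _s in Ioc (0:ℝ) t, T^k / (k.factorial:ℝ) * (D^(k+1) * h x) := e1
      _ = ((volume (Ioc (0:ℝ) t)).toReal) * (T^k / (k.factorial:ℝ) * (D^(k+1) * h x)) := e2
      _ ≤ T * (T^k / (k.factorial:ℝ) * (D^(k+1) * h x)) := mul_le_mul_of_nonneg_right e3 e4
      _ = (T * D)^k / (k.factorial:ℝ) * ((T * D) * h x) := by rw [mul_pow, pow_succ]; ring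
    have hsumint2 : Summable
        (fun k : ℕ => ∫ s in Ioc (0:ℝ) t, ‖s^k / (k.factorial:ℝ) * it (k+1) x‖) :=
      Summable.of_nonneg_of_le (fun k => integral_nonneg fun s => norm_nonneg _) hnormk
        ((Real.summable_pow_div_factorial (T*D)).mul_right _)
    rw [hcong, ← integral_tsum_of_summable_integral_norm hintk hsumint2]
    refine tsum_congr fun k => ?_
    have e5 : (∫ s in Ioc (0:ℝ) t, s^k / (k.factorial:ℝ) * it (k+1) x)
        = (∫ s in Ioc (0:ℝ) t, s^k) * (it (k+1) x / (k.factorial:ℝ)) := by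
      rw [← integral_mul_const]
      exact integral_congr_ae (ae_of_all _ fun s => by ring)
    have e6 : (∫ s in Ioc (0:ℝ) t, s^k) = (t^(k+1) - 0^(k+1)) / ((k:ℝ)+1) := by
      rw [← intervalIntegral.integral_of_le ht0]
      exact integral_pow k
    rw [e5, e6, zero_pow (Nat.succ_ne_zero k)]
    have h4 : ((k.factorial:ℝ)) ≠ 0 := by
      exact_mod_cast k.factorial_pos.ne'
    have h5 : ((k:ℝ)+1) ≠ 0 := by positivity
    rw [Nat.factorial_succ]
    push_cast
    field_simp
    try ring
  -- the equation
  have hequ : ∀ t ∈ Icc (0:ℝ) T, ∀ x,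
      u t x = g x + ∫ s in Ioc (0:ℝ) t, Kop μ W (u s) x := by
    intro t ht x
    rw [htime t ht.1 ht.2 x]
    have h0 := Summable.tsum_eq_zero_add (hsum t x)
    have e7 : t^(0:ℕ) / ((Nat.factorial 0 : ℕ):ℝ) * it 0 x = g x := by
      simp [hit0]
    calc u t x = ∑' k, t^k / (k.factorial : ℝ) * it k x := rfl
    _ = t^(0:ℕ) / ((Nat.factorial 0 : ℕ):ℝ) * it 0 x
        + ∑' k, t^(k+1) / ((k+1).factorial : ℝ) * it (k+1) x := h0
    _ = g x + ∑' k, t^(k+1) / ((k+1).factorial : ℝ) * it (k+1) x := by rw [e7]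
  -- finiteness of the time measure
  set ρ := (volume : Measure ℝ).restrict (Icc (0:ℝ) T) with hρ
  haveI : IsFiniteMeasure ρ := by
    constructor
    rw [hρ, Measure.restrict_apply_univ]
    exact measure_Icc_lt_top
  have hmem : MemLp (fun p : ℝ × X => u p.1 p.2) 2 (ρ.prod μ) := by
    set E := ∑' k, (T*D)^k / (k.factorial : ℝ) with hE
    have hdom0 : MemLp (fun x => E * h x) 2 μ := (hgL2.norm.add (memLp_const M)).const_mul E
    have hdom1 : MemLp (fun x => E * h x) 2 (Measure.map Prod.snd (ρ.prod μ)) := by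
      rw [Measure.map_snd_prod]
      exact hdom0.smul_measure (measure_ne_top ρ univ)
    have hdom' : MemLp ((fun x => E * h x) ∘ Prod.snd) 2 (ρ.prod μ) :=
      hdom1.comp_of_map measurable_snd.aemeasurable
    have hdom : MemLp (fun p : ℝ × X => E * h p.2) 2 (ρ.prod μ) := hdom'
    refine hdom.of_le husm.aestronglyMeasurable ?_
    have hfst : ∀ᵐ p ∂(ρ.prod μ), p.1 ∈ Icc (0:ℝ) T :=
      ae_prod_fst' ρ μ (ae_restrict_mem measurableSet_Icc)
    filter_upwards [hfst] with p hp
    have h1 := hu_bd p.1 p.2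
    have habs : |p.1| ≤ T := by
      rw [abs_le]; exact ⟨by linarith [hp.1, le_of_lt hT], hp.2⟩
    have h2 : (∑' k, (|p.1| * D)^k / (k.factorial:ℝ)) ≤ E := by
      refine Summable.tsum_le_tsum (fun k => ?_) (Real.summable_pow_div_factorial _)
        (Real.summable_pow_div_factorial _)
      exact div_le_div_of_nonneg_right
        (pow_le_pow_left₀ (mul_nonneg (abs_nonneg _) hD0)
          (mul_le_mul_of_nonneg_right habs hD0) k) (Nat.cast_nonneg _)
    calc ‖u p.1 p.2‖ ≤ (∑' k, (|p.1| * D)^k / (k.factorial:ℝ)) * h p.2 := h1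
    _ ≤ E * h p.2 := mul_le_mul_of_nonneg_right h2 (hhx p.2)
    _ ≤ ‖E * h p.2‖ := le_abs_self _
  exact ⟨u, hu_int, husm, hmem, hequ⟩

end Exist


section Gronwall

lemma gronwall_zero (T C : ℝ) (hT : 0 < T) (hC : 0 ≤ C) (φ : ℝ → ℝ)
    (hφ0 : ∀ t, 0 ≤ φ t)
    (hφi : Integrable φ ((volume : Measure ℝ).restrict (Icc 0 T)))
    (hrec : ∀ᵐ t ∂((volume : Measure ℝ).restrict (Icc 0 T)),
      φ t ≤ C * ∫ s in Ioc (0:ℝ) t, φ s) :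
    ∀ᵐ t ∂((volume : Measure ℝ).restrict (Icc 0 T)), φ t = 0 := by
  set ρ := (volume : Measure ℝ).restrict (Icc (0:ℝ) T) with hρ
  set Mφ := ∫ t, φ t ∂ρ with hMφ
  have hmem : ∀ᵐ t ∂ρ, t ∈ Icc (0:ℝ) T := ae_restrict_mem measurableSet_Icc
  have main : ∀ k : ℕ, ∀ᵐ t ∂ρ, φ t ≤ Mφ * C^(k+1) * t^k / (k.factorial : ℝ) := by
    intro k; induction k with
    | zero =>
      filter_upwards [hrec, hmem] with t h1 h2
      have h3 : (∫ s in Ioc (0:ℝ) t, φ s) ≤ Mφ := by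
        rw [hMφ, hρ]
        exact setIntegral_mono_set hφi (ae_of_all _ hφ0)
          (HasSubset.Subset.eventuallyLE
            (fun s hs => ⟨le_of_lt hs.1, le_trans hs.2 h2.2⟩))
      calc φ t ≤ C * ∫ s in Ioc (0:ℝ) t, φ s := h1
      _ ≤ C * Mφ := mul_le_mul_of_nonneg_left h3 hC
      _ = Mφ * C^(0+1) * t^0 / (Nat.factorial 0 : ℝ) := by
          rw [pow_one, pow_zero, Nat.factorial_zero]; push_cast; ring
    | succ k ih =>
      filter_upwards [hrec, hmem, ih] with t h1 h2 _
      have hsub : Ioc (0:ℝ) t ⊆ Icc (0:ℝ) T :=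
        fun s hs => ⟨le_of_lt hs.1, le_trans hs.2 h2.2⟩
      have hres : (volume : Measure ℝ).restrict (Ioc (0:ℝ) t) ≤ ρ := by
        rw [hρ]; exact Measure.restrict_mono hsub le_rfl
      have hφi' : Integrable φ ((volume : Measure ℝ).restrict (Ioc (0:ℝ) t)) :=
        hφi.mono_measure hres
      have hpi : Integrable (fun s => Mφ * C^(k+1) * s^k / (k.factorial:ℝ))
          ((volume : Measure ℝ).restrict (Ioc (0:ℝ) t)) :=
        ((((continuous_const).mul (continuous_pow k)).div_const _).integrableOn_Ioc)
      have hle : ∀ᵐ s ∂((volume : Measure ℝ).restrict (Ioc (0:ℝ) t)),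
          φ s ≤ Mφ * C^(k+1) * s^k / (k.factorial:ℝ) :=
        ae_restrict_of_ae_restrict_of_subset hsub ih
      have h3 : (∫ s in Ioc (0:ℝ) t, φ s)
          ≤ ∫ s in Ioc (0:ℝ) t, Mφ * C^(k+1) * s^k / (k.factorial:ℝ) :=
        integral_mono_ae hφi' hpi hle
      have e5 : (∫ s in Ioc (0:ℝ) t, Mφ * C^(k+1) * s^k / (k.factorial:ℝ))
          = (∫ s in Ioc (0:ℝ) t, s^k) * (Mφ * C^(k+1) / (k.factorial:ℝ)) := by
        rw [show (∫ s in Ioc (0:ℝ) t, Mφ * C^(k+1) * s^k / (k.factorial:ℝ))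
            = ∫ s in Ioc (0:ℝ) t, s^k * (Mφ * C^(k+1) / (k.factorial:ℝ)) from
          integral_congr_ae (ae_of_all _ fun s => by ring), integral_mul_const]
      have e6 : (∫ s in Ioc (0:ℝ) t, s^k) = (t^(k+1) - 0^(k+1)) / ((k:ℝ)+1) := by
        rw [← intervalIntegral.integral_of_le h2.1]
        exact integral_pow k
      have h6 : ((k.factorial:ℝ)) ≠ 0 := by exact_mod_cast k.factorial_pos.ne'
      have h7 : ((k:ℝ)+1) ≠ 0 := by positivity
      calc φ t ≤ C * ∫ s in Ioc (0:ℝ) t, φ s := h1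
      _ ≤ C * ((∫ s in Ioc (0:ℝ) t, s^k) * (Mφ * C^(k+1) / (k.factorial:ℝ))) := by
          rw [← e5]; exact mul_le_mul_of_nonneg_left h3 hC
      _ = Mφ * C^(k+1+1) * t^(k+1) / ((k+1).factorial : ℝ) := by
          rw [e6, zero_pow (Nat.succ_ne_zero k), Nat.factorial_succ]
          push_cast
          field_simp
          ring
  have hall : ∀ᵐ t ∂ρ, ∀ k : ℕ, φ t ≤ Mφ * C^(k+1) * t^k / (k.factorial : ℝ) :=
    (ae_all_iff).2 main
  filter_upwards [hall] with t hk
  have h0 : Tendsto (fun k : ℕ => Mφ * C^(k+1) * t^k / (k.factorial:ℝ)) atTop (𝓝 0) := by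
    have e : (fun k : ℕ => Mφ * C^(k+1) * t^k / (k.factorial:ℝ))
        = fun k : ℕ => (Mφ * C) * ((C*t)^k / (k.factorial:ℝ)) := by
      funext k; rw [pow_succ, mul_pow]; ring
    rw [e]
    have h1 := (Real.summable_pow_div_factorial (C*t)).tendsto_atTop_zero
    have h2 := h1.const_mul (Mφ * C)
    simpa using h2
  have hle0 : φ t ≤ 0 := ge_of_tendsto h0 (Eventually.of_forall hk)
  exact le_antisymm hle0 (hφ0 t)

end Gronwall

section Uniq

variable {X : Type*} [MeasurableSpace X]
variable {μ : Measure X} [IsFiniteMeasure μ] {W : X → X → ℝ} {S : ℝ}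

theorem uniq_sol (hWm : StronglyMeasurable (Function.uncurry W))
    (hWb : ∀ x y, |W x y| ≤ S) (hS : 0 ≤ S)
    (T : ℝ) (hT : 0 < T) (g : X → ℝ) (u v : ℝ → X → ℝ)
    (hu : MemLp (fun p : ℝ × X => u p.1 p.2) 2
      (((volume : Measure ℝ).restrict (Icc 0 T)).prod μ))
    (hv : MemLp (fun p : ℝ × X => v p.1 p.2) 2
      (((volume : Measure ℝ).restrict (Icc 0 T)).prod μ))
    (hequ : ∀ᵐ p ∂(((volume : Measure ℝ).restrict (Icc 0 T)).prod μ),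
      u p.1 p.2 = g p.2 + ∫ s in Ioc (0:ℝ) p.1, Kop μ W (u s) p.2)
    (heqv : ∀ᵐ p ∂(((volume : Measure ℝ).restrict (Icc 0 T)).prod μ),
      v p.1 p.2 = g p.2 + ∫ s in Ioc (0:ℝ) p.1, Kop μ W (v s) p.2) :
    ∀ᵐ p ∂(((volume : Measure ℝ).restrict (Icc 0 T)).prod μ),
      v p.1 p.2 = u p.1 p.2 := by
  set ρ := (volume : Measure ℝ).restrict (Icc (0:ℝ) T) with hρ
  haveI : IsFiniteMeasure ρ := by
    constructor; rw [hρ, Measure.restrict_apply_univ]; exact measure_Icc_lt_top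
  set π := ρ.prod μ with hπ
  set m := (μ Set.univ).toReal with hm
  have hm0 : 0 ≤ m := ENNReal.toReal_nonneg
  have hui : Integrable (fun p : ℝ × X => u p.1 p.2) π := hu.integrable one_le_two
  have hvi : Integrable (fun p : ℝ × X => v p.1 p.2) π := hv.integrable one_le_two
  have hwi : Integrable (fun p : ℝ × X => v p.1 p.2 - u p.1 p.2) π := hvi.sub hui
  have hslice : ∀ᵐ t ∂ρ, Integrable (v t) μ ∧ Integrable (u t) μ := by
    filter_upwards [hvi.prod_right_ae, hui.prod_right_ae] with t h1 h2
    exact ⟨h1, h2⟩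
  set φ : ℝ → ℝ := fun t => ∫ x, ‖v t x - u t x‖ ∂μ with hφ
  have hφ0 : ∀ t, 0 ≤ φ t := fun t => integral_nonneg fun x => norm_nonneg _
  have hφi : Integrable φ ρ := hwi.integral_norm_prod_left
  have hwswap : Integrable (fun q : X × ℝ => v q.2 q.1 - u q.2 q.1) (μ.prod ρ) := hwi.swap
  have hgoodw : ∀ᵐ x ∂μ, Integrable (fun t => v t x - u t x) ρ := hwi.prod_left_ae
  have hφv : Integrable (fun s => ∫ y, ‖v s y‖ ∂μ) ρ := hvi.integral_norm_prod_left
  have hφu : Integrable (fun s => ∫ y, ‖u s y‖ ∂μ) ρ := hui.integral_norm_prod_left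
  -- integrability of s ↦ Kop (v s) x for a.e. x
  have hgood : ∀ (f : ℝ → X → ℝ), MemLp (fun p : ℝ × X => f p.1 p.2) 2 π →
      ∀ᵐ x ∂μ, Integrable (fun s => Kop μ W (f s) x) ρ := by
    intro f hf
    have hfi : Integrable (fun p : ℝ × X => f p.1 p.2) π := hf.integrable one_le_two
    have hfφ : Integrable (fun s => ∫ y, ‖f s y‖ ∂μ) ρ := hfi.integral_norm_prod_left
    have hfslice : ∀ᵐ t ∂ρ, Integrable (f t) μ := hfi.prod_right_ae
    filter_upwards [hfi.prod_left_ae] with x hx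
    have h1 : AEStronglyMeasurable (fun p : ℝ × X => W x p.2 * f p.1 p.2) π := by
      refine AEStronglyMeasurable.mul ?_ hf.1
      exact ((hWm.comp_measurable (measurable_prodMk_left (x := x))).comp_measurable
        measurable_snd).aestronglyMeasurable
    have h2 : AEStronglyMeasurable (fun s => ∫ y, W x y * f s y ∂μ) ρ :=
      h1.integral_prod_right'
    have haesm : AEStronglyMeasurable (fun s => Kop μ W (f s) x) ρ :=
      h2.sub (hx.1.const_mul (∫ y, W x y ∂μ))
    refine ((hfφ.const_mul S).add ((hx.norm.const_mul (S*m)))).mono' haesm ?_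
    filter_upwards [hfslice] with s hs
    exact Top_bound hWm hWb hs x
  have hgoodv := hgood v hv
  have hgoodu := hgood u hu
  -- master pointwise bound
  have hmaster : ∀ᵐ p ∂π, ‖v p.1 p.2 - u p.1 p.2‖
      ≤ ∫ s in Ioc (0:ℝ) p.1, (S * φ s + (S*m) * ‖v s p.2 - u s p.2‖) := by
    have hae1 : ∀ᵐ p ∂π, p.1 ∈ Icc (0:ℝ) T :=
      ae_prod_fst' ρ μ (ae_restrict_mem measurableSet_Icc)
    have hae2 : ∀ᵐ p ∂π, (Integrable (fun s => Kop μ W (v s) p.2) ρ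
        ∧ Integrable (fun s => Kop μ W (u s) p.2) ρ
        ∧ Integrable (fun t => v t p.2 - u t p.2) ρ) := by
      refine ae_prod_snd' ρ μ (Q := fun x => Integrable (fun s => Kop μ W (v s) x) ρ
        ∧ Integrable (fun s => Kop μ W (u s) x) ρ
        ∧ Integrable (fun t => v t x - u t x) ρ) ?_
      filter_upwards [hgoodv, hgoodu, hgoodw] with x e1 e2 e3
      exact ⟨e1, e2, e3⟩
    filter_upwards [hequ, heqv, hae1, hae2] with p h1 h2 hp hgd
    obtain ⟨hKv, hKu, hw⟩ := hgd
    have hsub : Ioc (0:ℝ) p.1 ⊆ Icc (0:ℝ) T :=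
      fun s hs => ⟨le_of_lt hs.1, le_trans hs.2 hp.2⟩
    have hres : (volume : Measure ℝ).restrict (Ioc (0:ℝ) p.1) ≤ ρ := by
      rw [hρ]; exact Measure.restrict_mono hsub le_rfl
    have hKv' : Integrable (fun s => Kop μ W (v s) p.2)
        ((volume : Measure ℝ).restrict (Ioc (0:ℝ) p.1)) := hKv.mono_measure hres
    have hKu' : Integrable (fun s => Kop μ W (u s) p.2)
        ((volume : Measure ℝ).restrict (Ioc (0:ℝ) p.1)) := hKu.mono_measure hres
    have heq : v p.1 p.2 - u p.1 p.2
        = ∫ s in Ioc (0:ℝ) p.1, (Kop μ W (v s) p.2 - Kop μ W (u s) p.2) := by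
      rw [h2, h1, integral_sub hKv' hKu']
      ring
    rw [heq]
    have hbound : ∀ᵐ s ∂((volume : Measure ℝ).restrict (Ioc (0:ℝ) p.1)),
        ‖Kop μ W (v s) p.2 - Kop μ W (u s) p.2‖
          ≤ S * φ s + (S*m) * ‖v s p.2 - u s p.2‖ := by
      refine ae_restrict_of_ae_restrict_of_subset hsub ?_
      filter_upwards [hslice] with s hs
      rw [Top_sub hWm hWb hs.1 hs.2]
      have hwint : Integrable (fun y => v s y - u s y) μ := hs.1.sub hs.2
      exact Top_bound hWm hWb hwint p.2
    have hGint : Integrable (fun s => S * φ s + (S*m) * ‖v s p.2 - u s p.2‖)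
        ((volume : Measure ℝ).restrict (Ioc (0:ℝ) p.1)) :=
      ((hφi.const_mul S).add ((hw.norm.const_mul (S*m)))).mono_measure hres
    calc ‖∫ s in Ioc (0:ℝ) p.1, (Kop μ W (v s) p.2 - Kop μ W (u s) p.2)‖
        ≤ ∫ s in Ioc (0:ℝ) p.1, ‖Kop μ W (v s) p.2 - Kop μ W (u s) p.2‖ :=
          norm_integral_le_integral_norm _
    _ ≤ ∫ s in Ioc (0:ℝ) p.1, (S * φ s + (S*m) * ‖v s p.2 - u s p.2‖) :=
        integral_mono_of_nonneg (ae_of_all _ fun s => norm_nonneg _) hGint hbound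
  -- step B : Gronwall-type inequality for φ
  have hstepB : ∀ᵐ t ∂ρ, φ t ≤ (2*S*m) * ∫ s in Ioc (0:ℝ) t, φ s := by
    have h1 := Measure.ae_ae_of_ae_prod hmaster
    filter_upwards [h1, hslice, ae_restrict_mem measurableSet_Icc] with t ht hs htI
    have hsub : Ioc (0:ℝ) t ⊆ Icc (0:ℝ) T :=
      fun s hs' => ⟨le_of_lt hs'.1, le_trans hs'.2 htI.2⟩
    have hres : (volume : Measure ℝ).restrict (Ioc (0:ℝ) t) ≤ ρ := by
      rw [hρ]; exact Measure.restrict_mono hsub le_rfl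
    have hmeq : μ.prod ((volume : Measure ℝ).restrict (Ioc (0:ℝ) t))
        = (μ.prod ρ).restrict (univ ×ˢ (Ioc (0:ℝ) t)) := by
      have e1 : (volume : Measure ℝ).restrict (Ioc (0:ℝ) t) = ρ.restrict (Ioc (0:ℝ) t) := by
        rw [hρ, Measure.restrict_restrict measurableSet_Ioc,
          inter_eq_self_of_subset_left hsub]
      rw [e1, ← Measure.prod_restrict, Measure.restrict_univ]
    have hwres : Integrable (fun q : X × ℝ => v q.2 q.1 - u q.2 q.1)
        (μ.prod ((volume : Measure ℝ).restrict (Ioc (0:ℝ) t))) := by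
      rw [hmeq]; exact hwswap.restrict
    have hinner : Integrable (fun x => ∫ s in Ioc (0:ℝ) t, ‖v s x - u s x‖) μ :=
      hwres.integral_norm_prod_left
    have hswap : (∫ x, (∫ s in Ioc (0:ℝ) t, ‖v s x - u s x‖) ∂μ)
        = ∫ s in Ioc (0:ℝ) t, (∫ x, ‖v s x - u s x‖ ∂μ) :=
      integral_integral_swap hwres.norm
    have hφdef : ∀ sᵣ : ℝ, φ sᵣ = ∫ x, ‖v sᵣ x - u sᵣ x‖ ∂μ := fun sᵣ => by rw [hφ]
    have hsplit : ∀ᵐ x ∂μ, (∫ s in Ioc (0:ℝ) t, (S * φ s + (S*m) * ‖v s x - u s x‖))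
        = S * (∫ s in Ioc (0:ℝ) t, φ s)
          + (S*m) * ∫ s in Ioc (0:ℝ) t, ‖v s x - u s x‖ := by
      filter_upwards [hgoodw] with x hx
      have hxres : Integrable (fun s => ‖v s x - u s x‖)
          ((volume : Measure ℝ).restrict (Ioc (0:ℝ) t)) :=
        (hx.norm).mono_measure hres
      rw [integral_add ((hφi.const_mul S).mono_measure hres) (hxres.const_mul (S*m)),
        integral_const_mul, integral_const_mul]
    have hRHSint : Integrable (fun x => S * (∫ s in Ioc (0:ℝ) t, φ s)
        + (S*m) * ∫ s in Ioc (0:ℝ) t, ‖v s x - u s x‖) μ :=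
      (integrable_const _).add (hinner.const_mul _)
    have hb1 : φ t ≤ ∫ x, (S * (∫ s in Ioc (0:ℝ) t, φ s)
        + (S*m) * ∫ s in Ioc (0:ℝ) t, ‖v s x - u s x‖) ∂μ := by
      rw [hφdef t]
      refine integral_mono_ae (hs.1.sub hs.2).norm hRHSint ?_
      filter_upwards [ht, hsplit] with x e1 e2
      rw [← e2]; exact e1
    have hb2 : (∫ x, (S * (∫ s in Ioc (0:ℝ) t, φ s)
        + (S*m) * ∫ s in Ioc (0:ℝ) t, ‖v s x - u s x‖) ∂μ)
        = m * (S * (∫ s in Ioc (0:ℝ) t, φ s))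
          + (S*m) * ∫ s in Ioc (0:ℝ) t, (∫ x, ‖v s x - u s x‖ ∂μ) := by
      rw [integral_add (integrable_const _) (hinner.const_mul _), integral_const,
        smul_eq_mul, integral_const_mul, hswap, measureReal_def]
    calc φ t ≤ _ := hb1
    _ = m * (S * (∫ s in Ioc (0:ℝ) t, φ s))
        + (S*m) * ∫ s in Ioc (0:ℝ) t, (∫ x, ‖v s x - u s x‖ ∂μ) := hb2
    _ = (2*S*m) * ∫ s in Ioc (0:ℝ) t, φ s := by
        simp_rw [← hφdef]; ring
  -- Gronwall
  have hφzero : ∀ᵐ t ∂ρ, φ t = 0 :=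
    gronwall_zero T (2*S*m) hT (by positivity) φ hφ0 hφi hstepB
  have hzero2 : ∀ᵐ t ∂ρ, ∀ᵐ x ∂μ, v t x - u t x = 0 := by
    filter_upwards [hφzero, hslice] with t h1 hs
    have hint : Integrable (fun x => ‖v t x - u t x‖) μ := (hs.1.sub hs.2).norm
    have h2 := (integral_eq_zero_iff_of_nonneg_ae
      (ae_of_all _ fun x => norm_nonneg (v t x - u t x)) hint).1 h1
    filter_upwards [h2] with x hx
    exact norm_eq_zero.1 hx
  -- upgrade to the product measure
  have hd : AEStronglyMeasurable (fun p : ℝ × X => v p.1 p.2 - u p.1 p.2) π :=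
    hv.1.sub hu.1
  set d' := hd.mk _ with hd'def
  have hd'sm : StronglyMeasurable d' := hd.stronglyMeasurable_mk
  have hdd' : (fun p : ℝ × X => v p.1 p.2 - u p.1 p.2) =ᵐ[π] d' := hd.ae_eq_mk
  have hdd'2 : ∀ᵐ t ∂ρ, ∀ᵐ x ∂μ, v t x - u t x = d' (t, x) :=
    Measure.ae_ae_of_ae_prod hdd'
  have hZmeas : MeasurableSet {q : ℝ × X | d' q ≠ 0} :=
    hd'sm.measurable (measurableSet_singleton (0:ℝ)).compl
  have hZ : π {q : ℝ × X | d' q ≠ 0} = 0 := by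
    rw [hπ, Measure.measure_prod_null hZmeas]
    filter_upwards [hzero2, hdd'2] with t h1 h2
    have h3 : ∀ᵐ x ∂μ, d' (t, x) = 0 := by
      filter_upwards [h1, h2] with x e1 e2
      rw [← e2, e1]
    exact ae_iff.1 h3
  have hd'0 : ∀ᵐ q ∂π, d' q = 0 := by
    rw [ae_iff]; exact hZ
  filter_upwards [hdd', hd'0] with p e1 e2
  have : v p.1 p.2 - u p.1 p.2 = 0 := by rw [e1, e2]
  linarith

end Uniq

end Abstract

section ChiLemmas

lemma chi_nonneg {α : Type*} (A : Set α) (x : α) : 0 ≤ chi A x := by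
  unfold chi; split_ifs <;> norm_num

lemma chi_abs_le_one {α : Type*} (A : Set α) (x : α) : |chi A x| ≤ 1 := by
  unfold chi; split_ifs <;> norm_num

lemma chi_of_mem {α : Type*} {A : Set α} {x : α} (h : x ∈ A) : chi A x = 1 := by
  simp [chi, h]

lemma chi_of_not_mem {α : Type*} {A : Set α} {x : α} (h : x ∉ A) : chi A x = 0 := by
  simp [chi, h]

lemma chi_measurable {α : Type*} [MeasurableSpace α] {A : Set α}
    (hA : MeasurableSet A) : Measurable (chi A) := by
  have : chi A = A.indicator (fun _ => (1:ℝ)) := by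
    funext x
    by_cases h : x ∈ A <;> simp [chi, h]
  rw [this]
  exact measurable_const.indicator hA

lemma mul3_abs_le {a b c s : ℝ} (ha : |a| ≤ 1) (hb : |b| ≤ 1) (hc : |c| ≤ s) :
    |a * b * c| ≤ s := by
  rw [abs_mul, abs_mul]
  have h2 := abs_nonneg b
  have h3 := abs_nonneg c
  have h4 : |a| * |b| ≤ 1 := mul_le_one₀ ha h2 hb
  calc |a| * |b| * |c| ≤ 1 * |c| := mul_le_mul_of_nonneg_right h4 h3
  _ = |c| := one_mul _
  _ ≤ s := hc

end ChiLemmas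


theorem stmt3 {N : ℕ} (Ω : Set (Fin N → ℝ))
    (hΩo : IsOpen Ω) (hΩb : IsBounded Ω) (hΩc : IsConnected Ω)
    (J G R : (Fin N → ℝ) → (Fin N → ℝ) → ℝ)
    (hJ : KernelH J) (hG : KernelH G) (hR : KernelH R)
    (A B : Set (Fin N → ℝ))
    (hpart : closure Ω = A ∪ B) (hdisj : A ∩ B = ∅)
    (hBopen : IsOpen B) (hAmeas : MeasurableSet A)
    (u0 : (Fin N → ℝ) → ℝ) (hu0 : MemLp u0 2 (volume.restrict Ω))
    (T : ℝ) (hT : 0 < T) :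
    ∃ u : ℝ → (Fin N → ℝ) → ℝ,
      MemLp (fun p : ℝ × (Fin N → ℝ) => u p.1 p.2) 2 (((volume : Measure ℝ).restrict (Set.Icc 0 T)).prod (volume.restrict Ω)) ∧
      (∀ᵐ p ∂(((volume : Measure ℝ).restrict (Set.Icc 0 T)).prod (volume.restrict Ω)),
        u p.1 p.2 = u0 p.2 + ∫ s in Set.Ioc (0 : ℝ) p.1, Lop Ω A B J G R (u s) p.2) ∧
      ∀ v : ℝ → (Fin N → ℝ) → ℝ,
        MemLp (fun p : ℝ × (Fin N → ℝ) => v p.1 p.2) 2 (((volume : Measure ℝ).restrict (Set.Icc 0 T)).prod (volume.restrict Ω)) →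
        (∀ᵐ p ∂(((volume : Measure ℝ).restrict (Set.Icc 0 T)).prod (volume.restrict Ω)),
          v p.1 p.2 = u0 p.2 + ∫ s in Set.Ioc (0 : ℝ) p.1, Lop Ω A B J G R (v s) p.2) →
        (∀ᵐ p ∂(((volume : Measure ℝ).restrict (Set.Icc 0 T)).prod (volume.restrict Ω)), v p.1 p.2 = u p.1 p.2) := by
  classical
  -- basic measure-theoretic setup
  have hKc : IsCompact (closure Ω) := hΩb.isCompact_closure
  have hΩm : MeasurableSet Ω := hΩo.measurableSet
  haveI : IsFiniteMeasure ((volume : Measure (Fin N → ℝ)).restrict Ω) := by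
    constructor
    rw [Measure.restrict_apply_univ]
    exact lt_of_le_of_lt (measure_mono subset_closure) hKc.measure_lt_top
  -- kernel bounds on the compact set (closure Ω) × (closure Ω)
  obtain ⟨SJ, hSJ⟩ := (hKc.prod hKc).exists_bound_of_continuousOn hJ.1.continuousOn
  obtain ⟨SG, hSG⟩ := (hKc.prod hKc).exists_bound_of_continuousOn hG.1.continuousOn
  obtain ⟨SR, hSR⟩ := (hKc.prod hKc).exists_bound_of_continuousOn hR.1.continuousOn
  set SJ' := max SJ 0 with hSJ'
  set SG' := max SG 0 with hSG'
  set SR' := max SR 0 with hSR'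
  have hbJ : ∀ x ∈ closure Ω, ∀ y ∈ closure Ω, |J x y| ≤ SJ' := fun x hx y hy =>
    le_trans (by simpa [Real.norm_eq_abs] using hSJ (x, y) ⟨hx, hy⟩) (le_max_left _ _)
  have hbG : ∀ x ∈ closure Ω, ∀ y ∈ closure Ω, |G x y| ≤ SG' := fun x hx y hy =>
    le_trans (by simpa [Real.norm_eq_abs] using hSG (x, y) ⟨hx, hy⟩) (le_max_left _ _)
  have hbR : ∀ x ∈ closure Ω, ∀ y ∈ closure Ω, |R x y| ≤ SR' := fun x hx y hy =>
    le_trans (by simpa [Real.norm_eq_abs] using hSR (x, y) ⟨hx, hy⟩) (le_max_left _ _)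
  set S := SJ' + SG' + 2 * SR' with hSdef
  have hS : 0 ≤ S := by
    have := le_max_right SJ (0:ℝ)
    have := le_max_right SG (0:ℝ)
    have := le_max_right SR (0:ℝ)
    rw [hSdef, hSJ', hSG', hSR']
    nlinarith [le_max_right SJ (0:ℝ), le_max_right SG (0:ℝ), le_max_right SR (0:ℝ)]
  -- the combined kernel and its truncation
  set W0 : (Fin N → ℝ) → (Fin N → ℝ) → ℝ := fun x y =>
    chi A x * chi A y * J x y + chi B x * chi B y * G x y
      + chi A x * chi B y * R x y + chi B x * chi A y * R x y with hW0
  set Wt : (Fin N → ℝ) → (Fin N → ℝ) → ℝ := fun x y =>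
    chi (closure Ω) x * chi (closure Ω) y * W0 x y with hWt
  have hmchiA : Measurable (chi A) := chi_measurable hAmeas
  have hmchiB : Measurable (chi B) := chi_measurable hBopen.measurableSet
  have hmchiK : Measurable (chi (closure Ω)) := chi_measurable isClosed_closure.measurableSet
  have hWtm : StronglyMeasurable (Function.uncurry Wt) := by
    apply Measurable.stronglyMeasurable
    have mJ : Measurable (fun p : (Fin N → ℝ) × (Fin N → ℝ) => J p.1 p.2) := hJ.1.measurable
    have mG : Measurable (fun p : (Fin N → ℝ) × (Fin N → ℝ) => G p.1 p.2) := hG.1.measurable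
    have mR : Measurable (fun p : (Fin N → ℝ) × (Fin N → ℝ) => R p.1 p.2) := hR.1.measurable
    have mA1 : Measurable (fun p : (Fin N → ℝ) × (Fin N → ℝ) => chi A p.1) :=
      hmchiA.comp measurable_fst
    have mA2 : Measurable (fun p : (Fin N → ℝ) × (Fin N → ℝ) => chi A p.2) :=
      hmchiA.comp measurable_snd
    have mB1 : Measurable (fun p : (Fin N → ℝ) × (Fin N → ℝ) => chi B p.1) :=
      hmchiB.comp measurable_fst
    have mB2 : Measurable (fun p : (Fin N → ℝ) × (Fin N → ℝ) => chi B p.2) :=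
      hmchiB.comp measurable_snd
    have mK1 : Measurable (fun p : (Fin N → ℝ) × (Fin N → ℝ) => chi (closure Ω) p.1) :=
      hmchiK.comp measurable_fst
    have mK2 : Measurable (fun p : (Fin N → ℝ) × (Fin N → ℝ) => chi (closure Ω) p.2) :=
      hmchiK.comp measurable_snd
    exact (mK1.mul mK2).mul
     ((((mA1.mul mA2).mul mJ).add ((mB1.mul mB2).mul mG)).add
        (((mA1.mul mB2).mul mR)) |>.add ((mB1.mul mA2).mul mR))
  have hWtb : ∀ x y, |Wt x y| ≤ S := by
    intro x y
    by_cases hx : x ∈ closure Ω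
    · by_cases hy : y ∈ closure Ω
      · have hW0b : |W0 x y| ≤ S := by
          simp only [hW0]
          have t1 : |chi A x * chi A y * J x y| ≤ SJ' :=
            mul3_abs_le (chi_abs_le_one _ _) (chi_abs_le_one _ _) (hbJ x hx y hy)
          have t2 : |chi B x * chi B y * G x y| ≤ SG' :=
            mul3_abs_le (chi_abs_le_one _ _) (chi_abs_le_one _ _) (hbG x hx y hy)
          have t3 : |chi A x * chi B y * R x y| ≤ SR' :=
            mul3_abs_le (chi_abs_le_one _ _) (chi_abs_le_one _ _) (hbR x hx y hy)
          have t4 : |chi B x * chi A y * R x y| ≤ SR' :=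
            mul3_abs_le (chi_abs_le_one _ _) (chi_abs_le_one _ _) (hbR x hx y hy)
          calc |chi A x * chi A y * J x y + chi B x * chi B y * G x y
              + chi A x * chi B y * R x y + chi B x * chi A y * R x y|
              ≤ |chi A x * chi A y * J x y + chi B x * chi B y * G x y
                + chi A x * chi B y * R x y| + |chi B x * chi A y * R x y| := abs_add_le _ _
          _ ≤ (|chi A x * chi A y * J x y + chi B x * chi B y * G x y|
                + |chi A x * chi B y * R x y|) + |chi B x * chi A y * R x y| := by
              have := abs_add_le (chi A x * chi A y * J x y + chi B x * chi B y * G x y)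
                (chi A x * chi B y * R x y)
              linarith
          _ ≤ ((|chi A x * chi A y * J x y| + |chi B x * chi B y * G x y|)
                + |chi A x * chi B y * R x y|) + |chi B x * chi A y * R x y| := by
              have := abs_add_le (chi A x * chi A y * J x y) (chi B x * chi B y * G x y)
              linarith
          _ ≤ S := by rw [hSdef]; linarith
        simp only [hWt]
        exact mul3_abs_le (chi_abs_le_one _ _) (chi_abs_le_one _ _) hW0b
      · simp only [hWt]
        simp only [chi_of_not_mem hy, mul_zero, zero_mul, abs_zero]
        exact hS
    · simp only [hWt]
      simp only [chi_of_not_mem hx, zero_mul, abs_zero]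
      exact hS
  -- single-term expansions of the set integrals appearing in Lop
  have hterm : ∀ (c : (Fin N → ℝ) → ℝ), (∀ y, |c y| ≤ 1) → Measurable c →
      ∀ (V : (Fin N → ℝ) → (Fin N → ℝ) → ℝ),
        Continuous (fun p : (Fin N → ℝ) × (Fin N → ℝ) => V p.1 p.2) →
      ∀ (f : (Fin N → ℝ) → ℝ), Integrable f ((volume : Measure (Fin N → ℝ)).restrict Ω) →
      ∀ x : Fin N → ℝ,
      Integrable (fun y => c y * V x y * f y) ((volume : Measure (Fin N → ℝ)).restrict Ω) ∧
      Integrable (fun y => c y * V x y) ((volume : Measure (Fin N → ℝ)).restrict Ω) ∧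
      (∫ y in Ω, c y * V x y * (f y - f x))
        = (∫ y in Ω, c y * V x y * f y) - (∫ y in Ω, c y * V x y) * f x := by
    intro c hc hcm V hV f hf x
    have hVyc : Continuous fun y => V x y := hV.comp (continuous_const.prodMk continuous_id)
    obtain ⟨Cx, hCx⟩ := hKc.exists_bound_of_continuousOn hVyc.continuousOn
    have haem : ∀ᵐ y ∂((volume : Measure (Fin N → ℝ)).restrict Ω), y ∈ Ω :=
      ae_restrict_mem hΩm
    have hsm2 : AEStronglyMeasurable (fun y => c y * V x y)
        ((volume : Measure (Fin N → ℝ)).restrict Ω) :=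
      (hcm.mul hVyc.measurable).aestronglyMeasurable
    have hbnd : ∀ᵐ y ∂((volume : Measure (Fin N → ℝ)).restrict Ω),
        ‖c y * V x y‖ ≤ max Cx 0 := by
      filter_upwards [haem] with y hy
      have h1 := hc y
      have h2 : ‖V x y‖ ≤ max Cx 0 :=
        le_trans (hCx y (subset_closure hy)) (le_max_left _ _)
      rw [norm_mul]
      calc ‖c y‖ * ‖V x y‖ ≤ 1 * (max Cx 0) := by
            refine mul_le_mul ?_ h2 (norm_nonneg _) (by norm_num)
            rw [Real.norm_eq_abs]; exact h1
      _ = max Cx 0 := one_mul _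
    have int2 : Integrable (fun y => c y * V x y)
        ((volume : Measure (Fin N → ℝ)).restrict Ω) :=
      (integrable_const (max Cx 0)).mono' hsm2 hbnd
    have int1 : Integrable (fun y => c y * V x y * f y)
        ((volume : Measure (Fin N → ℝ)).restrict Ω) := by
      refine (hf.norm.const_mul (max Cx 0)).mono' (hsm2.mul hf.1) ?_
      filter_upwards [hbnd] with y h1
      rw [norm_mul]
      exact mul_le_mul_of_nonneg_right h1 (norm_nonneg _)
    refine ⟨int1, int2, ?_⟩
    have e : ∀ y, c y * V x y * (f y - f x)
        = c y * V x y * f y - (c y * V x y) * f x := fun y => by ring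
    rw [integral_congr_ae (ae_of_all _ e), integral_sub int1 (int2.mul_const (f x)),
      integral_mul_const]
  -- Lop agrees with Kop of the truncated kernel
  have lop_eq : ∀ (f : (Fin N → ℝ) → ℝ),
      Integrable f ((volume : Measure (Fin N → ℝ)).restrict Ω) →
      ∀ x ∈ closure Ω,
      Lop Ω A B J G R f x = Kop ((volume : Measure (Fin N → ℝ)).restrict Ω) Wt f x := by
    intro f hf x hx
    obtain ⟨iJ1, iJ2, eJ⟩ := hterm (chi A) (chi_abs_le_one A) hmchiA J hJ.1 f hf x
    obtain ⟨iG1, iG2, eG⟩ := hterm (chi B) (chi_abs_le_one B) hmchiB G hG.1 f hf x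
    obtain ⟨iR1a, iR2a, eRa⟩ := hterm (chi B) (chi_abs_le_one B) hmchiB R hR.1 f hf x
    obtain ⟨iR1b, iR2b, eRb⟩ := hterm (chi A) (chi_abs_le_one A) hmchiA R hR.1 f hf x
    have haem : ∀ᵐ y ∂((volume : Measure (Fin N → ℝ)).restrict Ω), y ∈ Ω :=
      ae_restrict_mem hΩm
    have hchiKx : chi (closure Ω) x = 1 := chi_of_mem hx
    -- expansion of ∫ Wt x y * f y
    have hWtf : (∫ y in Ω, Wt x y * f y)
        = chi A x * (∫ y in Ω, chi A y * J x y * f y)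
          + chi B x * (∫ y in Ω, chi B y * G x y * f y)
          + chi A x * (∫ y in Ω, chi B y * R x y * f y)
          + chi B x * (∫ y in Ω, chi A y * R x y * f y) := by
      have e1 : ∀ᵐ y ∂((volume : Measure (Fin N → ℝ)).restrict Ω),
          Wt x y * f y = chi A x * (chi A y * J x y * f y)
            + chi B x * (chi B y * G x y * f y)
            + chi A x * (chi B y * R x y * f y)
            + chi B x * (chi A y * R x y * f y) := by
        filter_upwards [haem] with y hy
        simp only [hWt, hW0, hchiKx, chi_of_mem (subset_closure hy)]
        ring
      have i1 : Integrable (fun y => chi A x * (chi A y * J x y * f y))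
          ((volume : Measure (Fin N → ℝ)).restrict Ω) := iJ1.const_mul _
      have i2 : Integrable (fun y => chi B x * (chi B y * G x y * f y))
          ((volume : Measure (Fin N → ℝ)).restrict Ω) := iG1.const_mul _
      have i3 : Integrable (fun y => chi A x * (chi B y * R x y * f y))
          ((volume : Measure (Fin N → ℝ)).restrict Ω) := iR1a.const_mul _
      have i4 : Integrable (fun y => chi B x * (chi A y * R x y * f y))
          ((volume : Measure (Fin N → ℝ)).restrict Ω) := iR1b.const_mul _
      have i12 : Integrable (fun y => chi A x * (chi A y * J x y * f y)
          + chi B x * (chi B y * G x y * f y))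
          ((volume : Measure (Fin N → ℝ)).restrict Ω) := i1.add i2
      have i123 : Integrable (fun y => chi A x * (chi A y * J x y * f y)
          + chi B x * (chi B y * G x y * f y) + chi A x * (chi B y * R x y * f y))
          ((volume : Measure (Fin N → ℝ)).restrict Ω) := i12.add i3
      rw [integral_congr_ae e1, integral_add i123 i4, integral_add i12 i3,
        integral_add i1 i2,
        integral_const_mul, integral_const_mul, integral_const_mul, integral_const_mul]
    have hWt1 : (∫ y in Ω, Wt x y)
        = chi A x * (∫ y in Ω, chi A y * J x y)
          + chi B x * (∫ y in Ω, chi B y * G x y)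
          + chi A x * (∫ y in Ω, chi B y * R x y)
          + chi B x * (∫ y in Ω, chi A y * R x y) := by
      have e1 : ∀ᵐ y ∂((volume : Measure (Fin N → ℝ)).restrict Ω),
          Wt x y = chi A x * (chi A y * J x y)
            + chi B x * (chi B y * G x y)
            + chi A x * (chi B y * R x y)
            + chi B x * (chi A y * R x y) := by
        filter_upwards [haem] with y hy
        simp only [hWt, hW0, hchiKx, chi_of_mem (subset_closure hy)]
        ring
      have i1 : Integrable (fun y => chi A x * (chi A y * J x y))
          ((volume : Measure (Fin N → ℝ)).restrict Ω) := iJ2.const_mul _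
      have i2 : Integrable (fun y => chi B x * (chi B y * G x y))
          ((volume : Measure (Fin N → ℝ)).restrict Ω) := iG2.const_mul _
      have i3 : Integrable (fun y => chi A x * (chi B y * R x y))
          ((volume : Measure (Fin N → ℝ)).restrict Ω) := iR2a.const_mul _
      have i4 : Integrable (fun y => chi B x * (chi A y * R x y))
          ((volume : Measure (Fin N → ℝ)).restrict Ω) := iR2b.const_mul _
      have i12 : Integrable (fun y => chi A x * (chi A y * J x y)
          + chi B x * (chi B y * G x y))
          ((volume : Measure (Fin N → ℝ)).restrict Ω) := i1.add i2
      have i123 : Integrable (fun y => chi A x * (chi A y * J x y)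
          + chi B x * (chi B y * G x y) + chi A x * (chi B y * R x y))
          ((volume : Measure (Fin N → ℝ)).restrict Ω) := i12.add i3
      rw [integral_congr_ae e1, integral_add i123 i4, integral_add i12 i3,
        integral_add i1 i2,
        integral_const_mul, integral_const_mul, integral_const_mul, integral_const_mul]
    rw [Lop, Kop, hWtf, hWt1, eJ, eG, eRa, eRb]
    ring
  -- measurable representative of u0
  have hgm : StronglyMeasurable (hu0.1.mk u0) := hu0.1.stronglyMeasurable_mk
  have hgeq : u0 =ᵐ[(volume : Measure (Fin N → ℝ)).restrict Ω] hu0.1.mk u0 := hu0.1.ae_eq_mk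
  have hgL2 : MemLp (hu0.1.mk u0) 2 ((volume : Measure (Fin N → ℝ)).restrict Ω) :=
    hu0.ae_eq hgeq
  -- existence
  obtain ⟨u, hu_int, husm, humem, huequ⟩ :=
    exists_sol (μ := (volume : Measure (Fin N → ℝ)).restrict Ω) hWtm hWtb hS
      (hu0.1.mk u0) hgm hgL2 T hT
  have hae1 : ∀ᵐ p ∂(((volume : Measure ℝ).restrict (Set.Icc 0 T)).prod
      ((volume : Measure (Fin N → ℝ)).restrict Ω)), p.1 ∈ Icc (0:ℝ) T :=
    ae_prod_fst' _ _ (ae_restrict_mem measurableSet_Icc)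
  have hae2 : ∀ᵐ p ∂(((volume : Measure ℝ).restrict (Set.Icc 0 T)).prod
      ((volume : Measure (Fin N → ℝ)).restrict Ω)), p.2 ∈ Ω :=
    ae_prod_snd' _ _ (ae_restrict_mem hΩm)
  have hae3 : ∀ᵐ p ∂(((volume : Measure ℝ).restrict (Set.Icc 0 T)).prod
      ((volume : Measure (Fin N → ℝ)).restrict Ω)), u0 p.2 = hu0.1.mk u0 p.2 :=
    ae_prod_snd' _ _ hgeq
  refine ⟨u, humem, ?_, ?_⟩
  · filter_upwards [hae1, hae2, hae3] with p hp1 hp2 hp3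
    rw [huequ p.1 hp1 p.2, hp3]
    congr 1
    refine integral_congr_ae (ae_of_all _ fun s => ?_)
    exact (lop_eq (u s) (hu_int s) p.2 (subset_closure hp2)).symm
  · intro v hvmem hveq
    have hvinsl : ∀ᵐ s ∂((volume : Measure ℝ).restrict (Set.Icc 0 T)),
        Integrable (v s) ((volume : Measure (Fin N → ℝ)).restrict Ω) :=
      (hvmem.integrable one_le_two).prod_right_ae
    have hvins : ∀ᵐ s ∂(volume : Measure ℝ), s ∈ Icc (0:ℝ) T →
        Integrable (v s) ((volume : Measure (Fin N → ℝ)).restrict Ω) := by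
      rwa [ae_restrict_iff' measurableSet_Icc] at hvinsl
    have hveq' : ∀ᵐ p ∂(((volume : Measure ℝ).restrict (Set.Icc 0 T)).prod
        ((volume : Measure (Fin N → ℝ)).restrict Ω)),
        v p.1 p.2 = hu0.1.mk u0 p.2
          + ∫ s in Ioc (0:ℝ) p.1, Kop ((volume : Measure (Fin N → ℝ)).restrict Ω) Wt (v s) p.2 := by
      filter_upwards [hveq, hae1, hae2, hae3] with p e0 hp1 hp2 hp3
      rw [e0, hp3]
      congr 1
      refine integral_congr_ae ?_
      have h1 : ∀ᵐ s ∂((volume : Measure ℝ).restrict (Ioc 0 p.1)), s ∈ Icc (0:ℝ) T →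
          Integrable (v s) ((volume : Measure (Fin N → ℝ)).restrict Ω) :=
        ae_restrict_of_ae hvins
      filter_upwards [h1, ae_restrict_mem measurableSet_Ioc] with s hs1 hs2
      exact lop_eq (v s) (hs1 ⟨le_of_lt hs2.1, le_trans hs2.2 hp1.2⟩) p.2
        (subset_closure hp2)
    have huequ' : ∀ᵐ p ∂(((volume : Measure ℝ).restrict (Set.Icc 0 T)).prod
        ((volume : Measure (Fin N → ℝ)).restrict Ω)),
        u p.1 p.2 = hu0.1.mk u0 p.2
          + ∫ s in Ioc (0:ℝ) p.1, Kop ((volume : Measure (Fin N → ℝ)).restrict Ω) Wt (u s) p.2 := by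
      filter_upwards [hae1] with p hp1
      exact huequ p.1 hp1 p.2
    exact uniq_sol hWtm hWtb hS T hT (hu0.1.mk u0) u v humem hvmem huequ' hveq'
end

section
/- Fix n, u_0 ∈ L²(Ω), and set C = (‖J‖_∞ + 2‖R‖_∞ + ‖G‖_∞)². Define Φ on L²(Ω × [0,t_0]) by Φ(u)(t,x) = u_0(x) + ∫_0^t L_n u(s,·)(x) ds. Then for all u, v ∈ L²(Ω × [0,t_0]) and all t ∈ [0,t_0], ∫_Ω |Φ(u)(t,x) − Φ(v)(t,x)|² dx ≤ 4 C t² |Ω|² · sup_{s∈[0,t_0]} ∫_Ω |u(s,x) − v(s,x)|² dx. Consequently, if t_0 < 1/(2|Ω|√C), then Φ is a contraction on L²(Ω × [0,t_0]) equipped with the norm ‖f‖_{2,∞} = sup_{t∈[0,t_0]} (∫_Ω f(t,x)² dx)^{1/2}. -/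
open MeasureTheory Set Filter Topology Bornology

/-- The fixed point map `Φ` of the integral formulation of the evolution problem. -/
noncomputable def Phi {N : ℕ} (Ω A B : Set (Fin N → ℝ))
    (J G R : (Fin N → ℝ) → (Fin N → ℝ) → ℝ) (u0 : (Fin N → ℝ) → ℝ)
    (u : ℝ → (Fin N → ℝ) → ℝ) (t : ℝ) (x : Fin N → ℝ) : ℝ :=
  u0 x + ∫ s in Set.Ioc (0 : ℝ) t, Lop Ω A B J G R (u s) x

section Aux

variable {N : ℕ}

lemma chi_nonneg_s4 (P : Set (Fin N → ℝ)) (x : Fin N → ℝ) : 0 ≤ chi P x := by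
  unfold chi; split <;> norm_num

lemma chi_le_one (P : Set (Fin N → ℝ)) (x : Fin N → ℝ) : chi P x ≤ 1 := by
  unfold chi; split <;> norm_num

lemma abs_chi_le_one (P : Set (Fin N → ℝ)) (x : Fin N → ℝ) : |chi P x| ≤ 1 := by
  rw [abs_of_nonneg (chi_nonneg_s4 P x)]; exact chi_le_one P x

lemma measurable_chi {P : Set (Fin N → ℝ)} (hP : MeasurableSet P) : Measurable (chi P) := by
  have h : chi P = P.indicator (fun _ => (1:ℝ)) := by
    funext x
    by_cases h : x ∈ P <;> simp [chi, h]
  rw [h]; exact measurable_const.indicator hP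

variable {Ω : Set (Fin N → ℝ)}

lemma kernel_abs_le (hΩb : IsBounded Ω) {K : (Fin N → ℝ) → (Fin N → ℝ) → ℝ}
    (hK : Continuous fun p : (Fin N → ℝ) × (Fin N → ℝ) => K p.1 p.2)
    {x y : Fin N → ℝ} (hx : x ∈ closure Ω) (hy : y ∈ closure Ω) :
    |K x y| ≤ sSup ((fun p : (Fin N → ℝ) × (Fin N → ℝ) => |K p.1 p.2|) ''
      (closure Ω ×ˢ closure Ω)) := by
  apply le_csSup
  · exact ((hΩb.isCompact_closure.prod hΩb.isCompact_closure).bddAbove_image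
      hK.abs.continuousOn)
  · exact ⟨(x, y), ⟨hx, hy⟩, rfl⟩

lemma kernel_sSup_nonneg (hΩb : IsBounded Ω) (hne : Ω.Nonempty)
    {K : (Fin N → ℝ) → (Fin N → ℝ) → ℝ}
    (hK : Continuous fun p : (Fin N → ℝ) × (Fin N → ℝ) => K p.1 p.2) :
    0 ≤ sSup ((fun p : (Fin N → ℝ) × (Fin N → ℝ) => |K p.1 p.2|) ''
      (closure Ω ×ˢ closure Ω)) := by
  obtain ⟨x0, hx0⟩ := hne
  exact (abs_nonneg _).trans
    (kernel_abs_le hΩb hK (subset_closure hx0) (subset_closure hx0))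

lemma piece_integrable (hΩo : IsOpen Ω) (hΩb : IsBounded Ω)
    {K : (Fin N → ℝ) → (Fin N → ℝ) → ℝ}
    (hK : Continuous fun p : (Fin N → ℝ) × (Fin N → ℝ) => K p.1 p.2)
    {P : Set (Fin N → ℝ)} (hP : MeasurableSet P)
    {f : (Fin N → ℝ) → ℝ} (hf : Integrable f (volume.restrict Ω))
    {x : Fin N → ℝ} (hx : x ∈ closure Ω) :
    Integrable (fun y => chi P y * K x y * (f y - f x)) (volume.restrict Ω) ∧
    |∫ y in Ω, chi P y * K x y * (f y - f x)| ≤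
      (sSup ((fun p : (Fin N → ℝ) × (Fin N → ℝ) => |K p.1 p.2|) ''
        (closure Ω ×ˢ closure Ω))) * ((∫ y in Ω, |f y|) + (volume Ω).toReal * |f x|) := by
  haveI : IsFiniteMeasure (volume.restrict Ω) :=
    ⟨by rw [Measure.restrict_apply_univ]; exact hΩb.measure_lt_top⟩
  set MK := sSup ((fun p : (Fin N → ℝ) × (Fin N → ℝ) => |K p.1 p.2|) ''
      (closure Ω ×ˢ closure Ω)) with hMK
  have hdom : Integrable (fun y => MK * (|f y| + |f x|)) (volume.restrict Ω) :=
    (hf.abs.add (integrable_const _)).const_mul MK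
  have haesm : AEStronglyMeasurable (fun y => chi P y * K x y * (f y - f x))
      (volume.restrict Ω) := by
    refine AEStronglyMeasurable.mul ?_ (hf.1.sub aestronglyMeasurable_const)
    exact ((measurable_chi hP).mul
      ((hK.comp (continuous_const.prodMk continuous_id)).measurable)).aestronglyMeasurable
  have hbd : ∀ᵐ y ∂(volume.restrict Ω),
      ‖chi P y * K x y * (f y - f x)‖ ≤ MK * (|f y| + |f x|) := by
    filter_upwards [ae_restrict_mem hΩo.measurableSet] with y hy
    have h1 : |K x y| ≤ MK := kernel_abs_le hΩb hK hx (subset_closure hy)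
    have h2 : |f y - f x| ≤ |f y| + |f x| := abs_sub _ _
    have h3 : (0:ℝ) ≤ |f y| + |f x| := by positivity
    calc ‖chi P y * K x y * (f y - f x)‖ = |chi P y| * |K x y| * |f y - f x| := by
          rw [Real.norm_eq_abs, abs_mul, abs_mul]
      _ ≤ 1 * MK * (|f y| + |f x|) := by
          apply mul_le_mul _ h2 (abs_nonneg _) _
          · exact mul_le_mul (abs_chi_le_one P y) h1 (abs_nonneg _) zero_le_one
          · exact mul_nonneg zero_le_one ((abs_nonneg _).trans h1)
      _ = MK * (|f y| + |f x|) := by ring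
  have hint : Integrable (fun y => chi P y * K x y * (f y - f x)) (volume.restrict Ω) :=
    hdom.mono' haesm hbd
  refine ⟨hint, ?_⟩
  calc |∫ y in Ω, chi P y * K x y * (f y - f x)|
      ≤ ∫ y in Ω, ‖chi P y * K x y * (f y - f x)‖ := by
        rw [← Real.norm_eq_abs]; exact norm_integral_le_integral_norm _
    _ ≤ ∫ y in Ω, MK * (|f y| + |f x|) :=
        integral_mono_of_nonneg (ae_of_all _ fun y => norm_nonneg _) hdom hbd
    _ = MK * ((∫ y in Ω, |f y|) + (volume Ω).toReal * |f x|) := by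
        rw [integral_const_mul, integral_add hf.abs (integrable_const _), integral_const, measureReal_def,
          Measure.restrict_apply_univ, smul_eq_mul]

end Aux
section Aux2

variable {N : ℕ} {Ω A B : Set (Fin N → ℝ)}
  {J G R : (Fin N → ℝ) → (Fin N → ℝ) → ℝ}

lemma Lop_abs_le (hΩo : IsOpen Ω) (hΩb : IsBounded Ω)
    (hJc : Continuous fun p : (Fin N → ℝ) × (Fin N → ℝ) => J p.1 p.2)
    (hGc : Continuous fun p : (Fin N → ℝ) × (Fin N → ℝ) => G p.1 p.2)
    (hRc : Continuous fun p : (Fin N → ℝ) × (Fin N → ℝ) => R p.1 p.2)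
    (hA : MeasurableSet A) (hB : MeasurableSet B)
    {f : (Fin N → ℝ) → ℝ} (hf : Integrable f (volume.restrict Ω))
    {x : Fin N → ℝ} (hx : x ∈ closure Ω) :
    |Lop Ω A B J G R f x| ≤
      (sSup ((fun p : (Fin N → ℝ) × (Fin N → ℝ) => |J p.1 p.2|) '' (closure Ω ×ˢ closure Ω))
        + 2 * sSup ((fun p : (Fin N → ℝ) × (Fin N → ℝ) => |R p.1 p.2|) '' (closure Ω ×ˢ closure Ω))
        + sSup ((fun p : (Fin N → ℝ) × (Fin N → ℝ) => |G p.1 p.2|) '' (closure Ω ×ˢ closure Ω)))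
        * ((∫ y in Ω, |f y|) + (volume Ω).toReal * |f x|) := by
  set MJ := sSup ((fun p : (Fin N → ℝ) × (Fin N → ℝ) => |J p.1 p.2|) '' (closure Ω ×ˢ closure Ω))
  set MR := sSup ((fun p : (Fin N → ℝ) × (Fin N → ℝ) => |R p.1 p.2|) '' (closure Ω ×ˢ closure Ω))
  set MG := sSup ((fun p : (Fin N → ℝ) × (Fin N → ℝ) => |G p.1 p.2|) '' (closure Ω ×ˢ closure Ω))
  set T := (∫ y in Ω, |f y|) + (volume Ω).toReal * |f x| with hT
  have b1 := (piece_integrable hΩo hΩb hJc hA hf hx).2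
  have b2 := (piece_integrable hΩo hΩb hGc hB hf hx).2
  have b3 := (piece_integrable hΩo hΩb hRc hB hf hx).2
  have b4 := (piece_integrable hΩo hΩb hRc hA hf hx).2
  have key : ∀ (P : Set (Fin N → ℝ)) (K : (Fin N → ℝ) → (Fin N → ℝ) → ℝ) (MK : ℝ),
      |∫ y in Ω, chi P y * K x y * (f y - f x)| ≤ MK * T →
      |chi P x * ∫ y in Ω, chi P y * K x y * (f y - f x)| ≤ MK * T := by
    intro P K MK h
    rw [abs_mul]
    calc |chi P x| * |∫ y in Ω, chi P y * K x y * (f y - f x)| ≤ 1 * (MK * T) :=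
        mul_le_mul (abs_chi_le_one P x) h (abs_nonneg _) zero_le_one
      _ = MK * T := one_mul _
  have key' : ∀ (P Q : Set (Fin N → ℝ)) (K : (Fin N → ℝ) → (Fin N → ℝ) → ℝ) (MK : ℝ),
      |∫ y in Ω, chi Q y * K x y * (f y - f x)| ≤ MK * T →
      |chi P x * ∫ y in Ω, chi Q y * K x y * (f y - f x)| ≤ MK * T := by
    intro P Q K MK h
    rw [abs_mul]
    calc |chi P x| * |∫ y in Ω, chi Q y * K x y * (f y - f x)| ≤ 1 * (MK * T) :=
        mul_le_mul (abs_chi_le_one P x) h (abs_nonneg _) zero_le_one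
      _ = MK * T := one_mul _
  have h1 := key' A A J MJ b1
  have h2 := key' B B G MG b2
  have h3 := key' A B R MR b3
  have h4 := key' B A R MR b4
  unfold Lop
  have habs : ∀ a b c d : ℝ, |a + b + c + d| ≤ |a| + |b| + |c| + |d| := by
    intro a b c d
    calc |a + b + c + d| ≤ |a + b + c| + |d| := abs_add_le _ _
      _ ≤ |a + b| + |c| + |d| := by have := abs_add_le (a+b) c; linarith
      _ ≤ |a| + |b| + |c| + |d| := by have := abs_add_le a b; linarith
  refine le_trans (habs _ _ _ _) ?_
  nlinarith [h1, h2, h3, h4]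

lemma Lop_sub (hΩo : IsOpen Ω) (hΩb : IsBounded Ω)
    (hJc : Continuous fun p : (Fin N → ℝ) × (Fin N → ℝ) => J p.1 p.2)
    (hGc : Continuous fun p : (Fin N → ℝ) × (Fin N → ℝ) => G p.1 p.2)
    (hRc : Continuous fun p : (Fin N → ℝ) × (Fin N → ℝ) => R p.1 p.2)
    (hA : MeasurableSet A) (hB : MeasurableSet B)
    {f g : (Fin N → ℝ) → ℝ} (hf : Integrable f (volume.restrict Ω))
    (hg : Integrable g (volume.restrict Ω))
    {x : Fin N → ℝ} (hx : x ∈ closure Ω) :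
    Lop Ω A B J G R f x - Lop Ω A B J G R g x
      = Lop Ω A B J G R (fun y => f y - g y) x := by
  have key : ∀ (K : (Fin N → ℝ) → (Fin N → ℝ) → ℝ),
      (Continuous fun p : (Fin N → ℝ) × (Fin N → ℝ) => K p.1 p.2) →
      ∀ (P : Set (Fin N → ℝ)), MeasurableSet P →
      (∫ y in Ω, chi P y * K x y * ((fun y => f y - g y) y - (fun y => f y - g y) x))
        = (∫ y in Ω, chi P y * K x y * (f y - f x))
          - ∫ y in Ω, chi P y * K x y * (g y - g x) := by
    intro K hK P hP
    rw [← integral_sub (piece_integrable hΩo hΩb hK hP hf hx).1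
      (piece_integrable hΩo hΩb hK hP hg hx).1]
    apply integral_congr_ae
    filter_upwards with y
    ring
  unfold Lop
  rw [key J hJc A hA, key G hGc B hB, key R hRc B hB, key R hRc A hA]
  ring

lemma Lop_congr {f f' : (Fin N → ℝ) → ℝ} {x : Fin N → ℝ}
    (hae : f =ᵐ[volume.restrict Ω] f') (hx : f x = f' x) :
    Lop Ω A B J G R f x = Lop Ω A B J G R f' x := by
  have key : ∀ K : (Fin N → ℝ) → (Fin N → ℝ) → ℝ, ∀ P : Set (Fin N → ℝ),
      (∫ y in Ω, chi P y * K x y * (f y - f x))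
        = ∫ y in Ω, chi P y * K x y * (f' y - f' x) := by
    intro K P
    apply integral_congr_ae
    filter_upwards [hae] with y hy
    rw [hy, hx]
  unfold Lop
  rw [key J A, key G B, key R B, key R A]

lemma Lop_meas_param (hA : MeasurableSet A) (hB : MeasurableSet B)
    (hJc : Continuous fun p : (Fin N → ℝ) × (Fin N → ℝ) => J p.1 p.2)
    (hGc : Continuous fun p : (Fin N → ℝ) × (Fin N → ℝ) => G p.1 p.2)
    (hRc : Continuous fun p : (Fin N → ℝ) × (Fin N → ℝ) => R p.1 p.2)
    {W : ℝ × (Fin N → ℝ) → ℝ} (hW : StronglyMeasurable W)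
    (θ : Measure ℝ) [SFinite θ] (x : Fin N → ℝ) :
    AEStronglyMeasurable (fun s => Lop Ω A B J G R (fun y => W (s, y)) x) θ := by
  have key : ∀ (K : (Fin N → ℝ) → (Fin N → ℝ) → ℝ),
      (Continuous fun p : (Fin N → ℝ) × (Fin N → ℝ) => K p.1 p.2) →
      ∀ (P : Set (Fin N → ℝ)), MeasurableSet P →
      AEStronglyMeasurable
        (fun s => ∫ y in Ω, chi P y * K x y * (W (s, y) - W (s, x))) θ := by
    intro K hK P hP
    have hFm : AEStronglyMeasurable
        (fun q : ℝ × (Fin N → ℝ) => chi P q.2 * K x q.2 * (W q - W (q.1, x)))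
        (θ.prod (volume.restrict Ω)) := by
      apply Measurable.aestronglyMeasurable
      exact (((measurable_chi hP).comp measurable_snd).mul
        (((hK.comp (continuous_const.prodMk continuous_id)).measurable).comp
          measurable_snd)).mul
        (hW.measurable.sub (hW.measurable.comp (measurable_fst.prodMk measurable_const)))
    exact hFm.integral_prod_right'
  unfold Lop
  exact ((((key J hJc A hA).const_mul _).add ((key G hGc B hB).const_mul _)).add
    ((key R hRc B hB).const_mul _)).add ((key R hRc A hA).const_mul _)

lemma sq_integral_abs_le {α : Type*} [MeasurableSpace α] (μ : Measure α) [IsFiniteMeasure μ]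
    {φ : α → ℝ} (hφ : MemLp φ 2 μ) :
    (∫ a, |φ a| ∂μ) ^ 2 ≤ (μ Set.univ).toReal * ∫ a, (φ a) ^ 2 ∂μ := by
  have hpq : Real.HolderConjugate 2 2 := ⟨by norm_num, by norm_num, by norm_num⟩
  have habs : MemLp (fun a => |φ a|) (ENNReal.ofReal 2) μ := by
    have : ENNReal.ofReal 2 = 2 := by norm_num
    rw [this]
    simpa [Real.norm_eq_abs] using hφ.norm
  have hone : MemLp (fun _ : α => (1:ℝ)) (ENNReal.ofReal 2) μ := memLp_const 1
  have h := integral_mul_le_Lp_mul_Lq_of_nonneg hpq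
    (ae_of_all _ fun a => abs_nonneg (φ a)) (ae_of_all _ fun _ : α => zero_le_one)
    habs hone
  simp only [mul_one, Real.one_rpow] at h
  have hsq : ∀ a, |φ a| ^ (2:ℝ) = (φ a)^2 := by
    intro a
    rw [show (2:ℝ) = ((2:ℕ):ℝ) by norm_num, Real.rpow_natCast, sq_abs]
  rw [show (fun a => |φ a| ^ (2:ℝ)) = fun a => (φ a)^2 from funext hsq] at h
  rw [integral_const, measureReal_def, smul_eq_mul, mul_one] at h
  set I2 := ∫ a, (φ a)^2 ∂μ with hI2def
  set m := (μ Set.univ).toReal with hmdef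
  have hI2 : 0 ≤ I2 := integral_nonneg fun a => sq_nonneg _
  have hm : 0 ≤ m := ENNReal.toReal_nonneg
  have h0 : 0 ≤ ∫ a, |φ a| ∂μ := integral_nonneg fun a => abs_nonneg _
  calc (∫ a, |φ a| ∂μ)^2 ≤ (I2^(1/2:ℝ) * m^(1/2:ℝ))^2 := pow_le_pow_left₀ h0 h 2
    _ = I2 * m := by
        rw [mul_pow, ← Real.rpow_natCast (I2 ^ (1/2:ℝ)) 2,
          ← Real.rpow_natCast (m ^ (1/2:ℝ)) 2, ← Real.rpow_mul hI2, ← Real.rpow_mul hm]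
        norm_num
    _ = m * I2 := mul_comm _ _

end Aux2
lemma key_estimate {N : ℕ} {Ω A B : Set (Fin N → ℝ)}
    {J G R : (Fin N → ℝ) → (Fin N → ℝ) → ℝ}
    (hΩo : IsOpen Ω) (hΩb : IsBounded Ω)
    (hJc : Continuous fun p : (Fin N → ℝ) × (Fin N → ℝ) => J p.1 p.2)
    (hGc : Continuous fun p : (Fin N → ℝ) × (Fin N → ℝ) => G p.1 p.2)
    (hRc : Continuous fun p : (Fin N → ℝ) × (Fin N → ℝ) => R p.1 p.2)
    (hA : MeasurableSet A) (hB : MeasurableSet B)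
    {M : ℝ} (hM0 : 0 ≤ M)
    (hbd : ∀ {f : (Fin N → ℝ) → ℝ}, Integrable f (volume.restrict Ω) → ∀ x ∈ closure Ω,
      |Lop Ω A B J G R f x| ≤ M * ((∫ y in Ω, |f y|) + (volume Ω).toReal * |f x|))
    {t0 : ℝ} (ht0 : 0 < t0)
    {U V : ℝ × (Fin N → ℝ) → ℝ}
    (hUm : StronglyMeasurable U) (hVm : StronglyMeasurable V)
    (hU2 : MemLp U 2 (((volume : Measure ℝ).restrict (Icc 0 t0)).prod (volume.restrict Ω)))
    (hV2 : MemLp V 2 (((volume : Measure ℝ).restrict (Icc 0 t0)).prod (volume.restrict Ω)))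
    {S : ℝ} (hS0 : 0 ≤ S)
    (hSb : ∀ᵐ s ∂((volume : Measure ℝ).restrict (Icc 0 t0)),
        (∫ x in Ω, (U (s, x) - V (s, x)) ^ 2) ≤ S)
    {t : ℝ} (ht : t ∈ Icc (0:ℝ) t0) :
    (∫ x in Ω, ((∫ s in Ioc (0:ℝ) t, Lop Ω A B J G R (fun y => U (s, y)) x)
        - ∫ s in Ioc (0:ℝ) t, Lop Ω A B J G R (fun y => V (s, y)) x) ^ 2) ≤
      4 * M ^ 2 * t ^ 2 * ((volume Ω).toReal) ^ 2 * S := by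
  classical
  obtain ⟨ht1, ht2⟩ := ht
  set μ := volume.restrict Ω with hμdef
  set ν := (volume : Measure ℝ).restrict (Icc 0 t0) with hνdef
  set νt := (volume : Measure ℝ).restrict (Ioc 0 t) with hνtdef
  haveI hμfin : IsFiniteMeasure μ :=
    ⟨by rw [hμdef, Measure.restrict_apply_univ]; exact hΩb.measure_lt_top⟩
  haveI hνfin : IsFiniteMeasure ν :=
    ⟨by rw [hνdef, Measure.restrict_apply_univ]; exact isCompact_Icc.measure_lt_top⟩
  haveI hνtfin : IsFiniteMeasure νt :=
    ⟨by rw [hνtdef, Measure.restrict_apply_univ]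
        exact (measure_mono Ioc_subset_Icc_self).trans_lt isCompact_Icc.measure_lt_top⟩
  have hIocSub : Ioc (0:ℝ) t ⊆ Icc (0:ℝ) t0 := fun s hs => ⟨hs.1.le, hs.2.trans ht2⟩
  have hνt_le : νt ≤ ν := Measure.restrict_mono hIocSub le_rfl
  set m := (volume Ω).toReal with hmdef
  have hm0 : 0 ≤ m := ENNReal.toReal_nonneg
  have hνtuniv : (νt Set.univ).toReal = t := by
    rw [hνtdef, Measure.restrict_apply_univ, Real.volume_Ioc, sub_zero,
      ENNReal.toReal_ofReal ht1]
  set W : ℝ × (Fin N → ℝ) → ℝ := fun q => U q - V q with hWdef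
  have hWm : StronglyMeasurable W := hUm.sub hVm
  have hW2 : MemLp W 2 (ν.prod μ) := hU2.sub hV2
  have hW1 : Integrable W (ν.prod μ) := hW2.integrable one_le_two
  have hWsq : Integrable (fun q => W q ^ 2) (ν.prod μ) := hW2.integrable_sq
  have hprod_eq : νt.prod μ = (ν.prod μ).restrict (Ioc 0 t ×ˢ Set.univ) := by
    rw [hνdef, hνtdef, hμdef, ← Measure.prod_restrict,
      Measure.restrict_restrict measurableSet_Ioc, Measure.restrict_univ,
      Set.inter_eq_left.mpr hIocSub]
  have hW1t : Integrable W (νt.prod μ) := by rw [hprod_eq]; exact hW1.restrict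
  have hWsqt : Integrable (fun q => W q ^ 2) (νt.prod μ) := by
    rw [hprod_eq]; exact hWsq.restrict
  -- a s = ∫ |W (s,y)| dy ; c s = ∫ W (s,x)^2 dx
  set a : ℝ → ℝ := fun s => ∫ y in Ω, |W (s, y)| with hadef
  have ha_nonneg : ∀ s, 0 ≤ a s := fun s => integral_nonneg fun y => abs_nonneg _
  have haint : Integrable a ν := by
    have h := hW1.integral_norm_prod_left
    simpa [Real.norm_eq_abs] using h
  have haintt : Integrable a νt := haint.mono_measure hνt_le
  set c : ℝ → ℝ := fun s => ∫ x in Ω, W (s, x) ^ 2 with hcdef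
  have hc_nonneg : ∀ s, 0 ≤ c s := fun s => integral_nonneg fun _ => sq_nonneg _
  have hcint : Integrable c ν := by
    have h := hWsq.integral_norm_prod_left
    simpa [Real.norm_eq_abs, abs_pow, sq_abs] using h
  have hcintt : Integrable c νt := hcint.mono_measure hνt_le
  -- a.e.-s integrable slices
  have hae_sliceU : ∀ᵐ s ∂ν, Integrable (fun y => U (s, y)) μ :=
    (hU2.integrable one_le_two).prod_right_ae
  have hae_sliceV : ∀ᵐ s ∂ν, Integrable (fun y => V (s, y)) μ :=
    (hV2.integrable one_le_two).prod_right_ae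
  have hae_slice : ∀ᵐ s ∂ν, Integrable (fun y => W (s, y)) μ := hW1.prod_right_ae
  have hae_sliceSq : ∀ᵐ s ∂ν, Integrable (fun y => W (s, y) ^ 2) μ := hWsq.prod_right_ae
  -- Cauchy-Schwarz in y
  have hacs : ∀ᵐ s ∂ν, a s ^ 2 ≤ m * c s := by
    filter_upwards [hae_sliceSq] with s hs
    have hsm : AEStronglyMeasurable (fun y => W (s, y)) μ :=
      (hWm.measurable.comp (measurable_const.prodMk measurable_id)).aestronglyMeasurable
    have hL2 : MemLp (fun y => W (s, y)) 2 μ := (memLp_two_iff_integrable_sq hsm).mpr hs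
    have h := sq_integral_abs_le μ hL2
    rw [hμdef, Measure.restrict_apply_univ] at h
    exact h
  -- key a.e. facts (in s)
  have haeS : ∀ᵐ s ∂ν,
      (∀ x ∈ closure Ω,
        Lop Ω A B J G R (fun y => U (s, y)) x - Lop Ω A B J G R (fun y => V (s, y)) x
          = Lop Ω A B J G R (fun y => W (s, y)) x) ∧
      (∀ x ∈ closure Ω,
        |Lop Ω A B J G R (fun y => W (s, y)) x| ≤ M * (a s + m * |W (s, x)|)) := by
    filter_upwards [hae_slice, hae_sliceU, hae_sliceV] with s h1 h2 h3
    constructor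
    · intro x hx
      exact Lop_sub hΩo hΩb hJc hGc hRc hA hB h2 h3 hx
    · intro x hx
      exact hbd h1 x hx
  -- x-sliced integrability
  have haex1 : ∀ᵐ x ∂μ, Integrable (fun s => W (s, x)) ν := hW1.prod_left_ae
  have haex2 : ∀ᵐ x ∂μ, Integrable (fun s => W (s, x) ^ 2) ν := hWsq.prod_left_ae
  have hLwm : ∀ x, AEStronglyMeasurable
      (fun s => Lop Ω A B J G R (fun y => W (s, y)) x) νt := fun x =>
    Lop_meas_param hA hB hJc hGc hRc hWm νt x
  -- pointwise (a.e.-x) estimate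
  have hkey : ∀ᵐ x ∂μ,
      ((∫ s in Ioc (0:ℝ) t, Lop Ω A B J G R (fun y => U (s, y)) x)
        - ∫ s in Ioc (0:ℝ) t, Lop Ω A B J G R (fun y => V (s, y)) x) ^ 2 ≤
      2 * M ^ 2 * (∫ s in Ioc (0:ℝ) t, a s) ^ 2
        + 2 * M ^ 2 * m ^ 2 * t * ∫ s in Ioc (0:ℝ) t, W (s, x) ^ 2 := by
    filter_upwards [haex1, haex2, ae_restrict_mem hΩo.measurableSet] with x hx1 hx2 hxΩ
    have hxcl : x ∈ closure Ω := subset_closure hxΩ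
    have haeSt := haeS.filter_mono (ae_mono hνt_le)
    have hx1t : Integrable (fun s => W (s, x)) νt := hx1.mono_measure hνt_le
    have hx2t : Integrable (fun s => W (s, x) ^ 2) νt := hx2.mono_measure hνt_le
    have hdom : Integrable (fun s => M * (a s + m * |W (s, x)|)) νt :=
      ((haintt.add ((hx1t.abs).const_mul m)).const_mul M)
    have hLw_bd : ∀ᵐ s ∂νt,
        ‖Lop Ω A B J G R (fun y => W (s, y)) x‖ ≤ M * (a s + m * |W (s, x)|) := by
      filter_upwards [haeSt] with s hs
      rw [Real.norm_eq_abs]; exact hs.2 x hxcl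
    have hLw_int : Integrable (fun s => Lop Ω A B J G R (fun y => W (s, y)) x) νt :=
      hdom.mono' (hLwm x) hLw_bd
    have hcongr : (fun s => Lop Ω A B J G R (fun y => V (s, y)) x)
        =ᵐ[νt] fun s => Lop Ω A B J G R (fun y => U (s, y)) x
          - Lop Ω A B J G R (fun y => W (s, y)) x := by
      filter_upwards [haeSt] with s hs
      have := hs.1 x hxcl; linarith
    have habs : |(∫ s in Ioc (0:ℝ) t, Lop Ω A B J G R (fun y => U (s, y)) x)
        - ∫ s in Ioc (0:ℝ) t, Lop Ω A B J G R (fun y => V (s, y)) x|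
        ≤ ∫ s in Ioc (0:ℝ) t, |Lop Ω A B J G R (fun y => W (s, y)) x| := by
      by_cases hui : Integrable (fun s => Lop Ω A B J G R (fun y => U (s, y)) x) νt
      · have hvi : Integrable (fun s => Lop Ω A B J G R (fun y => V (s, y)) x) νt :=
          ((hui.sub hLw_int).congr hcongr.symm)
        rw [← integral_sub hui hvi]
        have heq : (∫ s in Ioc (0:ℝ) t, (Lop Ω A B J G R (fun y => U (s, y)) x
            - Lop Ω A B J G R (fun y => V (s, y)) x))
            = ∫ s in Ioc (0:ℝ) t, Lop Ω A B J G R (fun y => W (s, y)) x :=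
          integral_congr_ae (by filter_upwards [haeSt] with s hs; exact hs.1 x hxcl)
        rw [heq]
        simpa [Real.norm_eq_abs] using
          norm_integral_le_integral_norm (μ := νt) (fun s => Lop Ω A B J G R (fun y => W (s, y)) x)
      · have hvi : ¬ Integrable (fun s => Lop Ω A B J G R (fun y => V (s, y)) x) νt := by
          intro hvi
          apply hui
          have : (fun s => Lop Ω A B J G R (fun y => V (s, y)) x
              + Lop Ω A B J G R (fun y => W (s, y)) x)
              =ᵐ[νt] fun s => Lop Ω A B J G R (fun y => U (s, y)) x := by
            filter_upwards [haeSt] with s hs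
            have := hs.1 x hxcl; linarith
          exact (hvi.add hLw_int).congr this
        rw [integral_undef hui, integral_undef hvi, sub_zero, abs_zero]
        exact integral_nonneg fun s => abs_nonneg _
    have h2 : |(∫ s in Ioc (0:ℝ) t, Lop Ω A B J G R (fun y => U (s, y)) x)
        - ∫ s in Ioc (0:ℝ) t, Lop Ω A B J G R (fun y => V (s, y)) x|
        ≤ M * (∫ s in Ioc (0:ℝ) t, a s) + M * m * ∫ s in Ioc (0:ℝ) t, |W (s, x)| := by
      refine habs.trans ?_
      have hmono : (∫ s in Ioc (0:ℝ) t, |Lop Ω A B J G R (fun y => W (s, y)) x|)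
          ≤ ∫ s in Ioc (0:ℝ) t, M * (a s + m * |W (s, x)|) := by
        refine integral_mono_of_nonneg (ae_of_all _ fun s => abs_nonneg _) hdom ?_
        filter_upwards [haeSt] with s hs
        exact hs.2 x hxcl
      refine hmono.trans_eq ?_
      rw [integral_const_mul, integral_add haintt ((hx1t.abs).const_mul m),
        integral_const_mul]
      ring
    -- Cauchy-Schwarz in s
    have hsm : AEStronglyMeasurable (fun s => W (s, x)) νt :=
      (hWm.measurable.comp (measurable_id.prodMk measurable_const)).aestronglyMeasurable
    have hWsx2 : MemLp (fun s => W (s, x)) 2 νt :=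
      (memLp_two_iff_integrable_sq hsm).mpr hx2t
    have hcs2 : (∫ s in Ioc (0:ℝ) t, |W (s, x)|) ^ 2
        ≤ t * ∫ s in Ioc (0:ℝ) t, W (s, x) ^ 2 := by
      have h := sq_integral_abs_le νt hWsx2
      rwa [hνtuniv] at h
    have hg2 : ((∫ s in Ioc (0:ℝ) t, Lop Ω A B J G R (fun y => U (s, y)) x)
        - ∫ s in Ioc (0:ℝ) t, Lop Ω A B J G R (fun y => V (s, y)) x) ^ 2
        ≤ (M * (∫ s in Ioc (0:ℝ) t, a s) + M * m * ∫ s in Ioc (0:ℝ) t, |W (s, x)|) ^ 2 := by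
      rw [← sq_abs]
      exact pow_le_pow_left₀ (abs_nonneg _) h2 2
    set P := ∫ s in Ioc (0:ℝ) t, a s
    set Q := ∫ s in Ioc (0:ℝ) t, |W (s, x)|
    set E := ∫ s in Ioc (0:ℝ) t, W (s, x) ^ 2
    nlinarith [sq_nonneg (M * (P - m * Q)),
      mul_nonneg (mul_nonneg (sq_nonneg M) (sq_nonneg m)) (sub_nonneg.mpr hcs2)]
  -- integrate the pointwise bound
  have hGt : Integrable (fun x => ∫ s in Ioc (0:ℝ) t, W (s, x) ^ 2) μ := by
    have h := hWsqt.swap.integral_norm_prod_left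
    simpa [Real.norm_eq_abs, abs_pow, sq_abs, Function.comp] using h
  have hrhs_int : Integrable (fun x =>
      2 * M ^ 2 * (∫ s in Ioc (0:ℝ) t, a s) ^ 2
        + 2 * M ^ 2 * m ^ 2 * t * ∫ s in Ioc (0:ℝ) t, W (s, x) ^ 2) μ :=
    (integrable_const _).add (hGt.const_mul _)
  have step1 : (∫ x in Ω, ((∫ s in Ioc (0:ℝ) t, Lop Ω A B J G R (fun y => U (s, y)) x)
        - ∫ s in Ioc (0:ℝ) t, Lop Ω A B J G R (fun y => V (s, y)) x) ^ 2)
      ≤ ∫ x in Ω, (2 * M ^ 2 * (∫ s in Ioc (0:ℝ) t, a s) ^ 2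
        + 2 * M ^ 2 * m ^ 2 * t * ∫ s in Ioc (0:ℝ) t, W (s, x) ^ 2) :=
    integral_mono_of_nonneg (ae_of_all _ fun x => sq_nonneg _) hrhs_int hkey
  have hswap : (∫ x in Ω, ∫ s in Ioc (0:ℝ) t, W (s, x) ^ 2)
      = ∫ s in Ioc (0:ℝ) t, c s :=
    (integral_integral_swap (f := fun s x => W (s, x) ^ 2) hWsqt).symm
  have hc_le : (∫ s in Ioc (0:ℝ) t, c s) ≤ t * S := by
    have hmono : (∫ s in Ioc (0:ℝ) t, c s) ≤ ∫ _ in Ioc (0:ℝ) t, S := by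
      refine integral_mono_of_nonneg (ae_of_all _ hc_nonneg) (integrable_const _) ?_
      filter_upwards [hSb.filter_mono (ae_mono hνt_le)] with s hs
      exact hs
    refine hmono.trans_eq ?_
    rw [integral_const, measureReal_def, hνtuniv, smul_eq_mul]
  have ha_le : (∫ s in Ioc (0:ℝ) t, a s) ^ 2 ≤ t * (m * (t * S)) := by
    have hL2a : MemLp a 2 νt := by
      refine (memLp_two_iff_integrable_sq haintt.aestronglyMeasurable).mpr ?_
      refine (hcintt.const_mul m).mono' ?_ ?_
      · exact (haintt.aestronglyMeasurable.mul haintt.aestronglyMeasurable).congr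
          (ae_of_all _ fun s => (pow_two (a s)).symm)
      · filter_upwards [hacs.filter_mono (ae_mono hνt_le)] with s hs
        rw [Real.norm_eq_abs, abs_of_nonneg (sq_nonneg _)]
        exact hs
    have hcs := sq_integral_abs_le νt hL2a
    rw [hνtuniv] at hcs
    have h1 : (∫ s in Ioc (0:ℝ) t, a s) = ∫ s in Ioc (0:ℝ) t, |a s| :=
      integral_congr_ae (ae_of_all _ fun s => (abs_of_nonneg (ha_nonneg s)).symm)
    have h2 : (∫ s in Ioc (0:ℝ) t, a s ^ 2) ≤ ∫ s in Ioc (0:ℝ) t, m * c s :=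
      integral_mono_of_nonneg (ae_of_all _ fun s => sq_nonneg _) (hcintt.const_mul m)
        (hacs.filter_mono (ae_mono hνt_le))
    have h3 : (∫ s in Ioc (0:ℝ) t, m * c s) = m * ∫ s in Ioc (0:ℝ) t, c s :=
      integral_const_mul m c
    calc (∫ s in Ioc (0:ℝ) t, a s) ^ 2 = (∫ s in Ioc (0:ℝ) t, |a s|) ^ 2 := by rw [h1]
      _ ≤ t * ∫ s in Ioc (0:ℝ) t, a s ^ 2 := hcs
      _ ≤ t * (m * (t * S)) := by
          have hcle : (∫ s in Ioc (0:ℝ) t, a s ^ 2) ≤ m * (t * S) := by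
            refine (h2.trans_eq h3).trans ?_
            exact mul_le_mul_of_nonneg_left hc_le hm0
          exact mul_le_mul_of_nonneg_left hcle ht1
  refine step1.trans ?_
  have hstep2 : (∫ x in Ω, (2 * M ^ 2 * (∫ s in Ioc (0:ℝ) t, a s) ^ 2
      + 2 * M ^ 2 * m ^ 2 * t * ∫ s in Ioc (0:ℝ) t, W (s, x) ^ 2))
      = 2 * M ^ 2 * (∫ s in Ioc (0:ℝ) t, a s) ^ 2 * m
        + 2 * M ^ 2 * m ^ 2 * t * ∫ s in Ioc (0:ℝ) t, c s := by
    rw [integral_add (integrable_const _) (hGt.const_mul _), integral_const, measureReal_def,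
      integral_const_mul, hswap]
    rw [hμdef, Measure.restrict_apply_univ, smul_eq_mul]
    ring
  rw [hstep2]
  have hP2 : 0 ≤ (∫ s in Ioc (0:ℝ) t, a s) ^ 2 := sq_nonneg _
  nlinarith [ha_le, hc_le, sq_nonneg M, mul_nonneg (mul_nonneg (sq_nonneg M) (sq_nonneg m)) ht1,
    mul_nonneg (sq_nonneg M) hm0, mul_nonneg ht1 hS0, sq_nonneg m]

lemma Real.le_biSup {f : ℝ → ℝ} {s : Set ℝ} (H : BddAbove (f '' s)) {c : ℝ} (hc : c ∈ s) :
    f c ≤ ⨆ i ∈ s, f i := by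
  obtain ⟨b, hb⟩ := H
  have hg : ∀ i, (⨆ _ : i ∈ s, f i) ≤ max b 0 := by
    intro i
    by_cases h : i ∈ s
    · haveI : Nonempty (i ∈ s) := ⟨h⟩
      rw [ciSup_const]
      exact le_max_of_le_left (hb (Set.mem_image_of_mem f h))
    · haveI : IsEmpty (i ∈ s) := ⟨h⟩
      rw [Real.iSup_of_isEmpty]
      exact le_max_right b 0
  have hbdd : BddAbove (Set.range fun i => ⨆ _ : i ∈ s, f i) := by
    refine ⟨max b 0, ?_⟩
    rintro x ⟨i, rfl⟩
    exact hg i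
  haveI : Nonempty (c ∈ s) := ⟨hc⟩
  calc f c = ⨆ _ : c ∈ s, f c := ciSup_const.symm
    _ ≤ ⨆ i, ⨆ _ : i ∈ s, f i := le_ciSup hbdd c

set_option maxHeartbeats 1000000 in
theorem stmt4 {N : ℕ} (Ω : Set (Fin N → ℝ))
    (hΩo : IsOpen Ω) (hΩb : IsBounded Ω) (hΩc : IsConnected Ω)
    (J G R : (Fin N → ℝ) → (Fin N → ℝ) → ℝ)
    (hJ : KernelH J) (hG : KernelH G) (hR : KernelH R)
    (A B : Set (Fin N → ℝ))
    (hpart : closure Ω = A ∪ B) (hdisj : A ∩ B = ∅)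
    (hBopen : IsOpen B) (hAmeas : MeasurableSet A)
    (u0 : (Fin N → ℝ) → ℝ) (hu0 : MemLp u0 2 (volume.restrict Ω))
    (t0 : ℝ) (ht0 : 0 < t0)
    (C : ℝ)
    (hC : C = (sSup ((fun p : (Fin N → ℝ) × (Fin N → ℝ) => |J p.1 p.2|) ''
          (closure Ω ×ˢ closure Ω))
        + 2 * sSup ((fun p : (Fin N → ℝ) × (Fin N → ℝ) => |R p.1 p.2|) ''
          (closure Ω ×ˢ closure Ω))
        + sSup ((fun p : (Fin N → ℝ) × (Fin N → ℝ) => |G p.1 p.2|) ''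
          (closure Ω ×ˢ closure Ω))) ^ 2) :
    (∀ u v : ℝ → (Fin N → ℝ) → ℝ,
      MemLp (fun p : ℝ × (Fin N → ℝ) => u p.1 p.2) 2 (((volume : Measure ℝ).restrict (Set.Icc 0 t0)).prod (volume.restrict Ω)) →
      MemLp (fun p : ℝ × (Fin N → ℝ) => v p.1 p.2) 2 (((volume : Measure ℝ).restrict (Set.Icc 0 t0)).prod (volume.restrict Ω)) →
      BddAbove ((fun s => ∫ x in Ω, (u s x - v s x) ^ 2) '' Set.Icc (0 : ℝ) t0) →
      ∀ t ∈ Set.Icc (0 : ℝ) t0,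
        (∫ x in Ω, (Phi Ω A B J G R u0 u t x - Phi Ω A B J G R u0 v t x) ^ 2) ≤
          4 * C * t ^ 2 * ((volume Ω).toReal) ^ 2 *
            ⨆ s ∈ Set.Icc (0 : ℝ) t0, ∫ x in Ω, (u s x - v s x) ^ 2) ∧
    (t0 < 1 / (2 * (volume Ω).toReal * Real.sqrt C) →
      ∃ k : ℝ, 0 ≤ k ∧ k < 1 ∧
        ∀ u v : ℝ → (Fin N → ℝ) → ℝ,
          MemLp (fun p : ℝ × (Fin N → ℝ) => u p.1 p.2) 2 (((volume : Measure ℝ).restrict (Set.Icc 0 t0)).prod (volume.restrict Ω)) →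
          MemLp (fun p : ℝ × (Fin N → ℝ) => v p.1 p.2) 2 (((volume : Measure ℝ).restrict (Set.Icc 0 t0)).prod (volume.restrict Ω)) →
          BddAbove ((fun s => ∫ x in Ω, (u s x - v s x) ^ 2) '' Set.Icc (0 : ℝ) t0) →
          (⨆ t ∈ Set.Icc (0 : ℝ) t0,
              Real.sqrt (∫ x in Ω,
                (Phi Ω A B J G R u0 u t x - Phi Ω A B J G R u0 v t x) ^ 2)) ≤
            k * ⨆ s ∈ Set.Icc (0 : ℝ) t0,
              Real.sqrt (∫ x in Ω, (u s x - v s x) ^ 2)) := by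
  classical
  obtain ⟨hJc, hJnn, hJpos, hJsymm, hJint⟩ := hJ
  obtain ⟨hGc, hGnn, hGpos, hGsymm, hGint⟩ := hG
  obtain ⟨hRc, hRnn, hRpos, hRsymm, hRint⟩ := hR
  have hBmeas : MeasurableSet B := hBopen.measurableSet
  have hΩne : Ω.Nonempty := hΩc.nonempty
  set MJ := sSup ((fun p : (Fin N → ℝ) × (Fin N → ℝ) => |J p.1 p.2|) ''
      (closure Ω ×ˢ closure Ω)) with hMJdef
  set MR := sSup ((fun p : (Fin N → ℝ) × (Fin N → ℝ) => |R p.1 p.2|) ''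
      (closure Ω ×ˢ closure Ω)) with hMRdef
  set MG := sSup ((fun p : (Fin N → ℝ) × (Fin N → ℝ) => |G p.1 p.2|) ''
      (closure Ω ×ˢ closure Ω)) with hMGdef
  have hMR0 : 0 ≤ MR := kernel_sSup_nonneg hΩb hΩne hRc
  have hMG0 : 0 ≤ MG := kernel_sSup_nonneg hΩb hΩne hGc
  have hMJpos : 0 < MJ := by
    obtain ⟨x0, hx0⟩ := hΩne
    have h1 : |J x0 x0| ≤ MJ :=
      kernel_abs_le hΩb hJc (subset_closure hx0) (subset_closure hx0)
    have h2 : 0 < J x0 x0 := hJpos x0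
    calc (0:ℝ) < J x0 x0 := h2
      _ ≤ |J x0 x0| := le_abs_self _
      _ ≤ MJ := h1
  set M := MJ + 2 * MR + MG with hMdef
  have hMpos : 0 < M := by positivity
  have hM0 : 0 ≤ M := hMpos.le
  have hbd : ∀ {f : (Fin N → ℝ) → ℝ}, Integrable f (volume.restrict Ω) →
      ∀ x ∈ closure Ω, |Lop Ω A B J G R f x| ≤
        M * ((∫ y in Ω, |f y|) + (volume Ω).toReal * |f x|) :=
    fun {f} hf x hx => Lop_abs_le hΩo hΩb hJc hGc hRc hAmeas hBmeas hf hx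
  have part1 : ∀ u v : ℝ → (Fin N → ℝ) → ℝ,
      MemLp (fun p : ℝ × (Fin N → ℝ) => u p.1 p.2) 2 (((volume : Measure ℝ).restrict (Set.Icc 0 t0)).prod (volume.restrict Ω)) →
      MemLp (fun p : ℝ × (Fin N → ℝ) => v p.1 p.2) 2 (((volume : Measure ℝ).restrict (Set.Icc 0 t0)).prod (volume.restrict Ω)) →
      BddAbove ((fun s => ∫ x in Ω, (u s x - v s x) ^ 2) '' Set.Icc (0 : ℝ) t0) →
      ∀ t ∈ Set.Icc (0 : ℝ) t0,
        (∫ x in Ω, (Phi Ω A B J G R u0 u t x - Phi Ω A B J G R u0 v t x) ^ 2) ≤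
          4 * C * t ^ 2 * ((volume Ω).toReal) ^ 2 *
            ⨆ s ∈ Set.Icc (0 : ℝ) t0, ∫ x in Ω, (u s x - v s x) ^ 2 := by
    intro u v hu hv hbdd t ht
    have hIocSub : Ioc (0:ℝ) t ⊆ Icc (0:ℝ) t0 := fun s hs => ⟨hs.1.le, hs.2.trans ht.2⟩
    have hνt_le : (volume : Measure ℝ).restrict (Ioc 0 t) ≤
        (volume : Measure ℝ).restrict (Icc 0 t0) :=
      Measure.restrict_mono hIocSub le_rfl
    have hum := hu.aestronglyMeasurable
    have hvm := hv.aestronglyMeasurable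
    set U : ℝ × (Fin N → ℝ) → ℝ := hum.mk _ with hUdef
    set V : ℝ × (Fin N → ℝ) → ℝ := hvm.mk _ with hVdef
    have hUm : StronglyMeasurable U := hum.stronglyMeasurable_mk
    have hVm : StronglyMeasurable V := hvm.stronglyMeasurable_mk
    have hU_ae : (fun p : ℝ × (Fin N → ℝ) => u p.1 p.2)
        =ᵐ[((volume : Measure ℝ).restrict (Icc 0 t0)).prod (volume.restrict Ω)] U :=
      hum.ae_eq_mk
    have hV_ae : (fun p : ℝ × (Fin N → ℝ) => v p.1 p.2)
        =ᵐ[((volume : Measure ℝ).restrict (Icc 0 t0)).prod (volume.restrict Ω)] V :=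
      hvm.ae_eq_mk
    have hU2 : MemLp U 2 (((volume : Measure ℝ).restrict (Icc 0 t0)).prod (volume.restrict Ω)) :=
      hu.ae_eq hU_ae
    have hV2 : MemLp V 2 (((volume : Measure ℝ).restrict (Icc 0 t0)).prod (volume.restrict Ω)) :=
      hv.ae_eq hV_ae
    have h3u : ∀ᵐ s ∂((volume : Measure ℝ).restrict (Icc 0 t0)),
        (fun y => u s y) =ᵐ[volume.restrict Ω] fun y => U (s, y) :=
      Measure.ae_ae_of_ae_prod hU_ae
    have h3v : ∀ᵐ s ∂((volume : Measure ℝ).restrict (Icc 0 t0)),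
        (fun y => v s y) =ᵐ[volume.restrict Ω] fun y => V (s, y) :=
      Measure.ae_ae_of_ae_prod hV_ae
    have h2u : ∀ᵐ x ∂(volume.restrict Ω),
        ∀ᵐ s ∂((volume : Measure ℝ).restrict (Icc 0 t0)), u s x = U (s, x) := by
      have hswap : (fun q : (Fin N → ℝ) × ℝ => u q.2 q.1)
          =ᵐ[(volume.restrict Ω).prod ((volume : Measure ℝ).restrict (Icc 0 t0))]
            (fun q => U (q.2, q.1)) := by
        have h := (Measure.measurePreserving_swap (μ := volume.restrict Ω)
          (ν := (volume : Measure ℝ).restrict (Icc 0 t0))).quasiMeasurePreserving.ae_eq_comp hU_ae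
        exact h
      exact Measure.ae_ae_of_ae_prod hswap
    have h2v : ∀ᵐ x ∂(volume.restrict Ω),
        ∀ᵐ s ∂((volume : Measure ℝ).restrict (Icc 0 t0)), v s x = V (s, x) := by
      have hswap : (fun q : (Fin N → ℝ) × ℝ => v q.2 q.1)
          =ᵐ[(volume.restrict Ω).prod ((volume : Measure ℝ).restrict (Icc 0 t0))]
            (fun q => V (q.2, q.1)) := by
        have h := (Measure.measurePreserving_swap (μ := volume.restrict Ω)
          (ν := (volume : Measure ℝ).restrict (Icc 0 t0))).quasiMeasurePreserving.ae_eq_comp hV_ae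
        exact h
      exact Measure.ae_ae_of_ae_prod hswap
    set S := ⨆ s ∈ Set.Icc (0:ℝ) t0, ∫ x in Ω, (u s x - v s x) ^ 2 with hSdef
    have hS0 : 0 ≤ S := by
      have h1 : (0:ℝ) ≤ ∫ x in Ω, (u 0 x - v 0 x) ^ 2 :=
        integral_nonneg fun x => sq_nonneg _
      have h2 : (∫ x in Ω, (u 0 x - v 0 x) ^ 2) ≤ S :=
        Real.le_biSup hbdd ⟨le_refl (0:ℝ), ht0.le⟩
      linarith
    have hSb : ∀ᵐ s ∂((volume : Measure ℝ).restrict (Icc 0 t0)),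
        (∫ x in Ω, (U (s, x) - V (s, x)) ^ 2) ≤ S := by
      filter_upwards [h3u, h3v, ae_restrict_mem measurableSet_Icc] with s hsu hsv hsm
      have heq : (∫ x in Ω, (U (s, x) - V (s, x)) ^ 2)
          = ∫ x in Ω, (u s x - v s x) ^ 2 := by
        apply integral_congr_ae
        filter_upwards [hsu, hsv] with y h1 h2
        rw [← h1, ← h2]
      rw [heq]
      exact Real.le_biSup hbdd hsm
    have hkey := key_estimate (J := J) (G := G) (R := R) hΩo hΩb hJc hGc hRc hAmeas hBmeas
      hM0 hbd ht0 hUm hVm hU2 hV2 hS0 hSb ht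
    have hLHS : (∫ x in Ω, (Phi Ω A B J G R u0 u t x - Phi Ω A B J G R u0 v t x) ^ 2)
        = ∫ x in Ω, ((∫ s in Ioc (0:ℝ) t, Lop Ω A B J G R (fun y => U (s, y)) x)
            - ∫ s in Ioc (0:ℝ) t, Lop Ω A B J G R (fun y => V (s, y)) x) ^ 2 := by
      apply integral_congr_ae
      filter_upwards [h2u, h2v] with x hxu hxv
      have hu_eq : (∫ s in Ioc (0:ℝ) t, Lop Ω A B J G R (u s) x)
          = ∫ s in Ioc (0:ℝ) t, Lop Ω A B J G R (fun y => U (s, y)) x := by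
        apply integral_congr_ae
        have hall : ∀ᵐ s ∂((volume : Measure ℝ).restrict (Icc 0 t0)),
            Lop Ω A B J G R (u s) x = Lop Ω A B J G R (fun y => U (s, y)) x := by
          filter_upwards [h3u, hxu] with s hs1 hs2
          exact Lop_congr hs1 hs2
        exact hall.filter_mono (ae_mono hνt_le)
      have hv_eq : (∫ s in Ioc (0:ℝ) t, Lop Ω A B J G R (v s) x)
          = ∫ s in Ioc (0:ℝ) t, Lop Ω A B J G R (fun y => V (s, y)) x := by
        apply integral_congr_ae
        have hall : ∀ᵐ s ∂((volume : Measure ℝ).restrict (Icc 0 t0)),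
            Lop Ω A B J G R (v s) x = Lop Ω A B J G R (fun y => V (s, y)) x := by
          filter_upwards [h3v, hxv] with s hs1 hs2
          exact Lop_congr hs1 hs2
        exact hall.filter_mono (ae_mono hνt_le)
      simp only [Phi]
      rw [hu_eq, hv_eq]
      ring
    rw [hLHS, hC]
    exact hkey
  refine ⟨part1, ?_⟩
  intro ht0small
  have hmpos : 0 < (volume Ω).toReal :=
    ENNReal.toReal_pos (hΩo.measure_pos volume hΩne).ne' hΩb.measure_lt_top.ne
  have hCpos : 0 < C := by rw [hC]; positivity
  have hsC : 0 < Real.sqrt C := Real.sqrt_pos.mpr hCpos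
  set k := 2 * (volume Ω).toReal * Real.sqrt C * t0 with hkdef
  have hk0 : 0 ≤ k := by positivity
  have hk1 : k < 1 := by
    rw [lt_div_iff₀ (by positivity)] at ht0small
    nlinarith [ht0small]
  refine ⟨k, hk0, hk1, ?_⟩
  intro u v hu hv hbdd
  have hpart := part1 u v hu hv hbdd
  set S := ⨆ s ∈ Set.Icc (0:ℝ) t0, ∫ x in Ω, (u s x - v s x) ^ 2 with hSdef
  have hS0 : 0 ≤ S := by
    have h1 : (0:ℝ) ≤ ∫ x in Ω, (u 0 x - v 0 x) ^ 2 :=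
      integral_nonneg fun x => sq_nonneg _
    have h2 : (∫ x in Ω, (u 0 x - v 0 x) ^ 2) ≤ S :=
      Real.le_biSup hbdd ⟨le_refl (0:ℝ), ht0.le⟩
    linarith
  set T := ⨆ s ∈ Set.Icc (0:ℝ) t0, Real.sqrt (∫ x in Ω, (u s x - v s x) ^ 2) with hTdef
  have hT0 : 0 ≤ T :=
    Real.iSup_nonneg fun s => Real.iSup_nonneg fun _ => Real.sqrt_nonneg _
  have hbdd' : BddAbove
      ((fun s => Real.sqrt (∫ x in Ω, (u s x - v s x) ^ 2)) '' Set.Icc (0:ℝ) t0) := by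
    have hmono : Monotone Real.sqrt := fun _ _ h => Real.sqrt_le_sqrt h
    have h := hmono.map_bddAbove hbdd
    rwa [Set.image_image] at h
  have hS_le_T2 : S ≤ T ^ 2 := by
    rw [hSdef]
    refine Real.iSup_le (fun s => Real.iSup_le (fun hs => ?_) (sq_nonneg T)) (sq_nonneg T)
    have h1 : Real.sqrt (∫ x in Ω, (u s x - v s x) ^ 2) ≤ T := Real.le_biSup hbdd' hs
    have h2 : (0:ℝ) ≤ ∫ x in Ω, (u s x - v s x) ^ 2 := integral_nonneg fun _ => sq_nonneg _
    calc (∫ x in Ω, (u s x - v s x) ^ 2)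
        = Real.sqrt (∫ x in Ω, (u s x - v s x) ^ 2) ^ 2 := (Real.sq_sqrt h2).symm
      _ ≤ T ^ 2 := pow_le_pow_left₀ (Real.sqrt_nonneg _) h1 2
  refine Real.iSup_le (fun tt => Real.iSup_le (fun htt => ?_) (mul_nonneg hk0 hT0))
    (mul_nonneg hk0 hT0)
  have h1 := hpart tt htt
  have h2 : (∫ x in Ω, (Phi Ω A B J G R u0 u tt x - Phi Ω A B J G R u0 v tt x) ^ 2)
      ≤ (k * T) ^ 2 := by
    have hsq : Real.sqrt C ^ 2 = C := Real.sq_sqrt hCpos.le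
    have hk2 : (k * T) ^ 2 = 4 * C * t0 ^ 2 * ((volume Ω).toReal) ^ 2 * T ^ 2 := by
      calc (k * T) ^ 2
          = 4 * (Real.sqrt C ^ 2) * t0 ^ 2 * ((volume Ω).toReal) ^ 2 * T ^ 2 := by
            rw [hkdef]; ring
        _ = 4 * C * t0 ^ 2 * ((volume Ω).toReal) ^ 2 * T ^ 2 := by rw [hsq]
    rw [hk2]
    have htt2 : tt ^ 2 ≤ t0 ^ 2 := pow_le_pow_left₀ htt.1 htt.2 2
    have hprod : tt ^ 2 * S ≤ t0 ^ 2 * T ^ 2 :=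
      mul_le_mul htt2 hS_le_T2 hS0 (sq_nonneg t0)
    nlinarith [h1, hprod, mul_nonneg (mul_nonneg hCpos.le (sq_nonneg (volume Ω).toReal))
      (sub_nonneg.mpr hprod)]
  calc Real.sqrt (∫ x in Ω, (Phi Ω A B J G R u0 u tt x - Phi Ω A B J G R u0 v tt x) ^ 2)
      ≤ Real.sqrt ((k * T) ^ 2) := Real.sqrt_le_sqrt h2
    _ = k * T := Real.sqrt_sq (mul_nonneg hk0 hT0)
end

section
/- Let V : ℝ^N × ℝ^N → ℝ be continuous and let φ ∈ L^∞(Ω). If χ_{A_n} ⇀ X weakly-* in L^∞(Ω), then sup_{y ∈ Ω̄} | ∫_Ω V(x,y) (χ_{A_n}(x) − X(x)) φ(x) dx | → 0 as n → ∞; that is, the functions h_n(y) = ∫_Ω V(x,y) χ_{A_n}(x) φ(x) dx converge uniformly on Ω̄ to h(y) = ∫_Ω V(x,y) X(x) φ(x) dx. -/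
open MeasureTheory Set Filter Topology Bornology

theorem stmt5 {N : ℕ} (Ω : Set (Fin N → ℝ))
    (hΩo : IsOpen Ω) (hΩb : IsBounded Ω) (hΩc : IsConnected Ω)
    (V : (Fin N → ℝ) → (Fin N → ℝ) → ℝ)
    (hV : Continuous (fun p : (Fin N → ℝ) × (Fin N → ℝ) => V p.1 p.2))
    (φ : (Fin N → ℝ) → ℝ) (hφmeas : Measurable φ) (M : ℝ) (hφ : ∀ x, |φ x| ≤ M)
    (A : ℕ → Set (Fin N → ℝ)) (hAmeas : ∀ n, MeasurableSet (A n))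
    (hAsub : ∀ n, A n ⊆ closure Ω)
    (X : (Fin N → ℝ) → ℝ)
    (hXA : ∀ ψ : (Fin N → ℝ) → ℝ, Integrable ψ (volume.restrict Ω) →
      Tendsto (fun n => ∫ x in Ω, chi (A n) x * ψ x) atTop (𝓝 (∫ x in Ω, X x * ψ x))) :
    TendstoUniformlyOn (fun n y => ∫ x in Ω, V x y * chi (A n) x * φ x)
      (fun y => ∫ x in Ω, V x y * X x * φ x) atTop (closure Ω) := by
  classical
  have hM0 : 0 ≤ M := le_trans (abs_nonneg _) (hφ 0)
  have hKcomp : IsCompact (closure Ω) := hΩb.isCompact_closure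
  have hvol : volume Ω < ⊤ := lt_of_le_of_lt (measure_mono subset_closure) hKcomp.measure_lt_top
  haveI : IsFiniteMeasure (volume.restrict Ω) :=
    ⟨by simpa [Measure.restrict_apply_univ] using hvol⟩
  set v : ℝ := (volume Ω).toReal with hvdef
  have hv0 : 0 ≤ v := ENNReal.toReal_nonneg
  -- integrability of ψ_y
  have hψint : ∀ y, Integrable (fun x => V x y * φ x) (volume.restrict Ω) := by
    intro y
    have hcont : Continuous fun x => V x y := hV.comp (continuous_id.prodMk continuous_const)
    obtain ⟨C, hC⟩ := hKcomp.exists_bound_of_continuousOn hcont.continuousOn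
    refine ⟨(hcont.measurable.mul hφmeas).aestronglyMeasurable, ?_⟩
    apply HasFiniteIntegral.of_bounded (C := C * M)
    filter_upwards [ae_restrict_mem hΩo.measurableSet] with x hx
    have h1 : ‖V x y‖ ≤ C := hC x (subset_closure hx)
    calc ‖V x y * φ x‖ = ‖V x y‖ * ‖φ x‖ := norm_mul _ _
      _ ≤ C * M := mul_le_mul h1 (by simpa [Real.norm_eq_abs] using hφ x)
          (norm_nonneg _) (le_trans (norm_nonneg _) h1)
  -- chi (A n) * ψ is integrable
  have hchiψint : ∀ (n : ℕ) (ψ : (Fin N → ℝ) → ℝ), Integrable ψ (volume.restrict Ω) →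
      Integrable (fun x => chi (A n) x * ψ x) (volume.restrict Ω) := by
    intro n ψ hψ
    exact hψ.bdd_mul (c := 1) ((chi_measurable (hAmeas n)).aestronglyMeasurable)
      (Eventually.of_forall fun x => by simpa [Real.norm_eq_abs] using chi_abs_le_one (A n) x)
  -- rewrite the goal with reordered integrands
  have hGeq : (fun (n : ℕ) (y : Fin N → ℝ) => ∫ x in Ω, V x y * chi (A n) x * φ x)
      = fun n y => ∫ x in Ω, chi (A n) x * (V x y * φ x) := by
    funext n y; exact integral_congr_ae (Eventually.of_forall fun x => by ring)
  have hHeq : (fun (y : Fin N → ℝ) => ∫ x in Ω, V x y * X x * φ x)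
      = fun y => ∫ x in Ω, X x * (V x y * φ x) := by
    funext y; exact integral_congr_ae (Eventually.of_forall fun x => by ring)
  rw [hGeq, hHeq]
  rw [Metric.tendstoUniformlyOn_iff]
  intro ε hε
  set ε' : ℝ := ε / (4 * (M + 1) * (v + 1)) with hε'def
  have hden : 0 < 4 * (M + 1) * (v + 1) := by positivity
  have hε' : 0 < ε' := div_pos hε hden
  have hkey : ε' * (M + 1) * (v + 1) = ε / 4 := by
    rw [hε'def, div_mul_eq_mul_div, div_mul_eq_mul_div, div_eq_iff hden.ne']
    ring
  have hεMv : ε' * M * v < ε / 4 := by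
    calc ε' * M * v < ε' * (M + 1) * (v + 1) := by nlinarith
      _ = ε / 4 := hkey
  -- uniform continuity of V on K × K
  have hUC : UniformContinuousOn (fun p : (Fin N → ℝ) × (Fin N → ℝ) => V p.1 p.2)
      (closure Ω ×ˢ closure Ω) :=
    (hKcomp.prod hKcomp).uniformContinuousOn_of_continuous hV.continuousOn
  obtain ⟨δ, hδ0, hδ⟩ := (Metric.uniformContinuousOn_iff.mp hUC) ε' hε'
  -- key estimate: for dist y i < δ, integrals of chi * ψ_y and chi * ψ_i are close, uniformly in n
  have hVclose : ∀ y ∈ closure Ω, ∀ i ∈ closure Ω, dist y i < δ →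
      ∀ x ∈ Ω, |V x y - V x i| < ε' := by
    intro y hy i hi hyi x hx
    have hd : dist ((x, y) : (Fin N → ℝ) × (Fin N → ℝ)) (x, i) < δ := by
      rw [Prod.dist_eq]
      simp only [dist_self, max_lt_iff]
      exact ⟨hδ0, hyi⟩
    have := hδ (x, y) ⟨subset_closure hx, hy⟩ (x, i) ⟨subset_closure hx, hi⟩ hd
    simpa [Real.dist_eq] using this
  have hgdiff : ∀ (n : ℕ) (y : Fin N → ℝ), y ∈ closure Ω → ∀ i ∈ closure Ω, dist y i < δ →
      |(∫ x in Ω, chi (A n) x * (V x y * φ x)) - ∫ x in Ω, chi (A n) x * (V x i * φ x)|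
        ≤ ε' * M * v := by
    intro n y hy i hi hyi
    have h1 : (∫ x in Ω, chi (A n) x * (V x y * φ x)) - ∫ x in Ω, chi (A n) x * (V x i * φ x)
        = ∫ x in Ω, (chi (A n) x * (V x y * φ x) - chi (A n) x * (V x i * φ x)) :=
      (integral_sub (hchiψint n _ (hψint y)) (hchiψint n _ (hψint i))).symm
    rw [h1]
    have h2 := norm_integral_le_of_norm_le_const (μ := volume.restrict Ω)
      (f := fun x => chi (A n) x * (V x y * φ x) - chi (A n) x * (V x i * φ x)) (C := ε' * M) ?_
    · calc |∫ x in Ω, (chi (A n) x * (V x y * φ x) - chi (A n) x * (V x i * φ x))|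
          ≤ ε' * M * ((volume.restrict Ω) Set.univ).toReal := by
            simpa [Real.norm_eq_abs, Measure.real] using h2
        _ = ε' * M * v := by rw [Measure.restrict_apply_univ]
    · filter_upwards [ae_restrict_mem hΩo.measurableSet] with x hx
      have heq : chi (A n) x * (V x y * φ x) - chi (A n) x * (V x i * φ x)
          = chi (A n) x * ((V x y - V x i) * φ x) := by ring
      rw [Real.norm_eq_abs, heq, abs_mul, abs_mul]
      calc |chi (A n) x| * (|V x y - V x i| * |φ x|)
          ≤ 1 * (ε' * M) := by
            apply mul_le_mul (chi_abs_le_one _ _) ?_ (by positivity) one_pos.le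
            exact mul_le_mul (le_of_lt (hVclose y hy i hi hyi x hx)) (hφ x)
              (abs_nonneg _) hε'.le
        _ = ε' * M := one_mul _
  -- finite cover of K by δ-balls
  obtain ⟨t, hts, htfin, htcov⟩ := hKcomp.finite_cover_balls hδ0
  -- pointwise convergence at the centers
  have hpt : ∀ i ∈ t, ∀ᶠ n in atTop,
      dist (∫ x in Ω, chi (A n) x * (V x i * φ x)) (∫ x in Ω, X x * (V x i * φ x)) < ε / 4 := by
    intro i _
    exact (Metric.tendsto_nhds.mp (hXA _ (hψint i))) (ε / 4) (by linarith)
  have hev := (htfin.eventually_all).mpr hpt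
  filter_upwards [hev] with n hn y hy
  obtain ⟨i, hit, hyi⟩ := by
    have := htcov hy
    simpa using this
  have hiK : i ∈ closure Ω := hts hit
  have hyiδ : dist y i < δ := by simpa [Metric.mem_ball] using hyi
  -- bound on the limit function differences
  have hhdiff : |(∫ x in Ω, X x * (V x y * φ x)) - ∫ x in Ω, X x * (V x i * φ x)|
      ≤ ε' * M * v := by
    have htend : Tendsto (fun n => |(∫ x in Ω, chi (A n) x * (V x y * φ x))
        - ∫ x in Ω, chi (A n) x * (V x i * φ x)|) atTop
        (𝓝 |(∫ x in Ω, X x * (V x y * φ x)) - ∫ x in Ω, X x * (V x i * φ x)|) :=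
      ((hXA _ (hψint y)).sub (hXA _ (hψint i))).abs
    exact le_of_tendsto htend (Eventually.of_forall fun m => hgdiff m y hy i hiK hyiδ)
  have h2 := hn i hit
  have h3 := hgdiff n y hy i hiK hyiδ
  rw [Real.dist_eq] at h2 ⊢
  calc |(∫ x in Ω, X x * (V x y * φ x)) - ∫ x in Ω, chi (A n) x * (V x y * φ x)|
      ≤ |(∫ x in Ω, X x * (V x y * φ x)) - ∫ x in Ω, X x * (V x i * φ x)|
        + |(∫ x in Ω, X x * (V x i * φ x)) - ∫ x in Ω, chi (A n) x * (V x i * φ x)|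
        + |(∫ x in Ω, chi (A n) x * (V x i * φ x)) - ∫ x in Ω, chi (A n) x * (V x y * φ x)| := by
        have := abs_sub_le ((∫ x in Ω, X x * (V x y * φ x)))
          ((∫ x in Ω, chi (A n) x * (V x i * φ x))) ((∫ x in Ω, chi (A n) x * (V x y * φ x)))
        have h4 := abs_sub_le ((∫ x in Ω, X x * (V x y * φ x)))
          ((∫ x in Ω, X x * (V x i * φ x))) ((∫ x in Ω, chi (A n) x * (V x i * φ x)))
        linarith
    _ < ε / 4 + ε / 4 + ε / 4 := by
        have h5 : |(∫ x in Ω, X x * (V x i * φ x)) - ∫ x in Ω, chi (A n) x * (V x i * φ x)|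
            < ε / 4 := by rw [abs_sub_comm]; exact h2
        have h6 : |(∫ x in Ω, chi (A n) x * (V x i * φ x))
            - ∫ x in Ω, chi (A n) x * (V x y * φ x)| ≤ ε' * M * v := by
          rw [abs_sub_comm]; exact h3
        have := lt_of_le_of_lt hhdiff hεMv
        have := lt_of_le_of_lt h6 hεMv
        linarith
    _ < ε := by linarith
end

section
/- Fix T > 0 and initial data a_0, b_0 ∈ L²(Ω). The limit system ∂_t a(t,x) = ∫_Ω J(x,y)(X(x)a(t,y) − X(y)a(t,x)) dy + ∫_Ω R(x,y)(X(x)b(t,y) − (1−X(y))a(t,x)) dy, ∂_t b(t,x) = ∫_Ω G(x,y)((1−X(x))b(t,y) − (1−X(y))b(t,x)) dy + ∫_Ω R(x,y)((1−X(x))a(t,y) − X(y)b(t,x)) dy, with a(0,·) = a_0 and b(0,·) = b_0, has at most one solution pair (a,b) in L²((0,T) × Ω) × L²((0,T) × Ω). -/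
open MeasureTheory Set Filter Topology Bornology

lemma gron_aux {h : ℝ → ℝ} {τ A C : ℝ} (hA : 0 ≤ A) (hC : 0 ≤ C) (hτ : 0 ≤ τ)
    (hcont : ContinuousOn h (Icc 0 τ)) (hnn : ∀ t ∈ Icc 0 τ, 0 ≤ h t)
    (hineq : ∀ t ∈ Icc 0 τ, h t ≤ A + C * ∫ s in (0:ℝ)..t, h s) :
    h τ ≤ A * Real.exp (C * τ) := by
  set g : ℝ → ℝ := fun t => h (max 0 (min t τ)) with hg
  have hgc : Continuous g := by
    apply hcont.comp_continuous
    · exact continuous_const.max (continuous_id.min continuous_const)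
    · intro x
      constructor
      · exact le_max_left _ _
      · exact max_le hτ (min_le_right _ _)
  have hgeq : ∀ t ∈ Icc (0:ℝ) τ, g t = h t := by
    intro t ht
    simp only [hg]
    rw [min_eq_left ht.2, max_eq_right ht.1]
  set H : ℝ → ℝ := fun t => ∫ s in (0:ℝ)..t, g s with hH
  have hHd : ∀ t : ℝ, HasDerivAt H (g t) t := by
    intro t
    exact intervalIntegral.integral_hasDerivAt_right (hgc.intervalIntegrable _ _)
      (hgc.stronglyMeasurable.stronglyMeasurableAtFilter) hgc.continuousAt
  have hHnn : ∀ t ∈ Icc (0:ℝ) τ, 0 ≤ H t := by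
    intro t ht
    apply intervalIntegral.integral_nonneg ht.1
    intro s hs
    exact (hnn _ ⟨hs.1, hs.2.trans ht.2⟩).trans_eq (hgeq s ⟨hs.1, hs.2.trans ht.2⟩).symm
  have hHeq : ∀ t ∈ Icc (0:ℝ) τ, H t = ∫ s in (0:ℝ)..t, h s := by
    intro t ht
    apply intervalIntegral.integral_congr
    intro s hs
    rw [uIcc_of_le ht.1] at hs
    exact hgeq s ⟨hs.1, hs.2.trans ht.2⟩
  have key : ∀ t ∈ Icc (0:ℝ) τ, ‖H t‖ ≤ gronwallBound 0 C A (t - 0) := by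
    apply norm_le_gronwallBound_of_norm_deriv_right_le
      (fun t ht => (hHd t).continuousAt.continuousWithinAt)
      (fun t ht => (hHd t).hasDerivWithinAt)
    · simp [hH, intervalIntegral.integral_same]
    · intro t ht
      have ht' : t ∈ Icc (0:ℝ) τ := ⟨ht.1, ht.2.le⟩
      rw [Real.norm_of_nonneg ((hnn t ht').trans_eq (hgeq t ht').symm),
        Real.norm_of_nonneg (hHnn t ht'), hgeq t ht', hHeq t ht']
      linarith [hineq t ht']
  have hfin : h τ ≤ A + C * H τ := by
    rw [hHeq τ ⟨hτ, le_refl _⟩]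
    exact hineq τ ⟨hτ, le_refl _⟩
  have hHb : H τ ≤ gronwallBound 0 C A τ := by
    have := key τ ⟨hτ, le_refl _⟩
    rwa [sub_zero, Real.norm_of_nonneg (hHnn τ ⟨hτ, le_refl _⟩)] at this
  rcases eq_or_lt_of_le hC with rfl | hCpos
  · simp only [zero_mul] at hfin ⊢
    rw [Real.exp_zero, mul_one]
    linarith
  · rw [gronwallBound_of_K_ne_0 hCpos.ne'] at hHb
    have : A + C * H τ ≤ A * Real.exp (C * τ) := by
      have h2 : C * H τ ≤ C * (0 * Real.exp (C * τ) + A / C * (Real.exp (C * τ) - 1)) :=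
        mul_le_mul_of_nonneg_left hHb hC
      simp only [zero_mul, zero_add] at h2
      have h3 : C * (A / C * (Real.exp (C * τ) - 1)) = A * (Real.exp (C * τ) - 1) := by
        field_simp
      nlinarith
    linarith


lemma integrand_int {N : ℕ} {Ω : Set (Fin N → ℝ)} (hΩm : MeasurableSet Ω)
    {V : (Fin N → ℝ) → (Fin N → ℝ) → ℝ}
    (hVc : Continuous fun p : (Fin N → ℝ) × (Fin N → ℝ) => V p.1 p.2)
    {K : ℝ} (hK : ∀ x ∈ Ω, ∀ y ∈ Ω, |V x y| ≤ K)
    {d : (Fin N → ℝ) → ℝ} (hdm : Measurable d) (hd : ∀ y ∈ Ω, |d y| ≤ 1)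
    {x : Fin N → ℝ} (hx : x ∈ Ω) {e : ℝ} (he : |e| ≤ 1) (hΩfin : volume Ω ≠ ⊤)
    {f : (Fin N → ℝ) → ℝ} (hf : Integrable f (volume.restrict Ω)) (p : ℝ) :
    Integrable (fun y => V x y * (e * f y - d y * p)) (volume.restrict Ω) := by
  haveI : IsFiniteMeasure (volume.restrict Ω) :=
    ⟨by rw [Measure.restrict_apply_univ]; exact hΩfin.lt_top⟩
  have hK0 : 0 ≤ K := le_trans (abs_nonneg _) (hK x hx x hx)
  apply Integrable.mono' (g := fun y => K * (|f y| + |p|))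
    (((hf.abs.add (integrable_const _)).const_mul K))
  · exact ((hVc.comp (Continuous.prodMk_right x)).aestronglyMeasurable).mul
      (((aestronglyMeasurable_const.mul hf.1)).sub
        ((hdm.aestronglyMeasurable.mul aestronglyMeasurable_const)))
  · filter_upwards [ae_restrict_mem hΩm] with y hy
    rw [Real.norm_eq_abs, abs_mul]
    have h1 : |e * f y - d y * p| ≤ |f y| + |p| := by
      calc |e * f y - d y * p| ≤ |e * f y| + |d y * p| := abs_sub _ _
        _ = |e| * |f y| + |d y| * |p| := by rw [abs_mul, abs_mul]
        _ ≤ 1 * |f y| + 1 * |p| := add_le_add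
            (mul_le_mul_of_nonneg_right he (abs_nonneg _))
            (mul_le_mul_of_nonneg_right (hd y hy) (abs_nonneg _))
        _ = |f y| + |p| := by ring
    exact mul_le_mul (hK x hx y hy) h1 (abs_nonneg _) hK0

lemma pair_bound {N : ℕ} {Ω : Set (Fin N → ℝ)} (hΩm : MeasurableSet Ω)
    {V : (Fin N → ℝ) → (Fin N → ℝ) → ℝ}
    (hVc : Continuous fun p : (Fin N → ℝ) × (Fin N → ℝ) => V p.1 p.2)
    {K : ℝ} (hK : ∀ x ∈ Ω, ∀ y ∈ Ω, |V x y| ≤ K)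
    {d : (Fin N → ℝ) → ℝ} (hdm : Measurable d) (hd : ∀ y ∈ Ω, |d y| ≤ 1)
    {x : Fin N → ℝ} (hx : x ∈ Ω) {e : ℝ} (he : |e| ≤ 1) (hΩfin : volume Ω ≠ ⊤)
    {f g : (Fin N → ℝ) → ℝ} (hf : Integrable f (volume.restrict Ω))
    (hg : Integrable g (volume.restrict Ω)) (p q : ℝ) :
    |(∫ y in Ω, V x y * (e * f y - d y * p)) - ∫ y in Ω, V x y * (e * g y - d y * q)|
      ≤ K * (∫ y in Ω, |f y - g y|) + K * (volume Ω).toReal * |p - q| := by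
  haveI : IsFiniteMeasure (volume.restrict Ω) :=
    ⟨by rw [Measure.restrict_apply_univ]; exact hΩfin.lt_top⟩
  have hK0 : 0 ≤ K := le_trans (abs_nonneg _) (hK x hx x hx)
  have h1 := integrand_int hΩm hVc hK hdm hd hx he hΩfin hf p
  have h2 := integrand_int hΩm hVc hK hdm hd hx he hΩfin hg q
  rw [← integral_sub h1 h2]
  have hpt : ∀ y, (V x y * (e * f y - d y * p)) - (V x y * (e * g y - d y * q))
      = V x y * (e * (f y - g y) - d y * (p - q)) := fun y => by ring
  simp_rw [hpt]
  have hbint : Integrable (fun y => K * (|f y - g y| + |p - q|)) (volume.restrict Ω) :=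
    ((hf.sub hg).abs.add (integrable_const _)).const_mul K
  calc |∫ y in Ω, V x y * (e * (f y - g y) - d y * (p - q))|
      ≤ ∫ y in Ω, K * (|f y - g y| + |p - q|) := by
        rw [← Real.norm_eq_abs]
        apply norm_integral_le_of_norm_le hbint
        filter_upwards [ae_restrict_mem hΩm] with y hy
        rw [Real.norm_eq_abs, abs_mul]
        have h1' : |e * (f y - g y) - d y * (p - q)| ≤ |f y - g y| + |p - q| := by
          calc |e * (f y - g y) - d y * (p - q)| ≤ |e * (f y - g y)| + |d y * (p - q)| :=
              abs_sub _ _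
            _ = |e| * |f y - g y| + |d y| * |p - q| := by rw [abs_mul, abs_mul]
            _ ≤ 1 * |f y - g y| + 1 * |p - q| := add_le_add
                (mul_le_mul_of_nonneg_right he (abs_nonneg _))
                (mul_le_mul_of_nonneg_right (hd y hy) (abs_nonneg _))
            _ = |f y - g y| + |p - q| := by ring
        exact mul_le_mul (hK x hx y hy) h1' (abs_nonneg _) hK0
    _ = K * (∫ y in Ω, |f y - g y|) + K * (volume Ω).toReal * |p - q| := by
        rw [integral_const_mul]
        have hfg : Integrable (fun y => |f y - g y|) (volume.restrict Ω) := (hf.sub hg).abs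
        rw [integral_add hfg (integrable_const _), integral_const,
          measureReal_restrict_apply_univ, measureReal_def, smul_eq_mul]
        ring

lemma per_pair {T K C0 : ℝ} (hT : 0 < T) (hK : 0 ≤ K) (hC0 : 0 ≤ C0)
    {W : ℝ → ℝ} (hWnn : ∀ s, 0 ≤ W s)
    (hWint : Integrable W (volume.restrict (Set.Ioo 0 T)))
    {w Dw : ℝ → ℝ}
    (hd : ∀ t ∈ Icc (0:ℝ) T, HasDerivWithinAt w (Dw t) (Icc (0:ℝ) T) t)
    (hw0 : w 0 = 0)
    (hbound : ∀ᵐ s ∂(volume.restrict (Set.Ioo 0 T)), |Dw s| ≤ 2*K*W s + C0 * |w s|) :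
    ∀ τ ∈ Icc (0:ℝ) T, |w τ| ≤ (2*K*Real.exp (C0*T)) * ∫ s in (0:ℝ)..τ, W s := by
  haveI : IsFiniteMeasure (volume.restrict (Set.Ioo 0 T)) :=
    ⟨by rw [Measure.restrict_apply_univ]; simp [Real.volume_Ioo]⟩
  have hcont : ContinuousOn w (Icc 0 T) := fun t ht => (hd t ht).continuousWithinAt
  obtain ⟨M, hM⟩ := isCompact_Icc.exists_bound_of_continuousOn hcont
  -- interval integrability of W on subintervals of [0, T]
  have hWii : ∀ t1 t2 : ℝ, 0 ≤ t1 → t1 ≤ t2 → t2 ≤ T → IntervalIntegrable W volume t1 t2 := by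
    intro t1 t2 h1 h12 h2
    rw [intervalIntegrable_iff_integrableOn_Ioc_of_le h12]
    have hWon : IntegrableOn W (Set.Ioo 0 T) volume := hWint
    have : IntegrableOn W (Set.Ioo t1 t2) volume :=
      hWon.mono_set (Set.Ioo_subset_Ioo h1 h2)
    rwa [IntegrableOn, Measure.restrict_congr_set Ioo_ae_eq_Ioc] at this
  -- extension of w
  set wb : ℝ → ℝ := fun s => w (max 0 (min s T)) with hwb_def
  have hwbc : Continuous wb :=
    hcont.comp_continuous (continuous_const.max (continuous_id.min continuous_const))
      (fun s => ⟨le_max_left _ _, max_le hT.le (min_le_right _ _)⟩)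
  -- measurability of Dw via slopes
  set q : ℕ → ℝ → ℝ := fun n s => (wb (s + ((n:ℝ)+1)⁻¹) - wb s) * ((n:ℝ)+1) with hq_def
  have hqm : ∀ n, AEMeasurable (q n) (volume.restrict (Set.Ioo 0 T)) := by
    intro n
    exact (((hwbc.comp (continuous_id.add continuous_const)).sub hwbc).mul
      continuous_const).measurable.aemeasurable
  have htend : ∀ s ∈ Set.Ioo (0:ℝ) T, Tendsto (fun n => q n s) atTop (𝓝 (Dw s)) := by
    intro s hs
    have hslope := hasDerivWithinAt_iff_tendsto_slope.mp (hd s ⟨hs.1.le, hs.2.le⟩)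
    set z : ℕ → ℝ := fun n => s + ((n:ℝ)+1)⁻¹ with hz_def
    have hz0 : Tendsto (fun n : ℕ => ((n:ℝ)+1)⁻¹) atTop (𝓝 0) := by
      simpa [one_div] using tendsto_one_div_add_atTop_nhds_zero_nat (𝕜 := ℝ)
    have hzt : Tendsto z atTop (𝓝 s) := by
      have := (tendsto_const_nhds : Tendsto (fun _ : ℕ => s) atTop (𝓝 s)).add hz0
      simpa using this
    have hev : ∀ᶠ (n : ℕ) in atTop, ((n:ℝ)+1)⁻¹ < T - s :=
      Filter.Tendsto.eventually_lt_const (by linarith [hs.2] : (0:ℝ) < T - s) hz0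
    have hmem : ∀ᶠ n in atTop, z n ∈ Icc (0:ℝ) T \ {s} := by
      filter_upwards [hev] with n hn
      have hpos : (0:ℝ) < ((n:ℝ)+1)⁻¹ := by positivity
      refine ⟨⟨by simp only [hz_def]; linarith [hs.1], by simp only [hz_def]; linarith⟩, ?_⟩
      simp only [mem_singleton_iff, hz_def]
      intro hcon
      nlinarith
    have hzt' : Tendsto z atTop (𝓝[Icc (0:ℝ) T \ {s}] s) :=
      tendsto_nhdsWithin_iff.mpr ⟨hzt, hmem⟩
    have hcomp := hslope.comp hzt'
    apply hcomp.congr'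
    filter_upwards [hev] with n hn
    have hpos : (0:ℝ) < ((n:ℝ)+1)⁻¹ := by positivity
    have h1 : max 0 (min (z n) T) = z n := by
      rw [min_eq_left (by simp only [hz_def]; linarith), max_eq_right (by simp only [hz_def]; linarith [hs.1])]
    have h2 : max 0 (min s T) = s := by
      rw [min_eq_left hs.2.le, max_eq_right hs.1.le]
    show slope w s (z n) = q n s
    simp only [hq_def, hwb_def]
    rw [show s + ((n:ℝ)+1)⁻¹ = z n from rfl, h1, h2, slope_def_field]
    rw [show z n - s = ((n:ℝ)+1)⁻¹ by simp [hz_def]]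
    rw [div_eq_mul_inv, inv_inv]
  have hDm : AEMeasurable Dw (volume.restrict (Set.Ioo 0 T)) := by
    apply aemeasurable_of_tendsto_metrizable_ae' hqm
    filter_upwards [ae_restrict_mem measurableSet_Ioo] with s hs using htend s hs
  -- integrability of Dw
  have hDint : IntegrableOn Dw (Set.Ioo 0 T) volume := by
    apply Integrable.mono' ((hWint.const_mul (2*K)).add (integrable_const (C0 * M)))
      hDm.aestronglyMeasurable
    filter_upwards [hbound, ae_restrict_mem measurableSet_Ioo] with s hsb hs
    rw [Real.norm_eq_abs]
    have : |w s| ≤ M := by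
      have := hM s ⟨hs.1.le, hs.2.le⟩; rwa [Real.norm_eq_abs] at this
    calc |Dw s| ≤ 2*K*W s + C0 * |w s| := hsb
      _ ≤ 2*K*W s + C0 * M := by nlinarith
  have hDii : ∀ t ∈ Icc (0:ℝ) T, IntervalIntegrable Dw volume 0 t := by
    intro t ht
    rw [intervalIntegrable_iff_integrableOn_Ioc_of_le ht.1]
    have : IntegrableOn Dw (Set.Ioo 0 t) volume :=
      hDint.mono_set (fun s hs => ⟨hs.1, lt_of_lt_of_le hs.2 ht.2⟩)
    rwa [IntegrableOn, Measure.restrict_congr_set Ioo_ae_eq_Ioc] at this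
  -- FTC
  have hftc : ∀ t ∈ Icc (0:ℝ) T, w t = ∫ s in (0:ℝ)..t, Dw s := by
    intro t ht
    have := intervalIntegral.integral_eq_sub_of_hasDeriv_right_of_le ht.1
      (hcont.mono (Icc_subset_Icc le_rfl ht.2))
      (fun s hs => (hd s ⟨hs.1.le, hs.2.le.trans ht.2⟩).mono_of_mem_nhdsWithin
        (mem_nhdsWithin.mpr ⟨Iio T, isOpen_Iio, lt_of_lt_of_le hs.2 ht.2,
          fun y hy => ⟨(hs.1.trans hy.2).le, hy.1.le⟩⟩))
      (hDii t ht)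
    rw [this, hw0, sub_zero]
  -- key integral inequality
  have hkey : ∀ t ∈ Icc (0:ℝ) T,
      |w t| ≤ 2*K*(∫ s in (0:ℝ)..t, W s) + C0 * ∫ s in (0:ℝ)..t, |w s| := by
    intro t ht
    have hwcont : ContinuousOn (fun s => |w s|) (Icc 0 t) :=
      (hcont.mono (Icc_subset_Icc le_rfl ht.2)).abs
    have hwint : IntegrableOn (fun s => |w s|) (Set.Ioc 0 t) volume :=
      (hwcont.integrableOn_Icc).mono_set Ioc_subset_Icc_self
    have hWint' : IntegrableOn W (Set.Ioc 0 t) volume := by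
      rw [← intervalIntegrable_iff_integrableOn_Ioc_of_le ht.1]
      exact hWii 0 t le_rfl ht.1 ht.2
    have hDint' : IntegrableOn (fun s => |Dw s|) (Set.Ioc 0 t) volume := by
      rw [← intervalIntegrable_iff_integrableOn_Ioc_of_le ht.1]
      exact (hDii t ht).abs
    have hbnd' : ∀ᵐ s ∂(volume.restrict (Set.Ioc 0 t)), |Dw s| ≤ 2*K*W s + C0 * |w s| := by
      have h1 : ∀ᵐ s ∂(volume.restrict (Set.Ioo 0 t)), |Dw s| ≤ 2*K*W s + C0 * |w s| :=
        ae_restrict_of_ae_restrict_of_subset (Set.Ioo_subset_Ioo le_rfl ht.2) hbound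
      rwa [Measure.restrict_congr_set Ioo_ae_eq_Ioc] at h1
    rw [hftc t ht]
    calc |∫ s in (0:ℝ)..t, Dw s| ≤ ∫ s in (0:ℝ)..t, |Dw s| :=
        intervalIntegral.abs_integral_le_integral_abs ht.1
      _ ≤ ∫ s in (0:ℝ)..t, (2*K*W s + C0 * |w s|) := by
          rw [intervalIntegral.integral_of_le ht.1, intervalIntegral.integral_of_le ht.1]
          exact integral_mono_ae hDint'
            ((hWint'.const_mul (2*K)).add (hwint.const_mul C0)) hbnd'
      _ = 2*K*(∫ s in (0:ℝ)..t, W s) + C0 * ∫ s in (0:ℝ)..t, |w s| := by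
          rw [intervalIntegral.integral_of_le ht.1, intervalIntegral.integral_of_le ht.1,
            intervalIntegral.integral_of_le ht.1]
          rw [integral_add (hWint'.const_mul (2*K)) (hwint.const_mul C0),
            integral_const_mul, integral_const_mul]
  -- Gronwall
  intro τ hτ
  have hΦτnn : 0 ≤ ∫ s in (0:ℝ)..τ, W s :=
    intervalIntegral.integral_nonneg hτ.1 (fun s _ => hWnn s)
  have hmono : ∀ t ∈ Icc (0:ℝ) τ, (∫ s in (0:ℝ)..t, W s) ≤ ∫ s in (0:ℝ)..τ, W s := by
    intro t ht
    have h1 := hWii 0 t le_rfl ht.1 (ht.2.trans hτ.2)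
    have h2 := hWii t τ ht.1 ht.2 hτ.2
    have hadd := intervalIntegral.integral_add_adjacent_intervals h1 h2
    have hnn := intervalIntegral.integral_nonneg (μ := volume) (f := W) ht.2
      (fun s _ => hWnn s)
    linarith
  have hgron := gron_aux (h := fun t => |w t|) (A := 2*K*∫ s in (0:ℝ)..τ, W s) (C := C0)
    (mul_nonneg (by linarith) hΦτnn) hC0 hτ.1
    ((hcont.mono (Icc_subset_Icc le_rfl hτ.2)).abs) (fun t _ => abs_nonneg _)
    (fun t ht => by
      have hk := hkey t ⟨ht.1, ht.2.trans hτ.2⟩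
      have hm := hmono t ht
      nlinarith)
  calc |w τ| ≤ (2*K*∫ s in (0:ℝ)..τ, W s) * Real.exp (C0 * τ) := hgron
    _ ≤ (2*K*∫ s in (0:ℝ)..τ, W s) * Real.exp (C0*T) :=
        mul_le_mul_of_nonneg_left
          (Real.exp_le_exp.mpr (mul_le_mul_of_nonneg_left hτ.2 hC0))
          (mul_nonneg (by linarith) hΦτnn)
    _ = (2*K*Real.exp (C0*T)) * ∫ s in (0:ℝ)..τ, W s := by ring

theorem stmt7 {N : ℕ} (Ω : Set (Fin N → ℝ))
    (hΩo : IsOpen Ω) (hΩb : IsBounded Ω) (hΩc : IsConnected Ω)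
    (J G R : (Fin N → ℝ) → (Fin N → ℝ) → ℝ)
    (hJ : KernelH J) (hG : KernelH G) (hR : KernelH R)
    (X : (Fin N → ℝ) → ℝ) (hXmeas : Measurable X) (hX : ∀ x ∈ Ω, 0 < X x ∧ X x < 1)
    (T : ℝ) (hT : 0 < T)
    (a0 b0 : (Fin N → ℝ) → ℝ)
    (ha0 : MemLp a0 2 (volume.restrict Ω)) (hb0 : MemLp b0 2 (volume.restrict Ω))
    (a b a' b' : ℝ → (Fin N → ℝ) → ℝ)
    (haL2 : MemLp (fun p : ℝ × (Fin N → ℝ) => a p.1 p.2) 2 (((volume : Measure ℝ).restrict (Set.Ioo 0 T)).prod (volume.restrict Ω)))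
    (hbL2 : MemLp (fun p : ℝ × (Fin N → ℝ) => b p.1 p.2) 2 (((volume : Measure ℝ).restrict (Set.Ioo 0 T)).prod (volume.restrict Ω)))
    (ha'L2 : MemLp (fun p : ℝ × (Fin N → ℝ) => a' p.1 p.2) 2 (((volume : Measure ℝ).restrict (Set.Ioo 0 T)).prod (volume.restrict Ω)))
    (hb'L2 : MemLp (fun p : ℝ × (Fin N → ℝ) => b' p.1 p.2) 2 (((volume : Measure ℝ).restrict (Set.Ioo 0 T)).prod (volume.restrict Ω)))
    (hsysa : ∀ x ∈ Ω, ∀ t ∈ Set.Icc (0 : ℝ) T,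
      HasDerivWithinAt (fun s => a s x)
          ((∫ y in Ω, J x y * (X x * a t y - X y * a t x)) +
            (∫ y in Ω, R x y * (X x * b t y - (1 - X y) * a t x))) (Set.Icc 0 T) t)
    (hsysb : ∀ x ∈ Ω, ∀ t ∈ Set.Icc (0 : ℝ) T,
      HasDerivWithinAt (fun s => b s x)
          ((∫ y in Ω, G x y * ((1 - X x) * b t y - (1 - X y) * b t x)) +
            (∫ y in Ω, R x y * ((1 - X x) * a t y - X y * b t x))) (Set.Icc 0 T) t)
    (hsysa' : ∀ x ∈ Ω, ∀ t ∈ Set.Icc (0 : ℝ) T,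
      HasDerivWithinAt (fun s => a' s x)
          ((∫ y in Ω, J x y * (X x * a' t y - X y * a' t x)) +
            (∫ y in Ω, R x y * (X x * b' t y - (1 - X y) * a' t x))) (Set.Icc 0 T) t)
    (hsysb' : ∀ x ∈ Ω, ∀ t ∈ Set.Icc (0 : ℝ) T,
      HasDerivWithinAt (fun s => b' s x)
          ((∫ y in Ω, G x y * ((1 - X x) * b' t y - (1 - X y) * b' t x)) +
            (∫ y in Ω, R x y * ((1 - X x) * a' t y - X y * b' t x))) (Set.Icc 0 T) t)
    (hinita : ∀ x ∈ Ω, a 0 x = a0 x) (hinitb : ∀ x ∈ Ω, b 0 x = b0 x)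
    (hinita' : ∀ x ∈ Ω, a' 0 x = a0 x) (hinitb' : ∀ x ∈ Ω, b' 0 x = b0 x) :
    (∀ᵐ p ∂(((volume : Measure ℝ).restrict (Set.Ioo 0 T)).prod (volume.restrict Ω)), a p.1 p.2 = a' p.1 p.2) ∧
      (∀ᵐ p ∂(((volume : Measure ℝ).restrict (Set.Ioo 0 T)).prod (volume.restrict Ω)), b p.1 p.2 = b' p.1 p.2) := by
  classical
  have hΩm : MeasurableSet Ω := hΩo.measurableSet
  have hΩfin : volume Ω ≠ ⊤ :=
    (lt_of_le_of_lt (measure_mono subset_closure) hΩb.isCompact_closure.measure_lt_top).ne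
  haveI hfinμ : IsFiniteMeasure (volume.restrict Ω) :=
    ⟨by rw [Measure.restrict_apply_univ]; exact hΩfin.lt_top⟩
  haveI hfinν : IsFiniteMeasure ((volume : Measure ℝ).restrict (Set.Ioo 0 T)) :=
    ⟨by rw [Measure.restrict_apply_univ]; simp [Real.volume_Ioo]⟩
  -- kernel bounds
  have hbd : ∀ V : (Fin N → ℝ) → (Fin N → ℝ) → ℝ, KernelH V →
      ∃ K0 : ℝ, ∀ x ∈ Ω, ∀ y ∈ Ω, |V x y| ≤ K0 := by
    intro V hV
    obtain ⟨K0, hK0⟩ := (hΩb.isCompact_closure.prod hΩb.isCompact_closure).exists_bound_of_continuousOn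
      hV.1.continuousOn
    refine ⟨K0, fun x hx y hy => ?_⟩
    have := hK0 (x, y) ⟨subset_closure hx, subset_closure hy⟩
    rwa [Real.norm_eq_abs] at this
  obtain ⟨KJ, hKJ⟩ := hbd J hJ
  obtain ⟨KG, hKG⟩ := hbd G hG
  obtain ⟨KR, hKR⟩ := hbd R hR
  set K := max (max KJ KG) (max KR 0) with hKdef
  have hK0 : 0 ≤ K := le_trans (le_max_right KR 0) (le_max_right _ _)
  have hKJ' : ∀ x ∈ Ω, ∀ y ∈ Ω, |J x y| ≤ K := fun x hx y hy =>
    (hKJ x hx y hy).trans ((le_max_left _ _).trans (le_max_left _ _))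
  have hKG' : ∀ x ∈ Ω, ∀ y ∈ Ω, |G x y| ≤ K := fun x hx y hy =>
    (hKG x hx y hy).trans ((le_max_right _ _).trans (le_max_left _ _))
  have hKR' : ∀ x ∈ Ω, ∀ y ∈ Ω, |R x y| ≤ K := fun x hx y hy =>
    (hKR x hx y hy).trans ((le_max_left _ _).trans (le_max_right _ _))
  -- X bounds
  have hX1 : ∀ y ∈ Ω, |X y| ≤ 1 := fun y hy =>
    abs_le.mpr ⟨by linarith [(hX y hy).1], (hX y hy).2.le⟩
  have hX2 : ∀ y ∈ Ω, |1 - X y| ≤ 1 := fun y hy =>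
    abs_le.mpr ⟨by linarith [(hX y hy).2], by linarith [(hX y hy).1]⟩
  have hXm' : Measurable (fun y => 1 - X y) := measurable_const.sub hXmeas
  -- measurable representatives
  set ta := haL2.1.mk _ with hta_def
  have htasm : StronglyMeasurable ta := haL2.1.stronglyMeasurable_mk
  have htae : (fun p : ℝ × (Fin N → ℝ) => a p.1 p.2)
      =ᵐ[(((volume : Measure ℝ).restrict (Set.Ioo 0 T)).prod (volume.restrict Ω))] ta :=
    haL2.1.ae_eq_mk
  have htaint : Integrable ta (((volume : Measure ℝ).restrict (Set.Ioo 0 T)).prod (volume.restrict Ω)) :=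
    (haL2.ae_eq htae).integrable (by norm_num)
  set tb := hbL2.1.mk _ with htb_def
  have htbsm : StronglyMeasurable tb := hbL2.1.stronglyMeasurable_mk
  have htbe : (fun p : ℝ × (Fin N → ℝ) => b p.1 p.2)
      =ᵐ[(((volume : Measure ℝ).restrict (Set.Ioo 0 T)).prod (volume.restrict Ω))] tb :=
    hbL2.1.ae_eq_mk
  have htbint : Integrable tb (((volume : Measure ℝ).restrict (Set.Ioo 0 T)).prod (volume.restrict Ω)) :=
    (hbL2.ae_eq htbe).integrable (by norm_num)
  set ta' := ha'L2.1.mk _ with hta'_def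
  have hta'sm : StronglyMeasurable ta' := ha'L2.1.stronglyMeasurable_mk
  have hta'e : (fun p : ℝ × (Fin N → ℝ) => a' p.1 p.2)
      =ᵐ[(((volume : Measure ℝ).restrict (Set.Ioo 0 T)).prod (volume.restrict Ω))] ta' :=
    ha'L2.1.ae_eq_mk
  have hta'int : Integrable ta' (((volume : Measure ℝ).restrict (Set.Ioo 0 T)).prod (volume.restrict Ω)) :=
    (ha'L2.ae_eq hta'e).integrable (by norm_num)
  set tb' := hb'L2.1.mk _ with htb'_def
  have htb'sm : StronglyMeasurable tb' := hb'L2.1.stronglyMeasurable_mk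
  have htb'e : (fun p : ℝ × (Fin N → ℝ) => b' p.1 p.2)
      =ᵐ[(((volume : Measure ℝ).restrict (Set.Ioo 0 T)).prod (volume.restrict Ω))] tb' :=
    hb'L2.1.ae_eq_mk
  have htb'int : Integrable tb' (((volume : Measure ℝ).restrict (Set.Ioo 0 T)).prod (volume.restrict Ω)) :=
    (hb'L2.ae_eq htb'e).integrable (by norm_num)
  -- the L¹-type quantity
  set W : ℝ → ℝ := fun s => ∫ y, (‖ta (s,y) - ta' (s,y)‖ + ‖tb (s,y) - tb' (s,y)‖)
      ∂(volume.restrict Ω) with hWdef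
  have hWnn : ∀ s, 0 ≤ W s := fun s =>
    integral_nonneg (fun y => add_nonneg (norm_nonneg _) (norm_nonneg _))
  have hWint : Integrable W ((volume : Measure ℝ).restrict (Set.Ioo 0 T)) := by
    have h : Integrable (fun p : ℝ × (Fin N → ℝ) => ‖ta p - ta' p‖ + ‖tb p - tb' p‖)
        (((volume : Measure ℝ).restrict (Set.Ioo 0 T)).prod (volume.restrict Ω)) :=
      (htaint.sub hta'int).norm.add (htbint.sub htb'int).norm
    exact h.integral_prod_left
  -- good times
  have hgood : ∀ᵐ s ∂((volume : Measure ℝ).restrict (Set.Ioo 0 T)),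
      (∀ᵐ y ∂(volume.restrict Ω), a s y = ta (s,y)) ∧
      (∀ᵐ y ∂(volume.restrict Ω), b s y = tb (s,y)) ∧
      (∀ᵐ y ∂(volume.restrict Ω), a' s y = ta' (s,y)) ∧
      (∀ᵐ y ∂(volume.restrict Ω), b' s y = tb' (s,y)) ∧
      Integrable (fun y => ta (s,y)) (volume.restrict Ω) ∧
      Integrable (fun y => tb (s,y)) (volume.restrict Ω) ∧
      Integrable (fun y => ta' (s,y)) (volume.restrict Ω) ∧
      Integrable (fun y => tb' (s,y)) (volume.restrict Ω) := by
    filter_upwards [Measure.ae_ae_of_ae_prod htae, Measure.ae_ae_of_ae_prod htbe,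
      Measure.ae_ae_of_ae_prod hta'e, Measure.ae_ae_of_ae_prod htb'e,
      htaint.prod_right_ae, htbint.prod_right_ae, hta'int.prod_right_ae, htb'int.prod_right_ae]
      with s h1 h2 h3 h4 h5 h6 h7 h8
    exact ⟨h1, h2, h3, h4, h5, h6, h7, h8⟩
  set C0 : ℝ := 2 * K * (volume Ω).toReal with hC0def
  have hC0 : 0 ≤ C0 := by
    have := ENNReal.toReal_nonneg (a := volume Ω)
    positivity
  -- pointwise bounds via per_pair
  have hua : ∀ x ∈ Ω, ∀ τ ∈ Icc (0:ℝ) T,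
      |a τ x - a' τ x| ≤ (2*K*Real.exp (C0*T)) * ∫ s in (0:ℝ)..τ, W s := by
    intro x hx
    apply per_pair hT hK0 hC0 hWnn hWint
      (w := fun t => a t x - a' t x)
      (Dw := fun s => ((∫ y in Ω, J x y * (X x * a s y - X y * a s x)) +
            (∫ y in Ω, R x y * (X x * b s y - (1 - X y) * a s x))) -
            ((∫ y in Ω, J x y * (X x * a' s y - X y * a' s x)) +
            (∫ y in Ω, R x y * (X x * b' s y - (1 - X y) * a' s x))))
    · intro t ht
      exact (hsysa x hx t ht).sub (hsysa' x hx t ht)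
    · rw [hinita x hx, hinita' x hx, sub_self]
    · filter_upwards [hgood] with s hs
      obtain ⟨h1, h2, h3, h4, h5, h6, h7, h8⟩ := hs
      have hais : Integrable (fun y => a s y) (volume.restrict Ω) :=
        h5.congr (h1.mono fun y hy => hy.symm)
      have hbis : Integrable (fun y => b s y) (volume.restrict Ω) :=
        h6.congr (h2.mono fun y hy => hy.symm)
      have ha'is : Integrable (fun y => a' s y) (volume.restrict Ω) :=
        h7.congr (h3.mono fun y hy => hy.symm)
      have hb'is : Integrable (fun y => b' s y) (volume.restrict Ω) :=
        h8.congr (h4.mono fun y hy => hy.symm)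
      have hbJ := pair_bound hΩm hJ.1 hKJ' hXmeas hX1 hx (hX1 x hx) hΩfin hais ha'is
        (a s x) (a' s x)
      have hbR := pair_bound hΩm hR.1 hKR' hXm' hX2 hx (hX1 x hx) hΩfin hbis hb'is
        (a s x) (a' s x)
      have hWs1 : (∫ y in Ω, |a s y - a' s y|)
          = ∫ y, ‖ta (s,y) - ta' (s,y)‖ ∂(volume.restrict Ω) := by
        apply integral_congr_ae
        filter_upwards [h1, h3] with y e1 e3
        rw [e1, e3, Real.norm_eq_abs]
      have hWs2 : (∫ y in Ω, |b s y - b' s y|)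
          = ∫ y, ‖tb (s,y) - tb' (s,y)‖ ∂(volume.restrict Ω) := by
        apply integral_congr_ae
        filter_upwards [h2, h4] with y e1 e3
        rw [e1, e3, Real.norm_eq_abs]
      have hWsum : W s = (∫ y in Ω, |a s y - a' s y|) + ∫ y in Ω, |b s y - b' s y| := by
        rw [hWs1, hWs2, hWdef]
        exact integral_add (h5.sub h7).norm (h6.sub h8).norm
      have habs : |(((∫ y in Ω, J x y * (X x * a s y - X y * a s x)) +
            (∫ y in Ω, R x y * (X x * b s y - (1 - X y) * a s x))) -
            ((∫ y in Ω, J x y * (X x * a' s y - X y * a' s x)) +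
            (∫ y in Ω, R x y * (X x * b' s y - (1 - X y) * a' s x))))|
          ≤ |(∫ y in Ω, J x y * (X x * a s y - X y * a s x)) -
              ∫ y in Ω, J x y * (X x * a' s y - X y * a' s x)| +
            |(∫ y in Ω, R x y * (X x * b s y - (1 - X y) * a s x)) -
              ∫ y in Ω, R x y * (X x * b' s y - (1 - X y) * a' s x)| := by
        have heq : (((∫ y in Ω, J x y * (X x * a s y - X y * a s x)) +
            (∫ y in Ω, R x y * (X x * b s y - (1 - X y) * a s x))) -
            ((∫ y in Ω, J x y * (X x * a' s y - X y * a' s x)) +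
            (∫ y in Ω, R x y * (X x * b' s y - (1 - X y) * a' s x))))
            = ((∫ y in Ω, J x y * (X x * a s y - X y * a s x)) -
              ∫ y in Ω, J x y * (X x * a' s y - X y * a' s x)) +
              ((∫ y in Ω, R x y * (X x * b s y - (1 - X y) * a s x)) -
              ∫ y in Ω, R x y * (X x * b' s y - (1 - X y) * a' s x)) := by ring
        rw [heq]
        exact abs_add_le _ _
      have hint1 : 0 ≤ ∫ y in Ω, |a s y - a' s y| :=
        integral_nonneg (fun y => abs_nonneg _)
      have hint2 : 0 ≤ ∫ y in Ω, |b s y - b' s y| :=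
        integral_nonneg (fun y => abs_nonneg _)
      calc |(((∫ y in Ω, J x y * (X x * a s y - X y * a s x)) +
            (∫ y in Ω, R x y * (X x * b s y - (1 - X y) * a s x))) -
            ((∫ y in Ω, J x y * (X x * a' s y - X y * a' s x)) +
            (∫ y in Ω, R x y * (X x * b' s y - (1 - X y) * a' s x))))|
          ≤ (K * (∫ y in Ω, |a s y - a' s y|) + K * (volume Ω).toReal * |a s x - a' s x|) +
            (K * (∫ y in Ω, |b s y - b' s y|) + K * (volume Ω).toReal * |a s x - a' s x|) :=
            habs.trans (add_le_add hbJ hbR)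
        _ ≤ 2*K*W s + C0 * |a s x - a' s x| := by
            rw [hWsum, hC0def]
            nlinarith [abs_nonneg (a s x - a' s x), ENNReal.toReal_nonneg (a := volume Ω)]
  have hub : ∀ x ∈ Ω, ∀ τ ∈ Icc (0:ℝ) T,
      |b τ x - b' τ x| ≤ (2*K*Real.exp (C0*T)) * ∫ s in (0:ℝ)..τ, W s := by
    intro x hx
    apply per_pair hT hK0 hC0 hWnn hWint
      (w := fun t => b t x - b' t x)
      (Dw := fun s => ((∫ y in Ω, G x y * ((1 - X x) * b s y - (1 - X y) * b s x)) +
            (∫ y in Ω, R x y * ((1 - X x) * a s y - X y * b s x))) -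
            ((∫ y in Ω, G x y * ((1 - X x) * b' s y - (1 - X y) * b' s x)) +
            (∫ y in Ω, R x y * ((1 - X x) * a' s y - X y * b' s x))))
    · intro t ht
      exact (hsysb x hx t ht).sub (hsysb' x hx t ht)
    · rw [hinitb x hx, hinitb' x hx, sub_self]
    · filter_upwards [hgood] with s hs
      obtain ⟨h1, h2, h3, h4, h5, h6, h7, h8⟩ := hs
      have hais : Integrable (fun y => a s y) (volume.restrict Ω) :=
        h5.congr (h1.mono fun y hy => hy.symm)
      have hbis : Integrable (fun y => b s y) (volume.restrict Ω) :=
        h6.congr (h2.mono fun y hy => hy.symm)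
      have ha'is : Integrable (fun y => a' s y) (volume.restrict Ω) :=
        h7.congr (h3.mono fun y hy => hy.symm)
      have hb'is : Integrable (fun y => b' s y) (volume.restrict Ω) :=
        h8.congr (h4.mono fun y hy => hy.symm)
      have hbG := pair_bound hΩm hG.1 hKG' hXm' hX2 hx (hX2 x hx) hΩfin hbis hb'is
        (b s x) (b' s x)
      have hbR := pair_bound hΩm hR.1 hKR' hXmeas hX1 hx (hX2 x hx) hΩfin hais ha'is
        (b s x) (b' s x)
      have hWs1 : (∫ y in Ω, |a s y - a' s y|)
          = ∫ y, ‖ta (s,y) - ta' (s,y)‖ ∂(volume.restrict Ω) := by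
        apply integral_congr_ae
        filter_upwards [h1, h3] with y e1 e3
        rw [e1, e3, Real.norm_eq_abs]
      have hWs2 : (∫ y in Ω, |b s y - b' s y|)
          = ∫ y, ‖tb (s,y) - tb' (s,y)‖ ∂(volume.restrict Ω) := by
        apply integral_congr_ae
        filter_upwards [h2, h4] with y e1 e3
        rw [e1, e3, Real.norm_eq_abs]
      have hWsum : W s = (∫ y in Ω, |a s y - a' s y|) + ∫ y in Ω, |b s y - b' s y| := by
        rw [hWs1, hWs2, hWdef]
        exact integral_add (h5.sub h7).norm (h6.sub h8).norm
      have habs : |(((∫ y in Ω, G x y * ((1 - X x) * b s y - (1 - X y) * b s x)) +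
            (∫ y in Ω, R x y * ((1 - X x) * a s y - X y * b s x))) -
            ((∫ y in Ω, G x y * ((1 - X x) * b' s y - (1 - X y) * b' s x)) +
            (∫ y in Ω, R x y * ((1 - X x) * a' s y - X y * b' s x))))|
          ≤ |(∫ y in Ω, G x y * ((1 - X x) * b s y - (1 - X y) * b s x)) -
              ∫ y in Ω, G x y * ((1 - X x) * b' s y - (1 - X y) * b' s x)| +
            |(∫ y in Ω, R x y * ((1 - X x) * a s y - X y * b s x)) -
              ∫ y in Ω, R x y * ((1 - X x) * a' s y - X y * b' s x)| := by
        have heq : (((∫ y in Ω, G x y * ((1 - X x) * b s y - (1 - X y) * b s x)) +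
            (∫ y in Ω, R x y * ((1 - X x) * a s y - X y * b s x))) -
            ((∫ y in Ω, G x y * ((1 - X x) * b' s y - (1 - X y) * b' s x)) +
            (∫ y in Ω, R x y * ((1 - X x) * a' s y - X y * b' s x))))
            = ((∫ y in Ω, G x y * ((1 - X x) * b s y - (1 - X y) * b s x)) -
              ∫ y in Ω, G x y * ((1 - X x) * b' s y - (1 - X y) * b' s x)) +
              ((∫ y in Ω, R x y * ((1 - X x) * a s y - X y * b s x)) -
              ∫ y in Ω, R x y * ((1 - X x) * a' s y - X y * b' s x)) := by ring
        rw [heq]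
        exact abs_add_le _ _
      have hint1 : 0 ≤ ∫ y in Ω, |a s y - a' s y| :=
        integral_nonneg (fun y => abs_nonneg _)
      have hint2 : 0 ≤ ∫ y in Ω, |b s y - b' s y| :=
        integral_nonneg (fun y => abs_nonneg _)
      calc |(((∫ y in Ω, G x y * ((1 - X x) * b s y - (1 - X y) * b s x)) +
            (∫ y in Ω, R x y * ((1 - X x) * a s y - X y * b s x))) -
            ((∫ y in Ω, G x y * ((1 - X x) * b' s y - (1 - X y) * b' s x)) +
            (∫ y in Ω, R x y * ((1 - X x) * a' s y - X y * b' s x))))|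
          ≤ (K * (∫ y in Ω, |b s y - b' s y|) + K * (volume Ω).toReal * |b s x - b' s x|) +
            (K * (∫ y in Ω, |a s y - a' s y|) + K * (volume Ω).toReal * |b s x - b' s x|) :=
            habs.trans (add_le_add hbG hbR)
        _ ≤ 2*K*W s + C0 * |b s x - b' s x| := by
            rw [hWsum, hC0def]
            nlinarith [abs_nonneg (b s x - b' s x), ENNReal.toReal_nonneg (a := volume Ω)]
  -- the integral quantity Φ and final Gronwall
  set B : ℝ := 2*K*Real.exp (C0*T) with hBdef
  have hB0 : 0 ≤ B := by positivity
  set Φ : ℝ → ℝ := fun t => ∫ s in (0:ℝ)..t, W s with hΦdef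
  set C2 : ℝ := 2 * (volume Ω).toReal * B with hC2def
  have hC2 : 0 ≤ C2 := by
    have := ENNReal.toReal_nonneg (a := volume Ω)
    positivity
  have hWIccT : IntegrableOn W (Icc (0:ℝ) T) volume := by
    have h : IntegrableOn W (Set.Ioo (0:ℝ) T) volume := hWint
    rwa [IntegrableOn, Measure.restrict_congr_set Ioo_ae_eq_Icc] at h
  have hΦcont : ContinuousOn Φ (Icc (0:ℝ) T) := by
    have := intervalIntegral.continuousOn_primitive_interval
      (a := (0:ℝ)) (b := T) (μ := volume) (f := W)
      (by rwa [uIcc_of_le hT.le])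
    rwa [uIcc_of_le hT.le] at this
  have hΦnn : ∀ t ∈ Icc (0:ℝ) T, 0 ≤ Φ t := fun t ht =>
    intervalIntegral.integral_nonneg ht.1 (fun s _ => hWnn s)
  -- W s ≤ C2 * Φ s a.e.
  have hWΦ : ∀ᵐ s ∂((volume : Measure ℝ).restrict (Set.Ioo 0 T)), W s ≤ C2 * Φ s := by
    filter_upwards [hgood, ae_restrict_mem measurableSet_Ioo] with s hs hsmem
    obtain ⟨h1, h2, h3, h4, h5, h6, h7, h8⟩ := hs
    have hsIcc : s ∈ Icc (0:ℝ) T := ⟨hsmem.1.le, hsmem.2.le⟩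
    have hais : Integrable (fun y => a s y) (volume.restrict Ω) :=
      h5.congr (h1.mono fun y hy => hy.symm)
    have hbis : Integrable (fun y => b s y) (volume.restrict Ω) :=
      h6.congr (h2.mono fun y hy => hy.symm)
    have ha'is : Integrable (fun y => a' s y) (volume.restrict Ω) :=
      h7.congr (h3.mono fun y hy => hy.symm)
    have hb'is : Integrable (fun y => b' s y) (volume.restrict Ω) :=
      h8.congr (h4.mono fun y hy => hy.symm)
    have hWs1 : (∫ y in Ω, |a s y - a' s y|)
        = ∫ y, ‖ta (s,y) - ta' (s,y)‖ ∂(volume.restrict Ω) := by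
      apply integral_congr_ae
      filter_upwards [h1, h3] with y e1 e3
      rw [e1, e3, Real.norm_eq_abs]
    have hWs2 : (∫ y in Ω, |b s y - b' s y|)
        = ∫ y, ‖tb (s,y) - tb' (s,y)‖ ∂(volume.restrict Ω) := by
      apply integral_congr_ae
      filter_upwards [h2, h4] with y e1 e3
      rw [e1, e3, Real.norm_eq_abs]
    have hWsum : W s = (∫ y in Ω, |a s y - a' s y|) + ∫ y in Ω, |b s y - b' s y| := by
      rw [hWs1, hWs2, hWdef]
      exact integral_add (h5.sub h7).norm (h6.sub h8).norm
    have hm1 : (∫ y in Ω, |a s y - a' s y|) ≤ (volume Ω).toReal * (B * Φ s) := by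
      calc (∫ y in Ω, |a s y - a' s y|) ≤ ∫ _y in Ω, B * Φ s := by
            apply integral_mono_ae (hais.sub ha'is).abs (integrable_const _)
            filter_upwards [ae_restrict_mem hΩm] with y hy
            exact hua y hy s hsIcc
        _ = (volume Ω).toReal * (B * Φ s) := by
            rw [integral_const, measureReal_restrict_apply_univ, measureReal_def, smul_eq_mul]
    have hm2 : (∫ y in Ω, |b s y - b' s y|) ≤ (volume Ω).toReal * (B * Φ s) := by
      calc (∫ y in Ω, |b s y - b' s y|) ≤ ∫ _y in Ω, B * Φ s := by
            apply integral_mono_ae (hbis.sub hb'is).abs (integrable_const _)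
            filter_upwards [ae_restrict_mem hΩm] with y hy
            exact hub y hy s hsIcc
        _ = (volume Ω).toReal * (B * Φ s) := by
            rw [integral_const, measureReal_restrict_apply_univ, measureReal_def, smul_eq_mul]
    rw [hWsum, hC2def]
    linarith
  -- Gronwall for Φ
  have hΦ0 : ∀ τ ∈ Icc (0:ℝ) T, Φ τ = 0 := by
    intro τ hτ
    have hineq : ∀ t ∈ Icc (0:ℝ) τ, Φ t ≤ 0 + C2 * ∫ s in (0:ℝ)..t, Φ s := by
      intro t ht
      have htT : t ∈ Icc (0:ℝ) T := ⟨ht.1, ht.2.trans hτ.2⟩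
      have hWIoc : IntegrableOn W (Set.Ioc 0 t) volume :=
        hWIccT.mono_set ((Ioc_subset_Icc_self).trans (Icc_subset_Icc le_rfl htT.2))
      have hΦIoc : IntegrableOn Φ (Set.Ioc 0 t) volume :=
        ((hΦcont.mono (Icc_subset_Icc le_rfl htT.2)).integrableOn_Icc).mono_set
          Ioc_subset_Icc_self
      have hae : ∀ᵐ s ∂(volume.restrict (Set.Ioc 0 t)), W s ≤ C2 * Φ s := by
        have h1 : ∀ᵐ s ∂(volume.restrict (Set.Ioo 0 t)), W s ≤ C2 * Φ s :=
          ae_restrict_of_ae_restrict_of_subset (Set.Ioo_subset_Ioo le_rfl htT.2) hWΦ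
        rwa [Measure.restrict_congr_set Ioo_ae_eq_Ioc] at h1
      have : Φ t ≤ ∫ s in (0:ℝ)..t, C2 * Φ s := by
        have e1 : Φ t = ∫ s in Set.Ioc (0:ℝ) t, W s :=
          intervalIntegral.integral_of_le ht.1
        have e2 : (∫ s in (0:ℝ)..t, C2 * Φ s) = ∫ s in Set.Ioc (0:ℝ) t, C2 * Φ s :=
          intervalIntegral.integral_of_le ht.1
        rw [e1, e2]
        exact integral_mono_ae hWIoc (hΦIoc.const_mul C2) hae
      calc Φ t ≤ ∫ s in (0:ℝ)..t, C2 * Φ s := this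
        _ = 0 + C2 * ∫ s in (0:ℝ)..t, Φ s := by
            rw [intervalIntegral.integral_const_mul]; ring
    have hg := gron_aux (h := Φ) (A := 0) (C := C2) le_rfl hC2 hτ.1
      (hΦcont.mono (Icc_subset_Icc le_rfl hτ.2))
      (fun t ht => hΦnn t ⟨ht.1, ht.2.trans hτ.2⟩) hineq
    rw [zero_mul] at hg
    exact le_antisymm hg (hΦnn τ hτ)
  -- W vanishes a.e.
  have hW0 : ∀ᵐ s ∂((volume : Measure ℝ).restrict (Set.Ioo 0 T)), W s = 0 := by
    have hΦT : Φ T = 0 := hΦ0 T ⟨hT.le, le_rfl⟩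
    have hint0 : ∫ s, W s ∂((volume : Measure ℝ).restrict (Set.Ioo 0 T)) = 0 := by
      have h1 : ∫ s, W s ∂((volume : Measure ℝ).restrict (Set.Ioo 0 T))
          = ∫ s in Set.Ioc (0:ℝ) T, W s := by
        rw [Measure.restrict_congr_set Ioo_ae_eq_Ioc]
      rw [h1, ← intervalIntegral.integral_of_le hT.le]
      exact hΦT
    exact (integral_eq_zero_iff_of_nonneg hWnn hWint).mp hint0 |>.mono fun s hs => hs
  -- a.e. slicewise equality of representatives
  have haeboth : ∀ᵐ s ∂((volume : Measure ℝ).restrict (Set.Ioo 0 T)),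
      ∀ᵐ y ∂(volume.restrict Ω), ta (s,y) = ta' (s,y) ∧ tb (s,y) = tb' (s,y) := by
    filter_upwards [hW0, hgood] with s hW0s hs
    obtain ⟨h1, h2, h3, h4, h5, h6, h7, h8⟩ := hs
    have hi : Integrable (fun y => ‖ta (s,y) - ta' (s,y)‖ + ‖tb (s,y) - tb' (s,y)‖)
        (volume.restrict Ω) := (h5.sub h7).norm.add (h6.sub h8).norm
    have hz := (integral_eq_zero_iff_of_nonneg
      (fun y => add_nonneg (norm_nonneg _) (norm_nonneg _)) hi).mp (by
        rw [hWdef] at hW0s; exact hW0s)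
    filter_upwards [hz] with y hy
    simp only [Pi.zero_apply] at hy
    have hn1 : ‖ta (s,y) - ta' (s,y)‖ = 0 := by
      have := norm_nonneg (ta (s,y) - ta' (s,y))
      have := norm_nonneg (tb (s,y) - tb' (s,y))
      linarith
    have hn2 : ‖tb (s,y) - tb' (s,y)‖ = 0 := by
      have := norm_nonneg (ta (s,y) - ta' (s,y))
      have := norm_nonneg (tb (s,y) - tb' (s,y))
      linarith
    exact ⟨sub_eq_zero.mp (norm_eq_zero.mp hn1), sub_eq_zero.mp (norm_eq_zero.mp hn2)⟩
  -- lift to the product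
  have hprodset : MeasurableSet {p : ℝ × (Fin N → ℝ) | ta p = ta' p ∧ tb p = tb' p} := by
    exact (measurableSet_eq_fun htasm.measurable hta'sm.measurable).inter
      (measurableSet_eq_fun htbsm.measurable htb'sm.measurable)
  have hprod : ∀ᵐ p ∂(((volume : Measure ℝ).restrict (Set.Ioo 0 T)).prod (volume.restrict Ω)),
      p ∈ {p : ℝ × (Fin N → ℝ) | ta p = ta' p ∧ tb p = tb' p} := by
    rw [Measure.ae_prod_mem_iff_ae_ae_mem hprodset]
    filter_upwards [haeboth] with s hs
    filter_upwards [hs] with y hy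
    exact hy
  constructor
  · filter_upwards [htae, hta'e, hprod] with p e1 e2 e3
    rw [e1, e2]
    exact e3.1
  · filter_upwards [htbe, htb'e, hprod] with p e1 e2 e3
    rw [e1, e2]
    exact e3.2
end
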